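/- arXiv:2311.02507 — 8 statements merged into one kernel-verified Lean document; each statement's English description precedes it below -/
import Mathlib

section
/- Let μ ≥ 1 and d ≥ 1 be integers, α ∈ ℝ\{0}, β ∈ ℂ with Re β > 0, and r, l ∈ ℂ^d. For n ∈ ℕ\{0}, j0 ∈ ℕ and j ∈ ℤ define the d×d matrix S(n,j0,j) := 1_{j ≥ 0} · 1_{(j−j0)/α ∈ [n/2, 2n]} · n^{−1/(2μ)} H_{2μ}(β; (nα + j0 − j)/n^{1/(2μ)}) · r l^T. Then for every pair of exponents 1 ≤ r1 ≤ r2 ≤ ∞ there exists a constant C > 0 such that for all n ∈ ℕ\{0} and all h ∈ ℓ^{r1}(ℤ, ℂ^d), the sequence ( Σ_{j0 ∈ ℕ} S(n,j0,j) h_{j0} )_{j ∈ ℤ} is well defined (for each j only finitely many terms are nonzero), belongs to ℓ^{r2}(ℤ, ℂ^d), and has ℓ^{r2} norm at most C n^{−(1/(2μ))(1/r1 − 1/r2)} ‖h‖_{ℓ^{r1}}. -/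
open MeasureTheory
open scoped ENNReal Classical

/-- The generalized Gaussian `H_{2μ}(β;x) := (1/(2π)) ∫_ℝ e^{ixu} e^{−β u^{2μ}} du`. -/
noncomputable def Hgauss (μ : ℕ) (β : ℂ) (x : ℝ) : ℂ :=
  (1 / (2 * Real.pi)) •
    ∫ u : ℝ, Complex.exp ((x : ℂ) * (u : ℂ) * Complex.I - β * (u : ℂ) ^ (2 * μ))


lemma summable_aux : Summable (fun k : ℕ => ((1:ℝ) + (k:ℝ)^2)⁻¹) := by
  have h0 : Summable (fun n : ℕ => 1 / (n:ℝ) ^ (2:ℕ)) :=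
    (Real.summable_one_div_nat_pow (p := 2)).2 one_lt_two
  have h2 : Summable (fun k : ℕ => 1 / ((k:ℝ)+1) ^ (2:ℕ)) := by
    have := (summable_nat_add_iff (f := fun n : ℕ => 1 / (n:ℝ) ^ (2:ℕ)) 1).2 h0
    convert this using 2 with k
    · rfl
    · norm_num
  have h : Summable (fun k : ℕ => (4:ℝ) * (1 / ((k:ℝ)+1) ^ (2:ℕ))) := h2.mul_left 4
  apply h.of_nonneg_of_le (fun k => by positivity)
  intro k
  rw [inv_eq_one_div, mul_one_div, div_le_div_iff₀ (by positivity) (by positivity)]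
  nlinarith [sq_nonneg ((k:ℝ)-1), sq_nonneg (k:ℝ)]

lemma lattice_sum (lam a : ℝ) (hlam : 1 ≤ lam) (F : Finset ℤ) :
    ∑ m ∈ F, ((1:ℝ) + ((a - (m:ℝ))/lam)^2)⁻¹ ≤
      (4 * ∑' k : ℕ, ((1:ℝ) + (k:ℝ)^2)⁻¹) * lam := by
  have hlam0 : (0:ℝ) < lam := lt_of_lt_of_le one_pos hlam
  set key : ℤ → ℕ := fun m => ⌊|a - (m:ℝ)| / lam⌋₊ with hkey
  have step1 : ∀ m : ℤ, ((1:ℝ) + ((a - (m:ℝ))/lam)^2)⁻¹ ≤ ((1:ℝ) + (key m:ℝ)^2)⁻¹ := by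
    intro m
    apply inv_anti₀ (by positivity)
    have h1 : (key m : ℝ) ≤ |a - (m:ℝ)| / lam := Nat.floor_le (by positivity)
    have h2 : ((a - (m:ℝ))/lam)^2 = (|a - (m:ℝ)| / lam)^2 := by
      rw [div_pow, div_pow, sq_abs]
    nlinarith [abs_nonneg (a - (m:ℝ)), (Nat.cast_nonneg (key m) : (0:ℝ) ≤ (key m : ℝ))]
  have cardbd : ∀ k : ℕ, ((F.filter (fun m => key m = k)).card : ℝ) ≤ 4 * lam := by
    intro k
    have hsub : F.filter (fun m => key m = k) ⊆
        Finset.Icc ⌈a - (k+1)*lam⌉ ⌊a - k*lam⌋ ∪ Finset.Icc ⌈a + k*lam⌉ ⌊a + (k+1)*lam⌋ := by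
      intro m hm
      have hk : key m = k := (Finset.mem_filter.mp hm).2
      have h1 : (k:ℝ) ≤ |a - (m:ℝ)| / lam := by
        rw [← hk]; exact Nat.floor_le (by positivity)
      have h2 : |a - (m:ℝ)| / lam < (k:ℝ) + 1 := by
        rw [← hk]; exact Nat.lt_floor_add_one _
      have h1' : (k:ℝ) * lam ≤ |a - (m:ℝ)| := by
        rw [← le_div_iff₀ hlam0]; exact h1
      have h2' : |a - (m:ℝ)| < ((k:ℝ)+1) * lam := by
        rw [← div_lt_iff₀ hlam0]; exact h2
      rcases abs_cases (a - (m:ℝ)) with ⟨he, _⟩ | ⟨he, _⟩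
      · apply Finset.mem_union_left
        rw [Finset.mem_Icc]
        constructor
        · rw [Int.ceil_le]; push_cast; nlinarith [he ▸ h2']
        · rw [Int.le_floor]; push_cast; nlinarith [he ▸ h1']
      · apply Finset.mem_union_right
        rw [Finset.mem_Icc]
        constructor
        · rw [Int.ceil_le]; push_cast; nlinarith [he ▸ h1']
        · rw [Int.le_floor]; push_cast; nlinarith [he ▸ h2']
    have hIccCard : ∀ p q : ℝ, p ≤ q → ((Finset.Icc ⌈p⌉ ⌊q⌋).card : ℝ) ≤ q - p + 1 := by
      intro p q hpq
      rw [Int.card_Icc]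
      have : ((⌊q⌋ + 1 - ⌈p⌉).toNat : ℤ) = max (⌊q⌋ + 1 - ⌈p⌉) 0 := Int.toNat_eq_max _
      have hcast : ((⌊q⌋ + 1 - ⌈p⌉).toNat : ℝ) = max ((⌊q⌋:ℝ) + 1 - ⌈p⌉) 0 := by
        exact_mod_cast congrArg (Int.cast : ℤ → ℝ) this
      rw [hcast]
      apply max_le _ (by linarith)
      have := Int.floor_le q
      have := Int.le_ceil p
      linarith
    calc ((F.filter (fun m => key m = k)).card : ℝ)
        ≤ ((Finset.Icc ⌈a - (k+1)*lam⌉ ⌊a - k*lam⌋).card : ℝ)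
          + ((Finset.Icc ⌈a + k*lam⌉ ⌊a + (k+1)*lam⌋).card : ℝ) := by
          exact_mod_cast Nat.cast_le.mpr ((Finset.card_le_card hsub).trans (Finset.card_union_le _ _))
      _ ≤ (lam + 1) + (lam + 1) := by
          have hk0 : (0:ℝ) ≤ (k:ℝ) := Nat.cast_nonneg k
          have b1 := hIccCard (a - ((k:ℝ)+1)*lam) (a - (k:ℝ)*lam) (by nlinarith)
          have b2 := hIccCard (a + (k:ℝ)*lam) (a + ((k:ℝ)+1)*lam) (by nlinarith)
          push_cast at b1 b2 ⊢
          nlinarith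
      _ ≤ 4 * lam := by linarith
  calc ∑ m ∈ F, ((1:ℝ) + ((a - (m:ℝ))/lam)^2)⁻¹
      ≤ ∑ m ∈ F, ((1:ℝ) + (key m:ℝ)^2)⁻¹ := Finset.sum_le_sum (fun m _ => step1 m)
    _ = ∑ k ∈ F.image key, (F.filter (fun m => key m = k)).card • ((1:ℝ) + (k:ℝ)^2)⁻¹ :=
        Finset.sum_comp (fun k : ℕ => ((1:ℝ) + (k:ℝ)^2)⁻¹) key
    _ ≤ ∑ k ∈ F.image key, (4 * lam) * ((1:ℝ) + (k:ℝ)^2)⁻¹ := by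
        apply Finset.sum_le_sum
        intro k _
        rw [nsmul_eq_mul]
        exact mul_le_mul_of_nonneg_right (cardbd k) (by positivity)
    _ = (4 * lam) * ∑ k ∈ F.image key, ((1:ℝ) + (k:ℝ)^2)⁻¹ := by rw [Finset.mul_sum]
    _ ≤ (4 * lam) * ∑' k : ℕ, ((1:ℝ) + (k:ℝ)^2)⁻¹ := by
        apply mul_le_mul_of_nonneg_left _ (by positivity)
        exact Summable.sum_le_tsum _ (fun k _ => by positivity) summable_aux
    _ = (4 * ∑' k : ℕ, ((1:ℝ) + (k:ℝ)^2)⁻¹) * lam := by ring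

lemma jensen_aux {ι : Type*} (s : Finset ι) (w u : ι → ℝ) (hw : ∀ i ∈ s, 0 ≤ w i)
    (hu : ∀ i ∈ s, 0 ≤ u i) {p : ℝ} (hp : 1 ≤ p) {A : ℝ} (hA : 0 ≤ A)
    (hsum : ∑ i ∈ s, w i ≤ A) :
    (∑ i ∈ s, w i * u i) ^ p ≤ A ^ (p - 1) * ∑ i ∈ s, w i * (u i) ^ p := by
  have hp0 : (0:ℝ) < p := lt_of_lt_of_le one_pos hp
  set sw := ∑ i ∈ s, w i with hsw
  have hsw0 : 0 ≤ sw := Finset.sum_nonneg hw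
  have hRHS0 : 0 ≤ ∑ i ∈ s, w i * (u i) ^ p :=
    Finset.sum_nonneg (fun i hi => mul_nonneg (hw i hi) (Real.rpow_nonneg (hu i hi) p))
  rcases eq_or_lt_of_le hsw0 with hz | hpos
  · have hwz : ∀ i ∈ s, w i = 0 := by
      intro i hi
      exact (Finset.sum_eq_zero_iff_of_nonneg hw).mp hz.symm i hi
    have : ∑ i ∈ s, w i * u i = 0 := Finset.sum_eq_zero (fun i hi => by rw [hwz i hi, zero_mul])
    rw [this, Real.zero_rpow (ne_of_gt hp0)]
    positivity
  · have key := Real.rpow_arith_mean_le_arith_mean_rpow s (fun i => w i / sw) u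
      (fun i hi => div_nonneg (hw i hi) hsw0)
      (by rw [← Finset.sum_div, div_self (ne_of_gt hpos)]) hu hp
    have e1 : ∑ i ∈ s, (w i / sw) * u i = (∑ i ∈ s, w i * u i) / sw := by
      rw [Finset.sum_div]; apply Finset.sum_congr rfl; intro i _; ring
    have e2 : ∑ i ∈ s, (w i / sw) * (u i) ^ p = (∑ i ∈ s, w i * (u i) ^ p) / sw := by
      rw [Finset.sum_div]; apply Finset.sum_congr rfl; intro i _; ring
    rw [e1, e2] at key
    have hL0 : 0 ≤ ∑ i ∈ s, w i * u i :=
      Finset.sum_nonneg (fun i hi => mul_nonneg (hw i hi) (hu i hi))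
    have expand : ((∑ i ∈ s, w i * u i) / sw) ^ p = (∑ i ∈ s, w i * u i) ^ p / sw ^ p := by
      rw [div_eq_mul_inv, Real.mul_rpow hL0 (inv_nonneg.mpr hsw0),
        Real.inv_rpow hsw0, div_eq_mul_inv]
    rw [expand, div_le_div_iff₀ (Real.rpow_pos_of_pos hpos p) hpos] at key
    calc (∑ i ∈ s, w i * u i) ^ p ≤ (∑ i ∈ s, w i * (u i) ^ p) / sw * sw ^ p := by
          rw [div_mul_eq_mul_div, le_div_iff₀ hpos]; linarith [key]
      _ = sw ^ (p - 1) * ∑ i ∈ s, w i * (u i) ^ p := by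
          rw [Real.rpow_sub hpos, Real.rpow_one]; field_simp
      _ ≤ A ^ (p - 1) * ∑ i ∈ s, w i * (u i) ^ p := by
          apply mul_le_mul_of_nonneg_right _ hRHS0
          exact Real.rpow_le_rpow hsw0 hsum (by linarith)

lemma integrable_poly_gauss (μ : ℕ) (hμ : 1 ≤ μ) {c : ℝ} (hc : 0 < c) (k : ℕ) :
    Integrable fun u : ℝ => |u| ^ k * Real.exp (-(c * u ^ (2 * μ))) := by
  have hbase : Integrable fun u : ℝ => u ^ (2 * k) * Real.exp (-c * u ^ 2) := by
    have h := integrable_rpow_mul_exp_neg_mul_sq hc (s := ((2 * k : ℕ) : ℝ))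
      (lt_of_lt_of_le neg_one_lt_zero (by positivity))
    convert h using 2 with u
    rw [Real.rpow_natCast]
  have hdom : Integrable fun u : ℝ =>
      Real.exp c * (Real.exp (-c * u ^ 2) + u ^ (2 * k) * Real.exp (-c * u ^ 2)) :=
    ((integrable_exp_neg_mul_sq hc).add hbase).const_mul _
  apply hdom.mono'
  · apply Continuous.aestronglyMeasurable
    exact (_root_.continuous_abs.pow k).mul ((continuous_const.mul (continuous_pow (2*μ))).neg.rexp)
  · filter_upwards with u
    have h2μ : (0:ℝ) ≤ u ^ (2*μ) := by rw [mul_comm, pow_mul]; positivity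
    have h2k : (0:ℝ) ≤ u ^ (2*k) := by rw [mul_comm, pow_mul]; positivity
    have h1 : u ^ 2 - 1 ≤ u ^ (2 * μ) := by
      rcases le_or_gt (u ^ 2) 1 with h | h
      · nlinarith
      · have : u ^ 2 ≤ (u ^ 2) ^ μ := le_self_pow₀ h.le (by omega)
        calc u^2 - 1 ≤ u^2 := by linarith
          _ ≤ (u^2)^μ := this
          _ = u^(2*μ) := by rw [← pow_mul]
    have h2 : |u| ^ k ≤ 1 + u ^ (2 * k) := by
      rcases le_or_gt (|u|) 1 with h | h
      · have := pow_le_one₀ (abs_nonneg u) h (n := k)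
        linarith
      · have h1k : 1 ≤ |u| ^ k := one_le_pow₀ h.le
        have hle : |u| ^ k ≤ (|u| ^ k) ^ 2 := le_self_pow₀ h1k (by norm_num)
        have he : (|u| ^ k) ^ 2 = u ^ (2 * k) := by
          rw [← pow_mul, mul_comm k 2, pow_mul, sq_abs, ← pow_mul]
        nlinarith
    have h3 : Real.exp (-(c * u ^ (2*μ))) ≤ Real.exp c * Real.exp (-c * u^2) := by
      rw [← Real.exp_add]
      apply Real.exp_le_exp.mpr
      nlinarith
    have hrhs : ‖|u| ^ k * Real.exp (-(c * u ^ (2 * μ)))‖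
        = |u| ^ k * Real.exp (-(c * u ^ (2 * μ))) := by
      rw [Real.norm_eq_abs, abs_of_nonneg (by positivity)]
    rw [hrhs, mul_add]
    calc |u| ^ k * Real.exp (-(c * u ^ (2 * μ)))
        ≤ (1 + u ^ (2*k)) * (Real.exp c * Real.exp (-c * u^2)) := by
          apply mul_le_mul h2 h3 (Real.exp_pos _).le (by nlinarith)
      _ = Real.exp c * Real.exp (-c * u ^ 2) + Real.exp c * (u ^ (2*k) * Real.exp (-c * u^2)) := by
          ring

noncomputable def fG (μ : ℕ) (β : ℂ) : ℝ → ℂ := fun u => Complex.exp (-(β * (u:ℂ) ^ (2*μ)))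
noncomputable def gG (μ : ℕ) (β : ℂ) : ℝ → ℂ := fun u => -(β * (2*μ:ℕ)) * (u:ℂ) ^ (2*μ - 1)
noncomputable def f1G (μ : ℕ) (β : ℂ) : ℝ → ℂ := fun u => gG μ β u * fG μ β u
noncomputable def f2G (μ : ℕ) (β : ℂ) : ℝ → ℂ := fun u =>
  -(β * (2*μ:ℕ)) * (((2*μ-1:ℕ):ℂ) * (u:ℂ) ^ (2*μ - 2)) * fG μ β u + gG μ β u * f1G μ β u

lemma hasDerivAt_fG (μ : ℕ) (β : ℂ) (u : ℝ) : HasDerivAt (fG μ β) (f1G μ β u) u := by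
  have h1 : HasDerivAt (fun z : ℂ => -(β * z^(2*μ))) (-(β * ((2*μ:ℕ) * (u:ℂ)^(2*μ-1)))) (u:ℂ) :=
    ((hasDerivAt_pow (2*μ) (u:ℂ)).const_mul β).neg
  have h2 := h1.cexp.comp_ofReal
  convert h2 using 1
  · rfl
  simp only [f1G, gG, fG]
  ring

lemma hasDerivAt_f1G (μ : ℕ) (hμ : 1 ≤ μ) (β : ℂ) (u : ℝ) :
    HasDerivAt (f1G μ β) (f2G μ β u) u := by
  have hg : HasDerivAt (gG μ β) (-(β * (2*μ:ℕ)) * (((2*μ-1:ℕ):ℂ) * (u:ℂ)^(2*μ-2))) u := by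
    have h1 : HasDerivAt (fun z : ℂ => -(β * (2*μ:ℕ)) * z^(2*μ-1))
        (-(β * (2*μ:ℕ)) * (((2*μ-1:ℕ):ℂ) * (u:ℂ)^(2*μ-1-1))) (u:ℂ) :=
      (hasDerivAt_pow (2*μ-1) (u:ℂ)).const_mul _
    have h2 := h1.comp_ofReal
    convert h2 using 3
    · rfl
    · rw [Nat.sub_sub]
  exact hg.mul (hasDerivAt_fG μ β u)

lemma norm_fG (μ : ℕ) (β : ℂ) (u : ℝ) : ‖fG μ β u‖ = Real.exp (-(β.re * u^(2*μ))) := by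
  have h : ((u:ℂ))^(2*μ) = ((u^(2*μ) : ℝ) : ℂ) := by push_cast; ring
  simp only [fG]
  rw [h, Complex.norm_exp]
  simp [← Complex.ofReal_pow]

lemma contDom (μ : ℕ) (hμ : 1 ≤ μ) {β : ℂ} (hβ : 0 < β.re) {φ : ℝ → ℂ} (hcont : Continuous φ)
    (k : ℕ) (B : ℝ) (hB : ∀ u, ‖φ u‖ ≤ B * (|u|^k * Real.exp (-(β.re * u^(2*μ))))) :
    Integrable φ :=
  ((integrable_poly_gauss μ hμ hβ k).const_mul B).mono' hcont.aestronglyMeasurable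
    (by filter_upwards with u; exact hB u)

lemma cont_fG (μ : ℕ) (β : ℂ) : Continuous (fG μ β) := by
  have hdiff : Differentiable ℝ (fG μ β) := fun u => (hasDerivAt_fG μ β u).differentiableAt
  exact hdiff.continuous

lemma cont_gG (μ : ℕ) (β : ℂ) : Continuous (gG μ β) := by
  unfold gG; fun_prop

lemma cont_f1G (μ : ℕ) (β : ℂ) : Continuous (f1G μ β) :=
  (cont_gG μ β).mul (cont_fG μ β)

lemma cont_f2G (μ : ℕ) (β : ℂ) : Continuous (f2G μ β) := by
  unfold f2G
  exact (((continuous_const.mul ((continuous_const.mul ((Complex.continuous_ofReal).pow _)))).mul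
    (cont_fG μ β))).add ((cont_gG μ β).mul (cont_f1G μ β))

lemma norm_gG (μ : ℕ) (β : ℂ) (u : ℝ) : ‖gG μ β u‖ = (‖β‖ * (2*μ)) * |u|^(2*μ-1) := by
  rw [gG]
  rw [norm_mul, norm_neg, norm_mul, norm_pow, Complex.norm_real, Real.norm_eq_abs]
  norm_num

lemma int_fG (μ : ℕ) (hμ : 1 ≤ μ) {β : ℂ} (hβ : 0 < β.re) : Integrable (fG μ β) := by
  apply contDom μ hμ hβ (cont_fG μ β) 0 1
  intro u
  rw [norm_fG]
  simp

lemma int_f1G (μ : ℕ) (hμ : 1 ≤ μ) {β : ℂ} (hβ : 0 < β.re) : Integrable (f1G μ β) := by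
  apply contDom μ hμ hβ (cont_f1G μ β) (2*μ-1) (‖β‖ * (2*μ))
  intro u
  rw [f1G, norm_mul, norm_gG, norm_fG]
  ring_nf
  exact le_refl _

lemma int_f2G (μ : ℕ) (hμ : 1 ≤ μ) {β : ℂ} (hβ : 0 < β.re) : Integrable (f2G μ β) := by
  have hA : Integrable (fun u : ℝ =>
      -(β * (2*μ:ℕ)) * (((2*μ-1:ℕ):ℂ) * (u:ℂ) ^ (2*μ - 2)) * fG μ β u) := by
    apply contDom μ hμ hβ _ (2*μ-2) (‖β‖ * (2*μ) * (2*μ-1:ℕ))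
    · intro u
      rw [norm_mul, norm_mul, norm_neg, norm_mul, norm_mul, norm_pow, Complex.norm_real,
        Real.norm_eq_abs, norm_fG]
      simp only [Complex.norm_natCast]
      push_cast
      ring_nf
      exact le_refl _
    · exact ((continuous_const.mul ((continuous_const.mul
        ((Complex.continuous_ofReal).pow _)))).mul (cont_fG μ β))
  have hB : Integrable (fun u : ℝ => gG μ β u * f1G μ β u) := by
    apply contDom μ hμ hβ ((cont_gG μ β).mul (cont_f1G μ β)) (2*μ-1+(2*μ-1))
      ((‖β‖ * (2*μ)) * (‖β‖ * (2*μ)))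
    intro u
    rw [Pi.mul_apply, norm_mul, f1G, norm_mul, norm_gG, norm_fG, pow_add]
    ring_nf
    exact le_refl _
  exact hA.add hB

lemma norm_fourier_le (φ : ℝ → ℂ) (w : ℝ) :
    ‖FourierTransform.fourier φ w‖ ≤ ∫ u : ℝ, ‖φ u‖ := by
  rw [Real.fourier_real_eq_integral_exp_smul]
  refine (norm_integral_le_integral_norm _).trans_eq ?_
  congr 1
  funext u
  rw [norm_smul, Complex.norm_exp_ofReal_mul_I, one_mul]

lemma hgauss_decay (μ : ℕ) (hμ : 1 ≤ μ) (β : ℂ) (hβ : 0 < β.re) :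
    ∃ C : ℝ, 1 ≤ C ∧ ∀ x : ℝ, ‖Hgauss μ β x‖ ≤ C / (1 + x ^ 2) := by
  have hπ : (0:ℝ) < Real.pi := Real.pi_pos
  set Mf0 := ∫ u : ℝ, ‖fG μ β u‖ with hMf0
  set Mf2 := ∫ u : ℝ, ‖f2G μ β u‖ with hMf2
  have hMf0nn : 0 ≤ Mf0 := integral_nonneg (fun u => norm_nonneg _)
  have hMf2nn : 0 ≤ Mf2 := integral_nonneg (fun u => norm_nonneg _)
  have hd1 : deriv (fG μ β) = f1G μ β := funext fun u => (hasDerivAt_fG μ β u).deriv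
  have hd2 : deriv (f1G μ β) = f2G μ β := funext fun u => (hasDerivAt_f1G μ hμ β u).deriv
  have hstep1 : FourierTransform.fourier (f1G μ β) =
      fun x : ℝ => (2 * Real.pi * Complex.I * x) • FourierTransform.fourier (fG μ β) x := by
    have := Real.fourier_deriv (int_fG μ hμ hβ)
      (fun u => (hasDerivAt_fG μ β u).differentiableAt) (hd1 ▸ int_f1G μ hμ hβ)
    rwa [hd1] at this
  have hstep2 : FourierTransform.fourier (f2G μ β) =
      fun x : ℝ => (2 * Real.pi * Complex.I * x) • FourierTransform.fourier (f1G μ β) x := by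
    have := Real.fourier_deriv (int_f1G μ hμ hβ)
      (fun u => (hasDerivAt_f1G μ hμ β u).differentiableAt) (hd2 ▸ int_f2G μ hμ hβ)
    rwa [hd2] at this
  have hnorm2pi : ∀ w : ℝ, ‖(2 * Real.pi * Complex.I * (w:ℂ))‖ = 2 * Real.pi * |w| := by
    intro w
    simp [abs_of_pos hπ]
  have hkey : ∀ w : ℝ, (2 * Real.pi * |w|)^2 * ‖FourierTransform.fourier (fG μ β) w‖ ≤ Mf2 := by
    intro w
    have e1 : FourierTransform.fourier (f1G μ β) w
        = (2 * Real.pi * Complex.I * w) • FourierTransform.fourier (fG μ β) w := congrFun hstep1 w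
    have e2 : FourierTransform.fourier (f2G μ β) w
        = (2 * Real.pi * Complex.I * w) • FourierTransform.fourier (f1G μ β) w := congrFun hstep2 w
    have : ‖FourierTransform.fourier (f2G μ β) w‖
        = (2 * Real.pi * |w|)^2 * ‖FourierTransform.fourier (fG μ β) w‖ := by
      rw [e2, norm_smul, e1, norm_smul, hnorm2pi]
      ring
    rw [← this]
    exact norm_fourier_le _ _
  have hb0 : ∀ w : ℝ, ‖FourierTransform.fourier (fG μ β) w‖ ≤ Mf0 := fun w => norm_fourier_le _ _
  have hrel : ∀ x : ℝ, Hgauss μ β x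
      = (1/(2*Real.pi)) • FourierTransform.fourier (fG μ β) (-(x/(2*Real.pi))) := by
    intro x
    have hptwise : ∀ u : ℝ, Complex.exp ((x:ℂ)*(u:ℂ)*Complex.I - β*(u:ℂ)^(2*μ))
        = Complex.exp (↑(-2*Real.pi*u*(-(x/(2*Real.pi)))) * Complex.I) • fG μ β u := by
      intro u
      simp only [fG, smul_eq_mul, ← Complex.exp_add]
      congr 1
      have harg : (-2*Real.pi*u*(-(x/(2*Real.pi))) : ℝ) = u * x := by
        field_simp
      rw [harg]
      push_cast
      ring
    rw [Hgauss, Real.fourier_real_eq_integral_exp_smul]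
    simp_rw [hptwise]
  refine ⟨max 1 ((Mf0 + Mf2)/(2*Real.pi)), le_max_left _ _, ?_⟩
  intro x
  have h1x : (0:ℝ) < 1 + x^2 := by positivity
  set w := -(x/(2*Real.pi)) with hw
  have hwabs : (2 * Real.pi * |w|)^2 = x^2 := by
    rw [hw, abs_neg, abs_div, abs_of_pos (by linarith : (0:ℝ) < 2*Real.pi)]
    rw [mul_div_cancel₀ _ (by linarith : (2*Real.pi) ≠ 0)]
    exact sq_abs x
  have hHnorm : ‖Hgauss μ β x‖ = (1/(2*Real.pi)) * ‖FourierTransform.fourier (fG μ β) w‖ := by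
    rw [hrel x, norm_smul, Real.norm_eq_abs, abs_of_pos (by positivity)]
  have hmain : ‖Hgauss μ β x‖ * (1 + x^2) ≤ (Mf0 + Mf2)/(2*Real.pi) := by
    rw [hHnorm]
    have hk := hkey w
    rw [hwabs] at hk
    have hb := hb0 w
    have hnn : 0 ≤ ‖FourierTransform.fourier (fG μ β) w‖ := norm_nonneg _
    rw [div_eq_mul_inv, div_eq_mul_inv]
    calc 1 * (2*Real.pi)⁻¹ * ‖FourierTransform.fourier (fG μ β) w‖ * (1 + x^2)
        = (‖FourierTransform.fourier (fG μ β) w‖ + x^2 * ‖FourierTransform.fourier (fG μ β) w‖)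
          * (2*Real.pi)⁻¹ := by ring
      _ ≤ (Mf0 + Mf2) * (2*Real.pi)⁻¹ := by
          apply mul_le_mul_of_nonneg_right _ (by positivity)
          have : x^2 * ‖FourierTransform.fourier (fG μ β) w‖ ≤ Mf2 := by linarith [hk]
          linarith
  rw [le_div_iff₀ h1x]
  calc ‖Hgauss μ β x‖ * (1 + x^2) ≤ (Mf0 + Mf2)/(2*Real.pi) := hmain
    _ ≤ max 1 ((Mf0 + Mf2)/(2*Real.pi)) := le_max_right _ _
noncomputable def Ktail : ℝ := 4 * ∑' k : ℕ, ((1:ℝ) + (k:ℝ)^2)⁻¹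

lemma Ktail_ge_one : 1 ≤ Ktail := by
  have h1 : (1:ℝ) ≤ ∑' k : ℕ, ((1:ℝ) + (k:ℝ)^2)⁻¹ := by
    have := Summable.le_tsum summable_aux 0 (fun k _ => by positivity)
    simpa using this
  unfold Ktail
  linarith

noncomputable def Wk (μ : ℕ) (α CB : ℝ) (n j0 : ℕ) (j : ℤ) : ℝ :=
  if 0 ≤ j ∧ ((j : ℝ) - (j0 : ℝ)) / α ∈ Set.Icc ((n : ℝ) / 2) (2 * (n : ℝ)) then
    CB * ((((n:ℝ) ^ (1/(2*(μ:ℝ)))))⁻¹ *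
      (1 + (((n : ℝ) * α + (j0 : ℝ) - (j : ℝ)) / (n : ℝ) ^ (1/(2*(μ:ℝ))))^2)⁻¹)
  else 0

lemma Wk_nonneg {μ : ℕ} {α CB : ℝ} (hCB : 0 ≤ CB) (n j0 : ℕ) (j : ℤ) :
    0 ≤ Wk μ α CB n j0 j := by
  unfold Wk
  split
  · have h1 : (0:ℝ) ≤ (((n:ℝ) ^ (1/(2*(μ:ℝ)))))⁻¹ :=
      inv_nonneg.mpr (Real.rpow_nonneg (Nat.cast_nonneg n) _)
    have h2 : (0:ℝ) ≤ (1 + (((n : ℝ) * α + (j0 : ℝ) - (j : ℝ)) / (n : ℝ) ^ (1/(2*(μ:ℝ))))^2)⁻¹ := by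
      positivity
    positivity
  · exact le_refl 0

lemma lam_ge_one {μ : ℕ} {n : ℕ} (hn : 1 ≤ n) : 1 ≤ (n:ℝ) ^ (1/(2*(μ:ℝ))) :=
  Real.one_le_rpow (by exact_mod_cast hn) (by positivity)

lemma Wk_le_sup {μ : ℕ} {α CB : ℝ} (hCB : 0 ≤ CB) (n j0 : ℕ) (j : ℤ) :
    Wk μ α CB n j0 j ≤ CB * (((n:ℝ) ^ (1/(2*(μ:ℝ)))))⁻¹ := by
  unfold Wk
  have h1 : (0:ℝ) ≤ (((n:ℝ) ^ (1/(2*(μ:ℝ)))))⁻¹ :=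
    inv_nonneg.mpr (Real.rpow_nonneg (Nat.cast_nonneg n) _)
  split
  · rw [← mul_assoc]
    apply mul_le_of_le_one_right (by positivity)
    have hx : (0:ℝ) < 1 + (((n : ℝ) * α + (j0 : ℝ) - (j : ℝ)) / (n : ℝ) ^ (1/(2*(μ:ℝ))))^2 := by
      positivity
    rw [inv_le_one_iff₀]
    right
    nlinarith
  · positivity

lemma Wk_row_sum {μ : ℕ} {α CB : ℝ} (hCB : 0 ≤ CB) {n : ℕ} (hn : 1 ≤ n) (j : ℤ)
    (F : Finset ℕ) : ∑ j0 ∈ F, Wk μ α CB n j0 j ≤ CB * Ktail := by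
  set lam := (n:ℝ) ^ (1/(2*(μ:ℝ))) with hlamdef
  have hlam : 1 ≤ lam := lam_ge_one hn
  have hlam0 : (0:ℝ) < lam := by linarith
  have hterm : ∀ j0 : ℕ, Wk μ α CB n j0 j
      ≤ CB * lam⁻¹ * (1 + (((j:ℝ) - (n:ℝ)*α - (j0:ℝ))/lam)^2)⁻¹ := by
    intro j0
    have he : (((j:ℝ) - (n:ℝ)*α - (j0:ℝ))/lam)^2
        = (((n : ℝ) * α + (j0 : ℝ) - (j : ℝ)) / lam)^2 := by
      rw [div_pow, div_pow]
      congr 1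
      ring
    unfold Wk
    split
    · rw [he, mul_assoc]
    · positivity
  calc ∑ j0 ∈ F, Wk μ α CB n j0 j
      ≤ ∑ j0 ∈ F, CB * lam⁻¹ * (1 + (((j:ℝ) - (n:ℝ)*α - (j0:ℝ))/lam)^2)⁻¹ :=
        Finset.sum_le_sum (fun j0 _ => hterm j0)
    _ = CB * lam⁻¹ * ∑ j0 ∈ F, (1 + (((j:ℝ) - (n:ℝ)*α - (j0:ℝ))/lam)^2)⁻¹ := by
        rw [Finset.mul_sum]
    _ ≤ CB * lam⁻¹ * ((4 * ∑' k : ℕ, ((1:ℝ) + (k:ℝ)^2)⁻¹) * lam) := by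
        apply mul_le_mul_of_nonneg_left _ (by positivity)
        have himg : ∑ j0 ∈ F, (1 + (((j:ℝ) - (n:ℝ)*α - (j0:ℝ))/lam)^2)⁻¹
            = ∑ m ∈ F.image (fun a : ℕ => (a:ℤ)), (1 + ((((j:ℝ) - (n:ℝ)*α) - (m:ℝ))/lam)^2)⁻¹ := by
          rw [Finset.sum_image (fun a _ b _ hab => by exact_mod_cast hab)]
          apply Finset.sum_congr rfl
          intro a _
          norm_num
        rw [himg]
        exact lattice_sum lam ((j:ℝ) - (n:ℝ)*α) hlam _
    _ = CB * Ktail * (lam⁻¹ * lam) := by unfold Ktail; ring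
    _ = CB * Ktail := by rw [inv_mul_cancel₀ (ne_of_gt hlam0), mul_one]

lemma Wk_col_sum {μ : ℕ} {α CB : ℝ} (hCB : 0 ≤ CB) {n : ℕ} (hn : 1 ≤ n) (j0 : ℕ)
    (F : Finset ℤ) : ∑ j ∈ F, Wk μ α CB n j0 j ≤ CB * Ktail := by
  set lam := (n:ℝ) ^ (1/(2*(μ:ℝ))) with hlamdef
  have hlam : 1 ≤ lam := lam_ge_one hn
  have hlam0 : (0:ℝ) < lam := by linarith
  have hterm : ∀ j : ℤ, Wk μ α CB n j0 j
      ≤ CB * lam⁻¹ * (1 + ((((n:ℝ)*α + (j0:ℝ)) - (j:ℝ))/lam)^2)⁻¹ := by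
    intro j
    have he : ((((n:ℝ)*α + (j0:ℝ)) - (j:ℝ))/lam)^2
        = (((n : ℝ) * α + (j0 : ℝ) - (j : ℝ)) / lam)^2 := by norm_num
    unfold Wk
    split
    · rw [he, mul_assoc]
    · positivity
  calc ∑ j ∈ F, Wk μ α CB n j0 j
      ≤ ∑ j ∈ F, CB * lam⁻¹ * (1 + ((((n:ℝ)*α + (j0:ℝ)) - (j:ℝ))/lam)^2)⁻¹ :=
        Finset.sum_le_sum (fun j _ => hterm j)
    _ = CB * lam⁻¹ * ∑ j ∈ F, (1 + ((((n:ℝ)*α + (j0:ℝ)) - (j:ℝ))/lam)^2)⁻¹ := by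
        rw [Finset.mul_sum]
    _ ≤ CB * lam⁻¹ * ((4 * ∑' k : ℕ, ((1:ℝ) + (k:ℝ)^2)⁻¹) * lam) := by
        apply mul_le_mul_of_nonneg_left _ (by positivity)
        exact lattice_sum lam ((n:ℝ)*α + (j0:ℝ)) hlam F
    _ = CB * Ktail * (lam⁻¹ * lam) := by unfold Ktail; ring
    _ = CB * Ktail := by rw [inv_mul_cancel₀ (ne_of_gt hlam0), mul_one]

set_option maxHeartbeats 2000000 in
theorem stmt2 (μ d : ℕ) (hμ : 1 ≤ μ) (hd : 1 ≤ d) (α : ℝ) (hα : α ≠ 0)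
    (β : ℂ) (hβ : 0 < β.re) (rv lv : Fin d → ℂ)
    (S : ℕ → ℕ → ℤ → Matrix (Fin d) (Fin d) ℂ)
    (hS : ∀ (n j0 : ℕ) (j : ℤ), S n j0 j =
      if 0 ≤ j ∧ ((j : ℝ) - (j0 : ℝ)) / α ∈ Set.Icc ((n : ℝ) / 2) (2 * (n : ℝ)) then
        ((n : ℝ) ^ (-(1 / (2 * (μ : ℝ))))) •
          (Hgauss μ β (((n : ℝ) * α + (j0 : ℝ) - (j : ℝ)) / (n : ℝ) ^ (1 / (2 * (μ : ℝ)))) •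
            Matrix.vecMulVec rv lv)
      else 0)
    (p1 p2 : ℝ≥0∞) (hp1 : 1 ≤ p1) (hp12 : p1 ≤ p2) :
    ∃ C : ℝ, 0 < C ∧ ∀ n : ℕ, 1 ≤ n → ∀ h : lp (fun _ : ℤ => (Fin d → ℂ)) p1,
      (∀ j : ℤ, {j0 : ℕ | (S n j0 j).mulVec (h (j0 : ℤ)) ≠ 0}.Finite) ∧
      ∃ g : lp (fun _ : ℤ => (Fin d → ℂ)) p2,
        (∀ j : ℤ, g j = ∑ᶠ j0 : ℕ, (S n j0 j).mulVec (h (j0 : ℤ))) ∧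
        ‖g‖ ≤ C * (n : ℝ) ^ (-(1 / (2 * (μ : ℝ))) * ((1 / p1).toReal - (1 / p2).toReal)) * ‖h‖ := by
  classical
  haveI : Fact (1 ≤ p1) := ⟨hp1⟩
  haveI : Fact (1 ≤ p2) := ⟨le_trans hp1 hp12⟩
  obtain ⟨Cφ, hCφ1, hCφ⟩ := hgauss_decay μ hμ β hβ
  have hμR : (1:ℝ) ≤ (μ:ℝ) := by exact_mod_cast hμ
  set CM : ℝ := ‖rv‖ * ∑ k : Fin d, ‖lv k‖ with hCMdef
  have hCMnn : 0 ≤ CM := by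
    apply mul_nonneg (norm_nonneg _)
    exact Finset.sum_nonneg (fun k _ => norm_nonneg _)
  set CB : ℝ := CM * Cφ with hCBdef
  have hCBnn : 0 ≤ CB := mul_nonneg hCMnn (by linarith)
  set D : ℝ := max 1 (CB * Ktail) with hDdef
  have hD1 : (1:ℝ) ≤ D := le_max_left _ _
  have hD0 : (0:ℝ) < D := by linarith
  have hCBD : CB ≤ D := by
    calc CB = CB * 1 := by ring
      _ ≤ CB * Ktail := by nlinarith [Ktail_ge_one]
      _ ≤ D := le_max_right _ _
  have hrow : ∀ {n : ℕ}, 1 ≤ n → ∀ (j : ℤ) (F : Finset ℕ),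
      ∑ j0 ∈ F, Wk μ α CB n j0 j ≤ D :=
    fun hn j F => (Wk_row_sum hCBnn hn j F).trans (le_max_right _ _)
  have hcol : ∀ {n : ℕ}, 1 ≤ n → ∀ (j0 : ℕ) (F : Finset ℤ),
      ∑ j ∈ F, Wk μ α CB n j0 j ≤ D :=
    fun hn j0 F => (Wk_col_sum hCBnn hn j0 F).trans (le_max_right _ _)
  have hsup : ∀ (n j0 : ℕ) (j : ℤ),
      Wk μ α CB n j0 j ≤ D * (((n:ℝ) ^ (1/(2*(μ:ℝ)))))⁻¹ := by
    intro n j0 j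
    refine (Wk_le_sup hCBnn n j0 j).trans ?_
    apply mul_le_mul_of_nonneg_right hCBD
    exact inv_nonneg.mpr (Real.rpow_nonneg (Nat.cast_nonneg n) _)
  -- matrix estimate
  have hmat : ∀ (n j0 : ℕ) (j : ℤ) (v : Fin d → ℂ),
      ‖(S n j0 j).mulVec v‖ ≤ Wk μ α CB n j0 j * ‖v‖ := by
    intro n j0 j v
    rw [hS]
    unfold Wk
    by_cases hc : 0 ≤ j ∧ ((j : ℝ) - (j0 : ℝ)) / α ∈ Set.Icc ((n : ℝ) / 2) (2 * (n : ℝ))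
    · rw [if_pos hc, if_pos hc]
      set x : ℝ := ((n : ℝ) * α + (j0 : ℝ) - (j : ℝ)) / (n : ℝ) ^ (1/(2*(μ:ℝ))) with hx
      have hvm : ‖(Matrix.vecMulVec rv lv).mulVec v‖ ≤ CM * ‖v‖ := by
        have hfe : (Matrix.vecMulVec rv lv).mulVec v = fun i => rv i * ∑ k, lv k * v k := by
          funext i
          simp only [Matrix.mulVec, Matrix.vecMulVec_apply, dotProduct, Finset.mul_sum]
          exact Finset.sum_congr rfl (fun k _ => by ring)
        rw [hfe]
        rw [pi_norm_le_iff_of_nonneg (mul_nonneg hCMnn (norm_nonneg _))]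
        intro i
        calc ‖rv i * ∑ k, lv k * v k‖ = ‖rv i‖ * ‖∑ k, lv k * v k‖ := norm_mul _ _
          _ ≤ ‖rv‖ * (∑ k, ‖lv k‖ * ‖v‖) := by
              apply mul_le_mul (norm_le_pi_norm rv i) _ (norm_nonneg _) (norm_nonneg _)
              refine (norm_sum_le _ _).trans ?_
              apply Finset.sum_le_sum
              intro k _
              rw [norm_mul]
              exact mul_le_mul_of_nonneg_left (norm_le_pi_norm v k) (norm_nonneg _)
          _ = CM * ‖v‖ := by rw [hCMdef, ← Finset.sum_mul, mul_assoc]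
      have hsm : (((n : ℝ) ^ (-(1 / (2 * (μ : ℝ))))) •
            (Hgauss μ β x • Matrix.vecMulVec rv lv)).mulVec v
          = ((n : ℝ) ^ (-(1 / (2 * (μ : ℝ))))) •
            (Hgauss μ β x • ((Matrix.vecMulVec rv lv).mulVec v)) := by
        rw [Matrix.smul_mulVec, Matrix.smul_mulVec]
      rw [hsm]
      rw [norm_smul, norm_smul]
      have hrp : ‖((n : ℝ) ^ (-(1 / (2 * (μ : ℝ)))) : ℝ)‖ = (((n:ℝ) ^ (1/(2*(μ:ℝ)))))⁻¹ := by
        rw [Real.norm_eq_abs, abs_of_nonneg (Real.rpow_nonneg (Nat.cast_nonneg n) _),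
          Real.rpow_neg (Nat.cast_nonneg n)]
      rw [hrp]
      have hHx : ‖Hgauss μ β x‖ ≤ Cφ * (1 + x^2)⁻¹ := by
        rw [← div_eq_mul_inv]
        exact hCφ x
      calc (((n:ℝ) ^ (1/(2*(μ:ℝ)))))⁻¹ * (‖Hgauss μ β x‖ * ‖(Matrix.vecMulVec rv lv).mulVec v‖)
          ≤ (((n:ℝ) ^ (1/(2*(μ:ℝ)))))⁻¹ * ((Cφ * (1 + x^2)⁻¹) * (CM * ‖v‖)) := by
            apply mul_le_mul_of_nonneg_left _
              (inv_nonneg.mpr (Real.rpow_nonneg (Nat.cast_nonneg n) _))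
            apply mul_le_mul hHx hvm (norm_nonneg _)
            positivity
        _ = CB * ((((n:ℝ) ^ (1/(2*(μ:ℝ)))))⁻¹ * (1 + x^2)⁻¹) * ‖v‖ := by
            rw [hCBdef]; ring
    · rw [if_neg hc, if_neg hc, Matrix.zero_mulVec, norm_zero, zero_mul]
  set Nb : ℕ → ℤ → ℕ := fun n j => j.toNat + 2*n*(⌈|α|⌉₊ + 1) + 1 with hNbdef
  have hsupp : ∀ (n : ℕ) (j : ℤ) (j0 : ℕ), 1 ≤ n →
      (0 ≤ j ∧ ((j:ℝ) - (j0:ℝ))/α ∈ Set.Icc ((n:ℝ)/2) (2*(n:ℝ))) → j0 < Nb n j := by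
    rintro n j j0 hn ⟨hj0, hlo, hhi⟩
    have hn1 : (1:ℝ) ≤ (n:ℝ) := by exact_mod_cast hn
    have hq0 : 0 ≤ ((j:ℝ) - (j0:ℝ))/α := le_trans (by positivity) hlo
    have habs : |(j:ℝ) - (j0:ℝ)| ≤ 2*(n:ℝ)*|α| := by
      rw [show (j:ℝ) - (j0:ℝ) = (((j:ℝ) - (j0:ℝ))/α) * α by field_simp]
      rw [abs_mul, abs_of_nonneg hq0]
      nlinarith [abs_nonneg α]
    have h1 : (j0:ℝ) ≤ (j:ℝ) + 2*(n:ℝ)*|α| := by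
      have := neg_abs_le ((j:ℝ) - (j0:ℝ))
      linarith
    have h2 : (j:ℝ) = (j.toNat : ℝ) := by
      rw [← Int.toNat_of_nonneg hj0]
      push_cast
      rw [Int.toNat_of_nonneg hj0]
    have h3 : |α| ≤ (⌈|α|⌉₊:ℝ) := Nat.le_ceil _
    have hlt : (j0:ℝ) < (Nb n j : ℝ) := by
      rw [hNbdef]
      push_cast
      nlinarith [abs_nonneg α]
    exact_mod_cast hlt
  -- the common construction
  have hconstr : ∀ (n : ℕ), 1 ≤ n → ∀ h : lp (fun _ : ℤ => (Fin d → ℂ)) p1,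
      (∀ j : ℤ, {j0 : ℕ | (S n j0 j).mulVec (h (j0 : ℤ)) ≠ 0}.Finite) ∧
      (∀ j : ℤ, (∑ᶠ j0 : ℕ, (S n j0 j).mulVec (h (j0:ℤ)))
        = ∑ j0 ∈ Finset.range (Nb n j), (S n j0 j).mulVec (h (j0:ℤ))) ∧
      (∀ j : ℤ, ‖∑ j0 ∈ Finset.range (Nb n j), (S n j0 j).mulVec (h (j0:ℤ))‖
        ≤ ∑ j0 ∈ Finset.range (Nb n j), Wk μ α CB n j0 j * ‖h (j0:ℤ)‖) := by
    intro n hn h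
    have hzero : ∀ (j : ℤ) (j0 : ℕ), j0 ∉ Finset.range (Nb n j) →
        (S n j0 j).mulVec (h (j0:ℤ)) = 0 := by
      intro j j0 hj0
      rw [hS, if_neg, Matrix.zero_mulVec]
      intro hc
      exact hj0 (Finset.mem_range.mpr (hsupp n j j0 hn hc))
    refine ⟨?_, ?_, ?_⟩
    · intro j
      apply Set.Finite.subset (Finset.range (Nb n j)).finite_toSet
      intro j0 hj0
      simp only [Set.mem_setOf_eq] at hj0
      by_contra hmem
      exact hj0 (hzero j j0 (by simpa using hmem))
    · intro j
      apply finsum_eq_finset_sum_of_support_subset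
      intro j0 hj0
      simp only [Function.mem_support] at hj0
      by_contra hmem
      exact hj0 (hzero j j0 (by simpa using hmem))
    · intro j
      refine (norm_sum_le _ _).trans ?_
      exact Finset.sum_le_sum (fun j0 _ => hmat n j0 j _)
  refine ⟨D, hD0, ?_⟩
  intro n hn h
  obtain ⟨hfin, hfs, hpt⟩ := hconstr n hn h
  refine ⟨hfin, ?_⟩
  set G : ℤ → (Fin d → ℂ) :=
    fun j => ∑ j0 ∈ Finset.range (Nb n j), (S n j0 j).mulVec (h (j0:ℤ)) with hGdef
  set lam : ℝ := (n:ℝ) ^ (1/(2*(μ:ℝ))) with hlamdef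
  have hlam1 : 1 ≤ lam := lam_ge_one hn
  have hlam0 : (0:ℝ) < lam := by linarith
  have hp1ne0 : p1 ≠ 0 := (lt_of_lt_of_le zero_lt_one hp1).ne'
  rcases eq_or_ne p1 ⊤ with hp1t | hp1t
  · -- Case A : p1 = p2 = ∞
    have hp2t : p2 = ⊤ := top_le_iff.mp (hp1t ▸ hp12)
    subst hp2t
    subst hp1t
    have hptA : ∀ j, ‖G j‖ ≤ D * ‖h‖ := by
      intro j
      refine (hpt j).trans ?_
      calc ∑ j0 ∈ Finset.range (Nb n j), Wk μ α CB n j0 j * ‖h (j0:ℤ)‖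
          ≤ ∑ j0 ∈ Finset.range (Nb n j), Wk μ α CB n j0 j * ‖h‖ := by
            apply Finset.sum_le_sum
            intro j0 _
            exact mul_le_mul_of_nonneg_left (lp.norm_apply_le_norm (by simp) h _)
              (Wk_nonneg hCBnn n j0 j)
        _ = (∑ j0 ∈ Finset.range (Nb n j), Wk μ α CB n j0 j) * ‖h‖ := by
            rw [Finset.sum_mul]
        _ ≤ D * ‖h‖ := mul_le_mul_of_nonneg_right (hrow hn j _) (norm_nonneg _)
    have hmem : Memℓp G ⊤ := memℓp_infty ⟨D * ‖h‖, by rintro x ⟨j, rfl⟩; exact hptA j⟩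
    refine ⟨⟨G, hmem⟩, fun j => (hfs j).symm, ?_⟩
    have hexp : (-(1 / (2 * (μ:ℝ)))) * ((1/(⊤:ℝ≥0∞)).toReal - (1/(⊤:ℝ≥0∞)).toReal) = 0 := by
      simp
    rw [hexp, Real.rpow_zero, mul_one]
    exact lp.norm_le_of_forall_le (mul_nonneg hD0.le (norm_nonneg _)) hptA
  · -- p1 finite
    set r1 : ℝ := p1.toReal with hr1def
    have hr1 : 1 ≤ r1 := by
      rw [hr1def, ← ENNReal.toReal_one]
      exact ENNReal.toReal_mono hp1t hp1
    have hr1pos : 0 < r1 := by linarith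
    have hr1ne : r1 ≠ 0 := hr1pos.ne'
    have h1p1 : (1/p1).toReal = r1⁻¹ := by
      rw [one_div, ENNReal.toReal_inv]
    have hlaminv : (0:ℝ) ≤ lam⁻¹ := inv_nonneg.mpr hlam0.le
    -- pointwise bound
    have hptB : ∀ j, ‖G j‖ ≤ D * (lam⁻¹) ^ (1/r1) * ‖h‖ := by
      intro j
      set F := Finset.range (Nb n j) with hFdef
      have hsum_h : ∑ j0 ∈ F, Wk μ α CB n j0 j * ‖h (j0:ℤ)‖ ^ r1
          ≤ (D * lam⁻¹) * ‖h‖ ^ r1 := by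
        calc ∑ j0 ∈ F, Wk μ α CB n j0 j * ‖h (j0:ℤ)‖ ^ r1
            ≤ ∑ j0 ∈ F, (D * lam⁻¹) * ‖h (j0:ℤ)‖ ^ r1 := by
              apply Finset.sum_le_sum
              intro j0 _
              exact mul_le_mul_of_nonneg_right (hsup n j0 j)
                (Real.rpow_nonneg (norm_nonneg _) _)
          _ = (D * lam⁻¹) * ∑ j0 ∈ F, ‖h (j0:ℤ)‖ ^ r1 := by rw [Finset.mul_sum]
          _ ≤ (D * lam⁻¹) * ‖h‖ ^ r1 := by
              apply mul_le_mul_of_nonneg_left _ (mul_nonneg hD0.le hlaminv)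
              have himg : ∑ j0 ∈ F, ‖h (j0:ℤ)‖ ^ r1
                  = ∑ m ∈ F.image (fun a : ℕ => (a:ℤ)), ‖h m‖ ^ r1 := by
                rw [Finset.sum_image (fun a _ b _ hab => by exact_mod_cast hab)]
              rw [himg]
              exact lp.sum_rpow_le_norm_rpow (by rwa [← hr1def]) h _
      have hJ := jensen_aux F (fun j0 => Wk μ α CB n j0 j) (fun j0 => ‖h (j0:ℤ)‖)
        (fun j0 _ => Wk_nonneg hCBnn n j0 j) (fun j0 _ => norm_nonneg _) hr1 hD0.le
        (hrow hn j F)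
      have h1 : ‖G j‖ ^ r1 ≤ D ^ r1 * lam⁻¹ * ‖h‖ ^ r1 := by
        calc ‖G j‖ ^ r1 ≤ (∑ j0 ∈ F, Wk μ α CB n j0 j * ‖h (j0:ℤ)‖) ^ r1 :=
              Real.rpow_le_rpow (norm_nonneg _) (hpt j) hr1pos.le
          _ ≤ D ^ (r1-1) * ∑ j0 ∈ F, Wk μ α CB n j0 j * ‖h (j0:ℤ)‖ ^ r1 := hJ
          _ ≤ D ^ (r1-1) * ((D * lam⁻¹) * ‖h‖ ^ r1) :=
              mul_le_mul_of_nonneg_left hsum_h (Real.rpow_nonneg hD0.le _)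
          _ = D ^ (r1-1) * D ^ (1:ℝ) * lam⁻¹ * ‖h‖ ^ r1 := by
              rw [Real.rpow_one]; ring
          _ = D ^ r1 * lam⁻¹ * ‖h‖ ^ r1 := by
              rw [← Real.rpow_add hD0]; norm_num
      have h2 := Real.rpow_le_rpow (Real.rpow_nonneg (norm_nonneg _) _) h1
        (le_of_lt (one_div_pos.mpr hr1pos))
      have e2 : (‖G j‖ ^ r1) ^ (1/r1) = ‖G j‖ := by
        rw [← Real.rpow_mul (norm_nonneg _), mul_one_div, div_self hr1ne, Real.rpow_one]
      have e1 : ((D:ℝ) ^ r1 * lam⁻¹ * ‖h‖ ^ r1) ^ (1/r1)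
          = D ^ (r1 * (1/r1)) * (lam⁻¹) ^ (1/r1) * ‖h‖ ^ (r1 * (1/r1)) := by
        rw [Real.mul_rpow (mul_nonneg (Real.rpow_nonneg hD0.le r1) hlaminv)
              (Real.rpow_nonneg (norm_nonneg h) r1),
            Real.mul_rpow (Real.rpow_nonneg hD0.le r1) hlaminv,
            ← Real.rpow_mul hD0.le r1 (1/r1), ← Real.rpow_mul (norm_nonneg h) r1 (1/r1)]
      rw [e2, e1, mul_one_div, div_self hr1ne, Real.rpow_one, Real.rpow_one] at h2
      exact h2
    rcases eq_or_ne p2 ⊤ with hp2t | hp2t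
    · -- Case B : p1 finite, p2 = ∞
      subst hp2t
      have hmem : Memℓp G ⊤ :=
        memℓp_infty ⟨D * (lam⁻¹) ^ (1/r1) * ‖h‖, by rintro x ⟨j, rfl⟩; exact hptB j⟩
      refine ⟨⟨G, hmem⟩, fun j => (hfs j).symm, ?_⟩
      have h1p2 : (1/(⊤:ℝ≥0∞)).toReal = 0 := by
        rw [one_div, ENNReal.inv_top, ENNReal.toReal_zero]
      rw [h1p2, h1p1]
      have hpw : (lam⁻¹) ^ (1/r1) = (n:ℝ) ^ (-(1 / (2 * (μ:ℝ))) * (r1⁻¹ - 0)) := by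
        rw [hlamdef, ← Real.rpow_neg (Nat.cast_nonneg n), ← Real.rpow_mul (Nat.cast_nonneg n)]
        congr 1
        ring
      refine lp.norm_le_of_forall_le ?_ ?_
      · rw [← hpw]
        exact mul_nonneg (mul_nonneg hD0.le (Real.rpow_nonneg hlaminv _)) (norm_nonneg _)
      · intro j
        have := hptB j
        rwa [hpw] at this
    · -- Case C : p1, p2 finite
      set r2 : ℝ := p2.toReal with hr2def
      have hr12 : r1 ≤ r2 := ENNReal.toReal_mono hp2t hp12
      have hr2 : 1 ≤ r2 := le_trans hr1 hr12
      have hr2pos : 0 < r2 := by linarith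
      have hr2ne : r2 ≠ 0 := hr2pos.ne'
      have h1p2 : (1/p2).toReal = r2⁻¹ := by
        rw [one_div, ENNReal.toReal_inv]
      set E : ℝ := -(1 / (2 * (μ:ℝ))) * (r1⁻¹ - r2⁻¹) with hEdef
      have hpw : (lam⁻¹) ^ ((r2 - r1)/r1) = ((n:ℝ) ^ E) ^ r2 := by
        rw [hlamdef, ← Real.rpow_neg (Nat.cast_nonneg n), ← Real.rpow_mul (Nat.cast_nonneg n),
          ← Real.rpow_mul (Nat.cast_nonneg n)]
        congr 1
        rw [hEdef]
        field_simp
      have hbound : ∀ Gf : Finset ℤ, ∑ j ∈ Gf, ‖G j‖ ^ r2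
          ≤ (D * (n:ℝ) ^ E * ‖h‖) ^ r2 := by
        intro Gf
        set U := Gf.biUnion (fun j => Finset.range (Nb n j)) with hU
        have hstep2 : ∑ j ∈ Gf, ‖G j‖ ^ r1 ≤ D ^ r1 * ‖h‖ ^ r1 := by
          have hper : ∀ j ∈ Gf, ‖G j‖ ^ r1
              ≤ D^(r1-1) * ∑ j0 ∈ U, Wk μ α CB n j0 j * ‖h (j0:ℤ)‖ ^ r1 := by
            intro j hj
            have hJ := jensen_aux (Finset.range (Nb n j)) (fun j0 => Wk μ α CB n j0 j)
              (fun j0 => ‖h (j0:ℤ)‖) (fun j0 _ => Wk_nonneg hCBnn n j0 j)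
              (fun j0 _ => norm_nonneg _) hr1 hD0.le (hrow hn j _)
            have hmono : ∑ j0 ∈ Finset.range (Nb n j), Wk μ α CB n j0 j * ‖h (j0:ℤ)‖ ^ r1
                ≤ ∑ j0 ∈ U, Wk μ α CB n j0 j * ‖h (j0:ℤ)‖ ^ r1 := by
              apply Finset.sum_le_sum_of_subset_of_nonneg (Finset.subset_biUnion_of_mem _ hj)
              intro j0 _ _
              exact mul_nonneg (Wk_nonneg hCBnn n j0 j) (Real.rpow_nonneg (norm_nonneg _) _)
            calc ‖G j‖ ^ r1
                ≤ (∑ j0 ∈ Finset.range (Nb n j), Wk μ α CB n j0 j * ‖h (j0:ℤ)‖) ^ r1 :=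
                  Real.rpow_le_rpow (norm_nonneg _) (hpt j) hr1pos.le
              _ ≤ D^(r1-1) * ∑ j0 ∈ Finset.range (Nb n j), Wk μ α CB n j0 j * ‖h (j0:ℤ)‖ ^ r1 :=
                  hJ
              _ ≤ D^(r1-1) * ∑ j0 ∈ U, Wk μ α CB n j0 j * ‖h (j0:ℤ)‖ ^ r1 :=
                  mul_le_mul_of_nonneg_left hmono (Real.rpow_nonneg hD0.le _)
          calc ∑ j ∈ Gf, ‖G j‖ ^ r1
              ≤ ∑ j ∈ Gf, D^(r1-1) * ∑ j0 ∈ U, Wk μ α CB n j0 j * ‖h (j0:ℤ)‖ ^ r1 :=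
                Finset.sum_le_sum hper
            _ = D^(r1-1) * ∑ j0 ∈ U, (∑ j ∈ Gf, Wk μ α CB n j0 j) * ‖h (j0:ℤ)‖ ^ r1 := by
                rw [← Finset.mul_sum]
                congr 1
                rw [Finset.sum_comm]
                exact Finset.sum_congr rfl (fun j0 _ => by rw [Finset.sum_mul])
            _ ≤ D^(r1-1) * ∑ j0 ∈ U, D * ‖h (j0:ℤ)‖ ^ r1 := by
                apply mul_le_mul_of_nonneg_left _ (Real.rpow_nonneg hD0.le _)
                apply Finset.sum_le_sum
                intro j0 _
                exact mul_le_mul_of_nonneg_right (hcol hn j0 Gf)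
                  (Real.rpow_nonneg (norm_nonneg _) _)
            _ = D^(r1-1) * (D * ∑ j0 ∈ U, ‖h (j0:ℤ)‖ ^ r1) := by rw [← Finset.mul_sum]
            _ ≤ D^(r1-1) * (D * ‖h‖ ^ r1) := by
                apply mul_le_mul_of_nonneg_left _ (Real.rpow_nonneg hD0.le _)
                apply mul_le_mul_of_nonneg_left _ hD0.le
                have himg : ∑ j0 ∈ U, ‖h (j0:ℤ)‖ ^ r1
                    = ∑ m ∈ U.image (fun a : ℕ => (a:ℤ)), ‖h m‖ ^ r1 := by
                  rw [Finset.sum_image (fun a _ b _ hab => by exact_mod_cast hab)]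
                rw [himg]
                exact lp.sum_rpow_le_norm_rpow (by rwa [← hr1def]) h _
            _ = D ^ r1 * ‖h‖ ^ r1 := by
                rw [show D^(r1-1) * (D * ‖h‖^r1) = D^(r1-1) * D^(1:ℝ) * ‖h‖^r1 by
                  rw [Real.rpow_one]; ring, ← Real.rpow_add hD0]
                norm_num
        have hsplit : ∀ j ∈ Gf, ‖G j‖ ^ r2
            ≤ (D * (lam⁻¹)^(1/r1) * ‖h‖) ^ (r2 - r1) * ‖G j‖ ^ r1 := by
          intro j _
          have hadd := Real.rpow_add' (norm_nonneg (G j)) (y := r2 - r1) (z := r1)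
            (by rw [sub_add_cancel]; exact hr2ne)
          rw [sub_add_cancel] at hadd
          rw [hadd]
          exact mul_le_mul_of_nonneg_right
            (Real.rpow_le_rpow (norm_nonneg _) (hptB j) (by linarith))
            (Real.rpow_nonneg (norm_nonneg _) _)
        have hD2 : D ^ (r2-r1) * D ^ r1 = D ^ r2 := by
          rw [← Real.rpow_add hD0, sub_add_cancel]
        have hh2 : ‖h‖ ^ (r2-r1) * ‖h‖ ^ r1 = ‖h‖ ^ r2 := by
          have := Real.rpow_add' (norm_nonneg h) (y := r2 - r1) (z := r1)
            (by rw [sub_add_cancel]; exact hr2ne)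
          rw [sub_add_cancel] at this
          exact this.symm
        have halg : (D * (lam⁻¹)^(1/r1) * ‖h‖) ^ (r2 - r1) * (D ^ r1 * ‖h‖ ^ r1)
            = D ^ r2 * (lam⁻¹)^((r2-r1)/r1) * ‖h‖ ^ r2 := by
          rw [Real.mul_rpow (mul_nonneg hD0.le (Real.rpow_nonneg hlaminv _)) (norm_nonneg _),
              Real.mul_rpow hD0.le (Real.rpow_nonneg hlaminv _),
              ← Real.rpow_mul hlaminv]
          calc D ^ (r2-r1) * (lam⁻¹)^((1/r1)*(r2-r1)) * ‖h‖^(r2-r1) * (D ^ r1 * ‖h‖ ^ r1)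
              = (D^(r2-r1) * D^r1) * (lam⁻¹)^((1/r1)*(r2-r1)) * (‖h‖^(r2-r1) * ‖h‖^r1) := by
                ring
            _ = D ^ r2 * (lam⁻¹)^((r2-r1)/r1) * ‖h‖ ^ r2 := by
                rw [hD2, hh2, show (1/r1)*(r2-r1) = (r2-r1)/r1 by ring]
        have hRHSexp : (D * (n:ℝ)^E * ‖h‖)^r2
            = D ^ r2 * (lam⁻¹)^((r2-r1)/r1) * ‖h‖ ^ r2 := by
          rw [Real.mul_rpow (mul_nonneg hD0.le (Real.rpow_nonneg (Nat.cast_nonneg n) _))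
                (norm_nonneg _),
              Real.mul_rpow hD0.le (Real.rpow_nonneg (Nat.cast_nonneg n) _), hpw]
        calc ∑ j ∈ Gf, ‖G j‖ ^ r2
            ≤ ∑ j ∈ Gf, (D * (lam⁻¹)^(1/r1) * ‖h‖) ^ (r2 - r1) * ‖G j‖ ^ r1 :=
              Finset.sum_le_sum hsplit
          _ = (D * (lam⁻¹)^(1/r1) * ‖h‖) ^ (r2 - r1) * ∑ j ∈ Gf, ‖G j‖ ^ r1 := by
              rw [← Finset.mul_sum]
          _ ≤ (D * (lam⁻¹)^(1/r1) * ‖h‖) ^ (r2 - r1) * (D ^ r1 * ‖h‖ ^ r1) :=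
              mul_le_mul_of_nonneg_left hstep2 (Real.rpow_nonneg
                (mul_nonneg (mul_nonneg hD0.le (Real.rpow_nonneg hlaminv _)) (norm_nonneg _)) _)
          _ = D ^ r2 * (lam⁻¹)^((r2-r1)/r1) * ‖h‖ ^ r2 := halg
          _ = (D * (n:ℝ) ^ E * ‖h‖) ^ r2 := hRHSexp.symm
      have hmem : Memℓp G p2 := by
        apply memℓp_gen' (C := (D * (n:ℝ) ^ E * ‖h‖) ^ r2)
        intro s
        rw [← hr2def]
        exact hbound s
      refine ⟨⟨G, hmem⟩, fun j => (hfs j).symm, ?_⟩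
      rw [h1p1, h1p2]
      apply lp.norm_le_of_forall_sum_le (by rw [← hr2def]; exact hr2pos)
        (mul_nonneg (mul_nonneg hD0.le (Real.rpow_nonneg (Nat.cast_nonneg n) _)) (norm_nonneg _))
      intro s
      rw [← hr2def]
      exact hbound s
end

section
/- Let c_H > 0, C_H > 0 and θ ∈ (0,1). Set Θ := θ (1 − e^{−c_H})/(1 + e^{−c_H}), r := cosh(c_H) − 2 sinh(c_H/2) √(cosh²(c_H/2) − θ) and ρ := (C_H/Θ)(r − e^{−c_H}). Then r ∈ (e^{−c_H}, 1) and ρ > 0, and every bounded sequence (y_j)_{j∈ℕ} of nonnegative real numbers satisfying y_j ≤ C_H e^{−c_H j} + Θ Σ_{k=0}^{∞} e^{−c_H |j−1−k|} y_k for all j ∈ ℕ satisfies y_j ≤ ρ r^j for all j ∈ ℕ. -/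
open Real Finset

lemma exp_neg_nat' (cH : ℝ) (n : ℕ) : Real.exp (-cH * n) = Real.exp (-cH) ^ n := by
  rw [show -cH * (n:ℝ) = (n:ℝ) * -cH by ring, Real.exp_nat_mul]

lemma ker_le' (cH : ℝ) (hcH : 0 ≤ cH) (j k : ℕ) :
    Real.exp (-cH * |(j : ℝ) - 1 - (k : ℝ)|) ≤ Real.exp cH ^ j * Real.exp (-cH) ^ k := by
  have h1 : -cH * |(j : ℝ) - 1 - (k : ℝ)| ≤ cH * j + (-cH) * k := by
    have h2 : -((j : ℝ) - 1 - (k : ℝ)) ≤ |(j : ℝ) - 1 - (k : ℝ)| := neg_le_abs _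
    nlinarith [mul_le_mul_of_nonneg_left h2 hcH]
  calc Real.exp (-cH * |(j : ℝ) - 1 - (k : ℝ)|) ≤ Real.exp (cH * j + (-cH) * k) :=
        Real.exp_le_exp.mpr h1
    _ = Real.exp cH ^ j * Real.exp (-cH) ^ k := by
        rw [Real.exp_add, show cH * (j:ℝ) = (j:ℝ) * cH by ring,
          show -cH * (k:ℝ) = (k:ℝ) * -cH by ring, Real.exp_nat_mul, Real.exp_nat_mul]

lemma ker_summable' (cH : ℝ) (hcH : 0 < cH) (j : ℕ) (g : ℕ → ℝ) (M : ℝ)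
    (hg0 : ∀ k, 0 ≤ g k) (hgM : ∀ k, g k ≤ M) :
    Summable (fun k : ℕ => Real.exp (-cH * |(j : ℝ) - 1 - (k : ℝ)|) * g k) := by
  have hM0 : 0 ≤ M := le_trans (hg0 0) (hgM 0)
  have hgeo : Summable (fun k : ℕ => (Real.exp cH ^ j * M) * Real.exp (-cH) ^ k) :=
    (summable_geometric_of_lt_one (Real.exp_nonneg _)
      (Real.exp_lt_one_iff.mpr (by linarith))).mul_left _
  refine Summable.of_nonneg_of_le (fun k => mul_nonneg (Real.exp_nonneg _) (hg0 k))
    (fun k => ?_) hgeo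
  calc Real.exp (-cH * |(j : ℝ) - 1 - (k : ℝ)|) * g k
      ≤ (Real.exp cH ^ j * Real.exp (-cH) ^ k) * M := by
        apply mul_le_mul (ker_le' cH hcH.le j k) (hgM k) (hg0 k)
        positivity
    _ = (Real.exp cH ^ j * M) * Real.exp (-cH) ^ k := by ring

lemma ker_lt' (cH : ℝ) (j k : ℕ) (h : k < j) :
    Real.exp (-cH * |(j : ℝ) - 1 - (k : ℝ)|) = Real.exp (-cH) ^ (j - 1 - k) := by
  have h1 : (j : ℝ) - 1 - (k : ℝ) = ((j - 1 - k : ℕ) : ℝ) := by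
    have hk : k ≤ j - 1 := Nat.le_sub_one_of_lt h
    push_cast [Nat.cast_sub hk, Nat.cast_sub (Nat.one_le_of_lt h)]
    ring
  have h2 : (0:ℝ) ≤ (j : ℝ) - 1 - (k : ℝ) := by rw [h1]; positivity
  rw [abs_of_nonneg h2, h1, show -cH * ((j-1-k : ℕ):ℝ) = ((j-1-k:ℕ):ℝ) * -cH by ring,
    Real.exp_nat_mul]

lemma ker_ge' (cH : ℝ) (j i : ℕ) :
    Real.exp (-cH * |(j : ℝ) - 1 - ((i + j : ℕ) : ℝ)|) = Real.exp (-cH) ^ (i + 1) := by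
  have h1 : |(j : ℝ) - 1 - ((i + j : ℕ) : ℝ)| = ((i + 1 : ℕ) : ℝ) := by
    push_cast
    rw [abs_of_nonpos (by linarith)]
    ring
  rw [h1, show -cH * ((i+1 : ℕ):ℝ) = ((i+1:ℕ):ℝ) * -cH by ring, Real.exp_nat_mul]

lemma ker_tsum' (cH r : ℝ) (hcH : 0 < cH) (hqr : Real.exp (-cH) < r) (hr1 : r < 1) (j : ℕ) :
    ∑' k : ℕ, Real.exp (-cH * |(j : ℝ) - 1 - (k : ℝ)|) * r ^ k
      = (r ^ j - Real.exp (-cH) ^ j) / (r - Real.exp (-cH))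
        + Real.exp (-cH) * r ^ j / (1 - Real.exp (-cH) * r) := by
  set q := Real.exp (-cH) with hq
  have hq0 : 0 < q := Real.exp_pos _
  have hr0 : 0 < r := lt_trans hq0 hqr
  have hqr1 : q * r < 1 := by nlinarith
  have hsum : Summable (fun k : ℕ => Real.exp (-cH * |(j : ℝ) - 1 - (k : ℝ)|) * r ^ k) :=
    ker_summable' cH hcH j _ 1 (fun k => by positivity)
      (fun k => pow_le_one₀ hr0.le hr1.le)
  rw [← hsum.sum_add_tsum_nat_add j]
  have hfin : ∑ k ∈ range j, Real.exp (-cH * |(j : ℝ) - 1 - (k : ℝ)|) * r ^ k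
      = (r ^ j - q ^ j) / (r - q) := by
    have h1 : ∀ k ∈ range j, Real.exp (-cH * |(j : ℝ) - 1 - (k : ℝ)|) * r ^ k
        = r ^ k * q ^ (j - 1 - k) := by
      intro k hk
      rw [ker_lt' cH j k (mem_range.mp hk)]; ring
    rw [Finset.sum_congr rfl h1]
    rw [eq_div_iff (by nlinarith)]
    exact geom_sum₂_mul r q j
  have htail : ∑' i : ℕ, Real.exp (-cH * |(j : ℝ) - 1 - ((i + j : ℕ) : ℝ)|) * r ^ (i + j)
      = q * r ^ j / (1 - q * r) := by
    have h1 : ∀ i : ℕ, Real.exp (-cH * |(j : ℝ) - 1 - ((i + j : ℕ) : ℝ)|) * r ^ (i + j)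
        = (q * r ^ j) * (q * r) ^ i := by
      intro i
      rw [ker_ge' cH j i, pow_succ, pow_add, mul_pow]; ring
    rw [tsum_congr h1, tsum_mul_left, tsum_geometric_of_lt_one (by positivity) hqr1]
    rw [div_eq_mul_inv]
  rw [hfin, htail]

lemma ker_tsum_one' (cH : ℝ) (hcH : 0 < cH) (j : ℕ) :
    ∑' k : ℕ, Real.exp (-cH * |(j : ℝ) - 1 - (k : ℝ)|)
      ≤ (1 + Real.exp (-cH)) / (1 - Real.exp (-cH)) := by
  set q := Real.exp (-cH) with hq
  have hq0 : 0 < q := Real.exp_pos _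
  have hq1 : q < 1 := Real.exp_lt_one_iff.mpr (by linarith)
  have hsum : Summable (fun k : ℕ => Real.exp (-cH * |(j : ℝ) - 1 - (k : ℝ)|)) := by
    have := ker_summable' cH hcH j (fun _ => 1) 1 (fun _ => zero_le_one) (fun _ => le_rfl)
    simpa using this
  rw [← hsum.sum_add_tsum_nat_add j]
  have hfin : ∑ k ∈ range j, Real.exp (-cH * |(j : ℝ) - 1 - (k : ℝ)|) ≤ 1 / (1 - q) := by
    have h1 : ∀ k ∈ range j, Real.exp (-cH * |(j : ℝ) - 1 - (k : ℝ)|) = q ^ (j - 1 - k) := by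
      intro k hk; exact ker_lt' cH j k (mem_range.mp hk)
    rw [Finset.sum_congr rfl h1, Finset.sum_range_reflect (fun i => q ^ i) j]
    calc ∑ i ∈ range j, q ^ i = (1 - q ^ j) / (1 - q) := by
          rw [geom_sum_eq (by linarith)]
          rw [div_eq_div_iff (by linarith) (by linarith)]; ring
      _ ≤ 1 / (1 - q) := by
          have h2 : (0:ℝ) ≤ q ^ j := by positivity
          apply div_le_div_of_nonneg_right (a := 1 - q ^ j) (b := (1:ℝ)) (c := 1 - q)
            (by linarith) (by linarith)
  have htail : ∑' i : ℕ, Real.exp (-cH * |(j : ℝ) - 1 - ((i + j : ℕ) : ℝ)|)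
      = q / (1 - q) := by
    have h1 : ∀ i : ℕ, Real.exp (-cH * |(j : ℝ) - 1 - ((i + j : ℕ) : ℝ)|)
        = q * q ^ i := by
      intro i; rw [ker_ge' cH j i, pow_succ]; ring
    rw [tsum_congr h1, tsum_mul_left, tsum_geometric_of_lt_one hq0.le hq1, div_eq_mul_inv]
  rw [htail]
  have : (1 + q) / (1 - q) = 1 / (1 - q) + q / (1 - q) := by ring
  rw [this]
  linarith

set_option maxHeartbeats 1000000 in
theorem stmt3 (cH CH θ : ℝ) (hcH : 0 < cH) (hCH : 0 < CH) (hθ0 : 0 < θ) (hθ1 : θ < 1) :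
    let Θ : ℝ := θ * (1 - Real.exp (-cH)) / (1 + Real.exp (-cH))
    let r : ℝ := Real.cosh cH - 2 * Real.sinh (cH / 2) * Real.sqrt (Real.cosh (cH / 2) ^ 2 - θ)
    let ρ : ℝ := CH / Θ * (r - Real.exp (-cH))
    (Real.exp (-cH) < r ∧ r < 1) ∧ 0 < ρ ∧
      ∀ y : ℕ → ℝ, (∃ M : ℝ, ∀ j, y j ≤ M) → (∀ j, 0 ≤ y j) →
        (∀ j : ℕ, y j ≤ CH * Real.exp (-cH * j) +
          Θ * ∑' k : ℕ, Real.exp (-cH * |(j : ℝ) - 1 - (k : ℝ)|) * y k) →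
        ∀ j : ℕ, y j ≤ ρ * r ^ j := by
  intro Θ r ρ
  have hΘdef : Θ = θ * (1 - Real.exp (-cH)) / (1 + Real.exp (-cH)) := rfl
  have hrdef : r = Real.cosh cH - 2 * Real.sinh (cH / 2) *
      Real.sqrt (Real.cosh (cH / 2) ^ 2 - θ) := rfl
  have hρdef : ρ = CH / Θ * (r - Real.exp (-cH)) := rfl
  clear_value Θ r ρ
  have hq0 : 0 < Real.exp (-cH) := Real.exp_pos _
  have hq1 : Real.exp (-cH) < 1 := Real.exp_lt_one_iff.mpr (by linarith)
  set q := Real.exp (-cH) with hq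
  -- p, D, w
  set p := Real.exp (-(cH/2)) with hpdef
  have hp0 : 0 < p := Real.exp_pos _
  have hp2 : p ^ 2 = q := by
    rw [hpdef, hq, ← Real.exp_nat_mul]; congr 1; push_cast; ring
  have hD0 : 0 < (1+q)^2 - 4*q*θ := by nlinarith
  set w : ℝ := Real.sqrt ((1+q)^2 - 4*q*θ) with hw
  have hw2 : w ^ 2 = (1+q)^2 - 4*q*θ := Real.sq_sqrt hD0.le
  have hw0 : 0 < w := Real.sqrt_pos.mpr hD0
  have hwlt : w < 1 + q := by nlinarith
  have hwgt : 1 - q < w := by nlinarith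
  have hpinv : Real.exp (cH/2) = p⁻¹ := by rw [hpdef, ← Real.exp_neg, neg_neg]
  have hqinv : Real.exp cH = q⁻¹ := by rw [hq, ← Real.exp_neg, neg_neg]
  have hcosh : Real.cosh cH = (1/q + q)/2 := by
    rw [Real.cosh_eq, hqinv, ← hq, inv_eq_one_div]
  have hsinh : Real.sinh (cH/2) = (1-q)/(2*p) := by
    rw [Real.sinh_eq, hpinv, ← hpdef, ← hp2]
    field_simp
  have hcosh2 : Real.cosh (cH/2) = (1+q)/(2*p) := by
    rw [Real.cosh_eq, hpinv, ← hpdef, ← hp2]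
    field_simp
  have hsq : Real.cosh (cH/2)^2 - θ = ((1+q)^2 - 4*q*θ)/(4*q) := by
    rw [hcosh2, ← hp2]
    field_simp
    ring
  have hsqrt : Real.sqrt (Real.cosh (cH/2)^2 - θ) = w / (2*p) := by
    rw [hsq, show ((1+q)^2 - 4*q*θ)/(4*q) = (w/(2*p))^2 by rw [← hw2, ← hp2]; field_simp; ring,
      Real.sqrt_sq (by positivity)]
  have hrval : r = ((1 + q^2) - (1-q)*w)/(2*q) := by
    rw [hrdef, hcosh, hsinh, hsqrt, ← hp2]
    field_simp
  -- bounds on r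
  have hqr : q < r := by
    rw [hrval, lt_div_iff₀ (by positivity)]
    nlinarith [mul_lt_mul_of_pos_left hwlt (show (0:ℝ) < 1 - q by linarith)]
  have hr1 : r < 1 := by
    rw [hrval, div_lt_one (by positivity)]
    nlinarith [mul_lt_mul_of_pos_left hwgt (show (0:ℝ) < 1 - q by linarith)]
  have hr0 : 0 < r := lt_trans hq0 hqr
  have hqr1 : q * r < 1 := by nlinarith
  -- key algebraic identity
  have hkey : (r - q) * (1 - q*r) = θ * (1-q)^2 := by
    have h2qr : 2*q*r = (1 + q^2) - (1-q)*w := by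
      rw [hrval]; field_simp
    have hkey4 : (4*q) * ((r - q) * (1 - q*r)) = (4*q) * (θ * (1-q)^2) := by
      linear_combination ((1+q^2) + (1-q)*w - 2*q*r) * h2qr - (1-q)^2 * hw2
    exact mul_left_cancel₀ (by positivity) hkey4
  have hΘ0 : 0 < Θ := by
    rw [hΘdef]; exact div_pos (mul_pos hθ0 (by linarith)) (by linarith)
  have hρ0 : 0 < ρ := by
    rw [hρdef]
    have : 0 < CH / Θ := div_pos hCH hΘ0
    nlinarith
  refine ⟨⟨hqr, hr1⟩, hρ0, ?_⟩
  intro y hMy hy0 hrec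
  obtain ⟨M, hM⟩ := hMy
  -- the fixed point identity for z j = ρ * r ^ j
  have hz_id : ∀ j : ℕ, CH * q ^ j +
      Θ * ∑' k : ℕ, Real.exp (-cH * |(j : ℝ) - 1 - (k : ℝ)|) * (ρ * r ^ k) = ρ * r ^ j := by
    intro j
    have h1 : ∑' k : ℕ, Real.exp (-cH * |(j : ℝ) - 1 - (k : ℝ)|) * (ρ * r ^ k)
        = ρ * ∑' k : ℕ, Real.exp (-cH * |(j : ℝ) - 1 - (k : ℝ)|) * r ^ k := by
      rw [← tsum_mul_left]
      exact tsum_congr (fun k => by ring)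
    rw [h1, ker_tsum' cH r hcH hqr hr1 j, ← hq]
    have e1 : r - q ≠ 0 := by linarith
    have e2 : 1 - q * r ≠ 0 := by nlinarith
    have e3 : (1:ℝ) + q ≠ 0 := by linarith
    have hΘρ : Θ * ρ = CH * (r - q) := by
      rw [hρdef]; field_simp
    have hkey2 : Θ * (1 - q^2) = (r - q) * (1 - q*r) := by
      rw [hΘdef]
      field_simp
      linear_combination (-(1+q)) * hkey
    apply mul_left_cancel₀ hΘ0.ne'
    have expand : Θ * (CH * q ^ j + Θ * (ρ * ((r ^ j - q ^ j) / (r - q) + q * r ^ j / (1 - q * r))))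
        = Θ * (CH * q ^ j) + (Θ * ρ) * (Θ * ((r ^ j - q ^ j) / (r - q) + q * r ^ j / (1 - q * r))) := by
      ring
    rw [expand, hΘρ, show Θ * (ρ * r ^ j) = (Θ * ρ) * r ^ j by ring, hΘρ]
    have f1 : (r ^ j - q ^ j) / (r - q) * (r - q) = r ^ j - q ^ j := div_mul_cancel₀ _ e1
    have f2 : q * r ^ j / (1 - q * r) * (1 - q * r) = q * r ^ j := div_mul_cancel₀ _ e2
    apply mul_right_cancel₀ e2
    linear_combination CH * Θ * (1 - q * r) * f1 + CH * (r - q) * Θ * f2 + CH * r ^ j * hkey2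
  have hΘθ : Θ * ((1 + q) / (1 - q)) = θ := by
    rw [hΘdef]; field_simp [show (1:ℝ)-q ≠ 0 by linarith, show (1:ℝ)+q ≠ 0 by linarith]
  have hρr0 : ∀ k : ℕ, 0 ≤ ρ * r ^ k := fun k => by positivity
  have hρrle : ∀ k : ℕ, ρ * r ^ k ≤ ρ := fun k => by
    nlinarith [pow_le_one₀ hr0.le hr1.le (n := k), pow_nonneg hr0.le k]
  have hKy : ∀ j : ℕ, Summable (fun k : ℕ => Real.exp (-cH * |(j:ℝ) - 1 - (k:ℝ)|) * y k) :=
    fun j => ker_summable' cH hcH j y M hy0 hM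
  have hbdd : BddAbove (Set.range fun j : ℕ => y j - ρ * r ^ j) := by
    refine ⟨M, ?_⟩
    rintro x ⟨j, rfl⟩
    have h1 := hρr0 j
    have h2 := hM j
    show y j - ρ * r ^ j ≤ M
    linarith
  have hne : (Set.range fun j : ℕ => y j - ρ * r ^ j).Nonempty := ⟨_, ⟨0, rfl⟩⟩
  set S := sSup (Set.range fun j : ℕ => y j - ρ * r ^ j) with hSdef
  have hleS : ∀ j : ℕ, y j - ρ * r ^ j ≤ S := fun j => le_csSup hbdd ⟨j, rfl⟩
  set s' := max S 0 with hs'def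
  have hs'0 : 0 ≤ s' := le_max_right _ _
  have hSs' : S ≤ s' := le_max_left _ _
  have hstep : ∀ j : ℕ, y j ≤ ρ * r ^ j + θ * s' := by
    intro j
    have hz_s : ∀ k : ℕ, y k ≤ ρ * r ^ k + s' := fun k => by
      have := hleS k; linarith
    have hsumz : Summable (fun k : ℕ => Real.exp (-cH * |(j:ℝ) - 1 - (k:ℝ)|) * (ρ * r ^ k)) :=
      ker_summable' cH hcH j _ ρ hρr0 hρrle
    have hsums' : Summable (fun k : ℕ => Real.exp (-cH * |(j:ℝ) - 1 - (k:ℝ)|) * s') :=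
      ker_summable' cH hcH j (fun _ => s') s' (fun _ => hs'0) (fun _ => le_rfl)
    have hsum1 : Summable (fun k : ℕ => Real.exp (-cH * |(j:ℝ) - 1 - (k:ℝ)|) * (ρ * r ^ k + s')) := by
      have := hsumz.add hsums'
      refine this.congr (fun k => by ring)
    have h2 : (∑' k : ℕ, Real.exp (-cH * |(j:ℝ) - 1 - (k:ℝ)|) * y k)
        ≤ ∑' k : ℕ, Real.exp (-cH * |(j:ℝ) - 1 - (k:ℝ)|) * (ρ * r ^ k + s') :=
      Summable.tsum_le_tsum (fun k => mul_le_mul_of_nonneg_left (hz_s k) (Real.exp_nonneg _))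
        (hKy j) hsum1
    have h3 : ∑' k : ℕ, Real.exp (-cH * |(j:ℝ) - 1 - (k:ℝ)|) * (ρ * r ^ k + s')
        = (∑' k : ℕ, Real.exp (-cH * |(j:ℝ) - 1 - (k:ℝ)|) * (ρ * r ^ k))
          + (∑' k : ℕ, Real.exp (-cH * |(j:ℝ) - 1 - (k:ℝ)|)) * s' := by
      rw [← tsum_mul_right, ← Summable.tsum_add hsumz hsums']
      exact tsum_congr (fun k => by ring)
    have h5 : (∑' k : ℕ, Real.exp (-cH * |(j:ℝ) - 1 - (k:ℝ)|)) * s'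
        ≤ (1 + q) / (1 - q) * s' :=
      mul_le_mul_of_nonneg_right (ker_tsum_one' cH hcH j) hs'0
    have h6 := hrec j
    rw [exp_neg_nat' cH j, ← hq] at h6
    have h7 : (∑' k : ℕ, Real.exp (-cH * |(j:ℝ) - 1 - (k:ℝ)|) * y k)
        ≤ (∑' k : ℕ, Real.exp (-cH * |(j:ℝ) - 1 - (k:ℝ)|) * (ρ * r ^ k))
          + (1 + q) / (1 - q) * s' := by
      rw [h3] at h2
      linarith
    have h8 : Θ * (∑' k : ℕ, Real.exp (-cH * |(j:ℝ) - 1 - (k:ℝ)|) * y k)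
        ≤ Θ * ((∑' k : ℕ, Real.exp (-cH * |(j:ℝ) - 1 - (k:ℝ)|) * (ρ * r ^ k))
          + (1 + q) / (1 - q) * s') :=
      mul_le_mul_of_nonneg_left h7 hΘ0.le
    have h9 := hz_id j
    calc y j ≤ CH * q ^ j + Θ * ∑' k : ℕ, Real.exp (-cH * |(j:ℝ) - 1 - (k:ℝ)|) * y k := h6
      _ ≤ CH * q ^ j + Θ * ((∑' k : ℕ, Real.exp (-cH * |(j:ℝ) - 1 - (k:ℝ)|) * (ρ * r ^ k))
            + (1 + q) / (1 - q) * s') := by linarith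
      _ = (CH * q ^ j + Θ * ∑' k : ℕ, Real.exp (-cH * |(j:ℝ) - 1 - (k:ℝ)|) * (ρ * r ^ k))
            + (Θ * ((1 + q) / (1 - q))) * s' := by ring
      _ = ρ * r ^ j + θ * s' := by rw [h9, hΘθ]
  have hSle : S ≤ θ * s' := by
    apply csSup_le hne
    rintro x ⟨j, rfl⟩
    have := hstep j
    show y j - ρ * r ^ j ≤ θ * s'
    linarith
  have hS0 : S ≤ 0 := by
    by_contra h
    push_neg at h
    rw [hs'def, max_eq_left h.le] at hSle
    nlinarith
  intro j
  have := hleS j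
  linarith
end

section
/- With the notation of the context, let z belong to the unbounded connected component of ℂ \ 𝓕(𝕊¹). Then the companion matrix M(z) has no eigenvalue of modulus 1, and, counted with algebraic multiplicity, it has exactly p eigenvalues in 𝔻 \ {0} and exactly q eigenvalues in 𝕌. -/
open Polynomial Matrix

theorem companion_charpoly : ∀ (n : ℕ) (c : Fin (n+1) → ℂ),
    (Matrix.of fun i j : Fin (n+1) => if (i:ℕ) = 0 then c j
      else if (i:ℕ) = (j:ℕ)+1 then (1:ℂ) else 0).charpoly
    = X^(n+1) - ∑ j : Fin (n+1), C (c j) * X^(n - (j:ℕ)) := by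
  intro n
  induction n with
  | zero =>
    intro c
    rw [Matrix.charpoly, Matrix.det_fin_one]
    simp [Matrix.charmatrix_apply_eq]
  | succ n ih =>
    intro c
    set A : Matrix (Fin (n+2)) (Fin (n+2)) ℂ := Matrix.of fun i j : Fin (n+2) =>
      if (i:ℕ) = 0 then c j else if (i:ℕ) = (j:ℕ)+1 then (1:ℂ) else 0 with hA
    set lastI : Fin (n+2) := Fin.last (n+1) with hlast
    have h0last : (0 : Fin (n+2)) ≠ lastI := by
      simp [hlast, Fin.ext_iff]
    -- the two minors
    have hminor_last : ((charmatrix A).submatrix lastI.succAbove lastI.succAbove).det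
        = X^(n+1) - ∑ j : Fin (n+1), C (c j.castSucc) * X^(n - (j:ℕ)) := by
      have : (charmatrix A).submatrix lastI.succAbove lastI.succAbove
          = charmatrix (Matrix.of fun i j : Fin (n+1) =>
            if (i:ℕ) = 0 then c j.castSucc else if (i:ℕ) = (j:ℕ)+1 then (1:ℂ) else 0) := by
        ext i j
        have hsa : lastI.succAbove = Fin.castSucc := Fin.succAbove_last
        rw [Matrix.submatrix_apply, hsa]
        by_cases hij : i = j
        · subst hij
          rw [charmatrix_apply_eq, charmatrix_apply_eq]
          simp [hA]
        · rw [charmatrix_apply_ne _ _ _ (by simpa [Fin.ext_iff] using hij),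
            charmatrix_apply_ne _ _ _ hij]
          simp only [hA, Matrix.of_apply, Fin.coe_castSucc]
      rw [this, ← Matrix.charpoly, ih (fun j => c j.castSucc)]
    have hminor_zero : ((charmatrix A).submatrix (0 : Fin (n+2)).succAbove lastI.succAbove).det
        = (-1)^(n+1) := by
      have htri : ((charmatrix A).submatrix (0 : Fin (n+2)).succAbove lastI.succAbove).BlockTriangular id := by
        intro i j hij
        have hij' : (j:ℕ) < (i:ℕ) := hij
        rw [Matrix.submatrix_apply, Fin.succAbove_zero, Fin.succAbove_last,
          charmatrix_apply_ne _ _ _ (by simp [Fin.ext_iff]; omega)]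
        simp only [hA, Matrix.of_apply, Fin.val_succ, Fin.coe_castSucc]
        rw [if_neg (by omega), if_neg (by omega)]
        simp
      rw [Matrix.det_of_upperTriangular htri]
      have hdiag : ∀ i : Fin (n+1),
          ((charmatrix A).submatrix (0 : Fin (n+2)).succAbove lastI.succAbove) i i = -1 := by
        intro i
        rw [Matrix.submatrix_apply, Fin.succAbove_zero, Fin.succAbove_last,
          charmatrix_apply_ne _ _ _ (by simp [Fin.ext_iff])]
        simp [hA]
      simp only [Matrix.submatrix_apply, Fin.succAbove_zero, id] at hdiag ⊢
      rw [Finset.prod_congr rfl (fun i _ => hdiag i)]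
      simp
    -- column entries
    have hent : ∀ i : Fin (n+2), i ≠ 0 → i ≠ lastI → charmatrix A i lastI = 0 := by
      intro i h1 h2
      rw [charmatrix_apply_ne _ _ _ h2]
      have : (i:ℕ) ≠ 0 := fun h => h1 (Fin.ext (by rw [h, Fin.val_zero]))
      have : A i lastI = 0 := by
        simp only [hA, Matrix.of_apply]
        rw [if_neg this, if_neg (by
          have := i.isLt
          simp only [hlast, Fin.val_last]
          omega)]
      rw [this]; simp
    have hent0 : charmatrix A 0 lastI = -C (c lastI) := by
      rw [charmatrix_apply_ne _ _ _ h0last]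
      simp [hA]
    have hentlast : charmatrix A lastI lastI = X := by
      rw [charmatrix_apply_eq]
      have : A lastI lastI = 0 := by
        simp only [hA, Matrix.of_apply, hlast, Fin.val_last]
        rw [if_neg (by omega), if_neg (by omega)]
      rw [this]; simp
    -- expansion
    have hsplit : ∀ f : Fin (n+2) → Polynomial ℂ, (∀ i, i ≠ 0 → i ≠ lastI → f i = 0) →
        ∑ i : Fin (n+2), f i = f 0 + f lastI := by
      intro f hf
      rw [← Finset.sum_subset (Finset.subset_univ ({0, lastI} : Finset (Fin (n+2))))]
      · rw [Finset.sum_pair h0last]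
      · intro i _ hi
        simp only [Finset.mem_insert, Finset.mem_singleton] at hi
        push_neg at hi
        exact hf i hi.1 hi.2
    rw [Matrix.charpoly, Matrix.det_succ_column _ lastI,
      hsplit _ (fun i h1 h2 => by rw [hent i h1 h2]; ring)]
    rw [hent0, hentlast, hminor_zero, hminor_last]
    have hlv : (lastI : ℕ) = n + 1 := rfl
    rw [hlv]
    rw [Fin.sum_univ_castSucc (f := fun j : Fin (n+2) => C (c j) * X^(n + 1 - (j:ℕ)))]
    simp only [Fin.coe_castSucc, Fin.val_last, Nat.sub_self, pow_zero, mul_one]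
    have hsub : ∀ j : Fin (n+1), n + 1 - (j:ℕ) = (n - (j:ℕ)) + 1 := by
      intro j; have := j.isLt; omega
    have : ∑ j : Fin (n+1), C (c j.castSucc) * X ^ (n + 1 - (j:ℕ))
        = (∑ j : Fin (n+1), C (c j.castSucc) * X ^ (n - (j:ℕ))) * X := by
      rw [Finset.sum_mul]
      congr 1; funext j
      rw [hsub j, pow_succ]; ring
    rw [this]
    ring_nf
    simp only [Fin.val_zero, pow_zero, mul_one, one_mul]
    rw [show n*2 = 2*n from by ring]
    simp only [pow_mul, neg_one_sq, one_pow, mul_one, one_mul]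
    rw [show ∑ x : Fin (n + 1), X ^ (n - (x:ℕ)) * C (c x.castSucc)
      = ∑ j : Fin (n + 1), C (c j.castSucc) * X ^ (n - (j:ℕ)) from
      Finset.sum_congr rfl (fun x _ => by ring)]
    rw [hlast]
    ring


noncomputable def PA (p : ℕ) (lam : ℤ → ℂ) (q : ℕ) : Polynomial ℂ :=
  ∑ k ∈ Finset.Icc (-(p:ℤ)) (q:ℤ), C (lam k) * X^((k+(p:ℤ)).toNat)

noncomputable def PP (p q : ℕ) (lam : ℤ → ℂ) (w : ℂ) : Polynomial ℂ :=
  C w * X^p - PA p lam q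

lemma Icc_reindex (p q : ℕ) (f : ℤ → Polynomial ℂ) :
    ∑ k ∈ Finset.Icc (-(p:ℤ)) (q:ℤ), f k = ∑ j ∈ Finset.range (p+q+1), f ((j:ℤ) - p) := by
  apply Finset.sum_nbij' (i := fun k => (k + (p:ℤ)).toNat) (j := fun j => (j:ℤ) - (p:ℤ))
  · intro a ha
    simp only [Finset.mem_Icc] at ha
    simp only [Finset.mem_range]
    omega
  · intro a ha
    simp only [Finset.mem_range] at ha
    simp only [Finset.mem_Icc]
    omega
  · intro a ha
    simp only [Finset.mem_Icc] at ha
    omega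
  · intro a ha
    simp only [Finset.mem_range] at ha
    omega
  · intro a ha
    simp only [Finset.mem_Icc] at ha
    congr 1
    omega

lemma PA_eq (p q : ℕ) (lam : ℤ → ℂ) :
    PA p lam q = ∑ j ∈ Finset.range (p+q+1), C (lam ((j:ℤ) - p)) * X^j := by
  rw [PA, Icc_reindex]
  apply Finset.sum_congr rfl
  intro j hj
  have h2 : (((j:ℤ) - p) + p).toNat = j := by omega
  rw [h2]

lemma PA_coeff (p q : ℕ) (lam : ℤ → ℂ) (m : ℕ) (hm : m ≤ p + q) :
    (PA p lam q).coeff m = lam ((m:ℤ) - p) := by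
  rw [PA_eq, Polynomial.finset_sum_coeff]
  rw [Finset.sum_eq_single_of_mem m (by simp; omega)]
  · simp [Polynomial.coeff_C_mul, Polynomial.coeff_X_pow]
  · intro b _ hb
    simp only [Polynomial.coeff_C_mul, Polynomial.coeff_X_pow]
    rw [if_neg (fun h => hb h.symm)]
    simp

lemma PA_coeff_zero (p q : ℕ) (lam : ℤ → ℂ) (m : ℕ) (hm : p + q < m) :
    (PA p lam q).coeff m = 0 := by
  rw [PA_eq, Polynomial.finset_sum_coeff]
  apply Finset.sum_eq_zero
  intro j hj
  simp only [Finset.mem_range] at hj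
  simp [Polynomial.coeff_C_mul, Polynomial.coeff_X_pow]
  intro h
  omega

lemma PA_natDegree_le (p q : ℕ) (lam : ℤ → ℂ) : (PA p lam q).natDegree ≤ p + q := by
  apply Polynomial.natDegree_le_iff_coeff_eq_zero.2
  intro m hm
  exact PA_coeff_zero p q lam m hm

lemma PP_coeff_top (p q : ℕ) (hq : 1 ≤ q) (lam : ℤ → ℂ) (w : ℂ) :
    (PP p q lam w).coeff (p+q) = -lam (q:ℤ) := by
  rw [PP, Polynomial.coeff_sub, Polynomial.coeff_C_mul, Polynomial.coeff_X_pow,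
    PA_coeff p q lam (p+q) le_rfl]
  rw [if_neg (by omega)]
  simp only [mul_zero, zero_sub]
  congr 1
  congr 1
  push_cast
  ring

lemma PP_coeff_bot (p q : ℕ) (hp : 1 ≤ p) (lam : ℤ → ℂ) (w : ℂ) :
    (PP p q lam w).coeff 0 = -lam (-(p:ℤ)) := by
  rw [PP, Polynomial.coeff_sub, Polynomial.coeff_C_mul, Polynomial.coeff_X_pow,
    PA_coeff p q lam 0 (by omega)]
  rw [if_neg (by omega)]
  simp only [mul_zero, zero_sub]
  congr 2
  push_cast
  ring

lemma PP_natDegree (p q : ℕ) (hq : 1 ≤ q) (lam : ℤ → ℂ) (hlq : lam (q:ℤ) ≠ 0) (w : ℂ) :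
    (PP p q lam w).natDegree = p + q := by
  apply le_antisymm
  · apply le_trans (Polynomial.natDegree_sub_le _ _)
    apply max_le
    · apply le_trans (Polynomial.natDegree_C_mul_le _ _)
      simp only [Polynomial.natDegree_X_pow]
      omega
    · exact PA_natDegree_le p q lam
  · apply Polynomial.le_natDegree_of_ne_zero
    rw [PP_coeff_top p q hq lam w]
    simpa using hlq

lemma PP_ne_zero (p q : ℕ) (hp : 1 ≤ p) (lam : ℤ → ℂ) (hlmp : lam (-(p:ℤ)) ≠ 0) (w : ℂ) :
    PP p q lam w ≠ 0 := by
  intro h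
  have := PP_coeff_bot p q hp lam w
  rw [h] at this
  simp at this
  exact hlmp this

lemma PP_leadingCoeff (p q : ℕ) (hq : 1 ≤ q) (lam : ℤ → ℂ) (hlq : lam (q:ℤ) ≠ 0) (w : ℂ) :
    (PP p q lam w).leadingCoeff = -lam (q:ℤ) := by
  rw [Polynomial.leadingCoeff, PP_natDegree p q hq lam hlq w, PP_coeff_top p q hq lam w]

lemma PP_roots_card (p q : ℕ) (hq : 1 ≤ q) (lam : ℤ → ℂ) (hlq : lam (q:ℤ) ≠ 0) (w : ℂ) :
    Multiset.card (PP p q lam w).roots = p + q := by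
  have hs : (PP p q lam w).Splits := IsAlgClosed.splits _
  rw [Polynomial.splits_iff_card_roots.mp hs]
  exact PP_natDegree p q hq lam hlq w

lemma PP_zero_not_root (p q : ℕ) (hp : 1 ≤ p) (lam : ℤ → ℂ) (hlmp : lam (-(p:ℤ)) ≠ 0) (w : ℂ) :
    (0:ℂ) ∉ (PP p q lam w).roots := by
  intro h
  rw [Polynomial.mem_roots (PP_ne_zero p q hp lam hlmp w)] at h
  rw [Polynomial.IsRoot, ← Polynomial.coeff_zero_eq_eval_zero, PP_coeff_bot p q hp lam w] at h
  exact hlmp (neg_eq_zero.mp h)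

lemma PP_eval (p q : ℕ) (lam : ℤ → ℂ) (w κ : ℂ) :
    Polynomial.eval κ (PP p q lam w) = w * κ^p - Polynomial.eval κ (PA p lam q) := by
  simp [PP]

lemma PA_eval (p q : ℕ) (lam : ℤ → ℂ) (κ : ℂ) (hκ : κ ≠ 0) :
    Polynomial.eval κ (PA p lam q)
      = κ^p * ∑ k ∈ Finset.Icc (-(p:ℤ)) (q:ℤ), lam k * κ ^ (k:ℤ) := by
  rw [PA, Polynomial.eval_finset_sum, Finset.mul_sum]
  apply Finset.sum_congr rfl
  intro k hk
  simp only [Finset.mem_Icc] at hk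
  simp only [Polynomial.eval_mul, Polynomial.eval_C, Polynomial.eval_pow, Polynomial.eval_X]
  have h1 : ((k + (p:ℤ)).toNat : ℤ) = k + p := Int.toNat_of_nonneg (by omega)
  have h2 : κ ^ ((k + (p:ℤ)).toNat) = κ ^ (k:ℤ) * κ ^ p := by
    calc κ ^ ((k + (p:ℤ)).toNat) = κ ^ (((k + (p:ℤ)).toNat : ℤ)) := (zpow_natCast κ _).symm
    _ = κ ^ (k + (p:ℤ)) := by rw [h1]
    _ = κ ^ (k:ℤ) * κ ^ ((p:ℤ)) := zpow_add₀ hκ _ _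
    _ = κ ^ (k:ℤ) * κ ^ p := by rw [zpow_natCast]
  rw [h2]
  ring

lemma PP_eval_factor (p q : ℕ) (lam : ℤ → ℂ) (w κ : ℂ) (hκ : κ ≠ 0) :
    Polynomial.eval κ (PP p q lam w)
      = κ^p * (w - ∑ k ∈ Finset.Icc (-(p:ℤ)) (q:ℤ), lam k * κ ^ (k:ℤ)) := by
  rw [PP_eval, PA_eval p q lam κ hκ]
  ring

lemma PP_eq_sum (p q : ℕ) (hp : 1 ≤ p) (lam : ℤ → ℂ) (z : ℂ) :
    PP p q lam z = ∑ j ∈ Finset.range (p+q+1),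
      C ((if (j:ℤ) - (p:ℤ) = 0 then z else 0) - lam ((j:ℤ) - p)) * X^j := by
  rw [PP, PA_eq]
  have : ∑ j ∈ Finset.range (p+q+1),
      C ((if (j:ℤ) - (p:ℤ) = 0 then z else 0) - lam ((j:ℤ) - p)) * X^j
      = (∑ j ∈ Finset.range (p+q+1), C (if (j:ℤ) - (p:ℤ) = 0 then z else 0) * X^j)
        - ∑ j ∈ Finset.range (p+q+1), C (lam ((j:ℤ) - p)) * X^j := by
    rw [← Finset.sum_sub_distrib]
    apply Finset.sum_congr rfl
    intro j _
    rw [map_sub]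
    ring
  rw [this]
  congr 1
  rw [Finset.sum_eq_single_of_mem p (by simp only [Finset.mem_range]; omega)]
  · rw [if_pos (by omega)]
  · intro b _ hb
    rw [if_neg (by omega)]
    simp

lemma charpoly_sum_eq (p q : ℕ) (hp : 1 ≤ p) (hq : 1 ≤ q) (lam : ℤ → ℂ)
    (hlq : lam (q:ℤ) ≠ 0) (z : ℂ) :
    X^(p+q) - ∑ j : Fin (p+q), C ((lam (q:ℤ))⁻¹ *
        ((if ((q:ℤ)-1-((j:ℕ):ℤ)) = 0 then z else 0) - lam ((q:ℤ)-1-((j:ℕ):ℤ)))) * X^(p+q-1-(j:ℕ))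
      = C ((-(lam (q:ℤ)))⁻¹) * PP p q lam z := by
  rw [PP_eq_sum p q hp lam z, Finset.mul_sum]
  rw [Finset.sum_range_succ]
  have htop : C ((-(lam (q:ℤ)))⁻¹) *
      (C ((if ((p+q:ℕ):ℤ) - (p:ℤ) = 0 then z else 0) - lam (((p+q:ℕ):ℤ) - p)) * X^(p+q)) = X^(p+q) := by
    rw [if_neg (by push_cast; omega)]
    have h1 : (((p+q:ℕ):ℤ) - p) = (q:ℤ) := by push_cast; ring
    rw [h1, zero_sub, ← mul_assoc, ← C_mul, inv_mul_cancel₀ (by simpa using hlq)]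
    simp
  rw [htop]
  rw [Fin.sum_univ_eq_sum_range (fun j =>
    C ((lam (q:ℤ))⁻¹ * ((if ((q:ℤ)-1-((j:ℕ):ℤ)) = 0 then z else 0) - lam ((q:ℤ)-1-((j:ℕ):ℤ)))) * X^(p+q-1-j))]
  rw [← Finset.sum_range_reflect]
  have hterm : ∀ j ∈ Finset.range (p+q),
      C ((lam (q:ℤ))⁻¹ * ((if ((q:ℤ)-1-(((p+q-1-j:ℕ)):ℤ)) = 0 then z else 0)
          - lam ((q:ℤ)-1-(((p+q-1-j:ℕ)):ℤ)))) * X^(p+q-1-(p+q-1-j))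
      = - (C ((-(lam (q:ℤ)))⁻¹) * (C ((if (j:ℤ) - (p:ℤ) = 0 then z else 0) - lam ((j:ℤ) - p)) * X^j)) := by
    intro j hj
    simp only [Finset.mem_range] at hj
    have h1 : ((q:ℤ)-1-(((p+q-1-j:ℕ)):ℤ)) = (j:ℤ) - p := by omega
    have h2 : p+q-1-(p+q-1-j) = j := by omega
    rw [h1, h2, inv_neg, C_mul, Polynomial.C_neg]
    ring
  rw [Finset.sum_congr rfl hterm]
  rw [Finset.sum_neg_distrib]
  ring

theorem companion_charpoly' (n : ℕ) (hn : 0 < n) (c : Fin n → ℂ) :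
    (Matrix.of fun i j : Fin n => if (i:ℕ) = 0 then c j
      else if (i:ℕ) = (j:ℕ)+1 then (1:ℂ) else 0).charpoly
    = X^n - ∑ j : Fin n, C (c j) * X^(n - 1 - (j:ℕ)) := by
  cases n with
  | zero => omega
  | succ m => simpa using companion_charpoly m c

lemma circleIntegral_add' {f g : ℂ → ℂ} {c : ℂ} {R : ℝ} (hf : CircleIntegrable f c R)
    (hg : CircleIntegrable g c R) :
    (∮ z in C(c, R), (f z + g z)) = (∮ z in C(c, R), f z) + ∮ z in C(c, R), g z := by
  simp only [circleIntegral, smul_add, intervalIntegral.integral_add hf.out hg.out]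

lemma integral_inv_inside (r : ℂ) (hr : ‖r‖ < 1) :
    (∮ κ in C(0, 1), (κ - r)⁻¹) = 2 * Real.pi * Complex.I :=
  circleIntegral.integral_sub_inv_of_mem_ball (by simpa [Metric.mem_ball, Complex.dist_eq] using hr)

lemma integral_inv_outside (r : ℂ) (hr : 1 < ‖r‖) :
    (∮ κ in C(0, 1), (κ - r)⁻¹) = 0 := by
  apply Complex.circleIntegral_eq_zero_of_differentiable_on_off_countable zero_le_one
    Set.countable_empty
  · apply ContinuousOn.inv₀
    · exact (continuous_id.sub continuous_const).continuousOn
    · intro κ hκ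
      rw [Metric.mem_closedBall, Complex.dist_eq, sub_zero] at hκ
      intro h
      rw [sub_eq_zero] at h
      subst h
      linarith
  · intro κ hκ
    have h1 : ‖κ‖ < 1 := by
      have := hκ.1
      rw [Metric.mem_ball, Complex.dist_eq, sub_zero] at this
      exact this
    apply DifferentiableAt.inv (differentiableAt_id.sub (differentiableAt_const r))
    intro h
    have hkr : κ = r := by simpa using sub_eq_zero.mp h
    rw [hkr] at h1
    linarith

lemma integrable_inv (r : ℂ) (hr : ‖r‖ ≠ 1) :
    CircleIntegrable (fun κ => (κ - r)⁻¹) 0 1 := by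
  apply circleIntegrable_sub_inv_iff.mpr
  right
  simp [Complex.dist_eq, hr]

lemma sumInv_integrable (s : Multiset ℂ) (hs : ∀ r ∈ s, ‖r‖ ≠ 1) :
    CircleIntegrable (fun κ => (s.map fun r => (κ - r)⁻¹).sum) 0 1 := by
  induction s using Multiset.induction_on with
  | empty => simpa using circleIntegrable_const (0:ℂ) 0 1
  | cons a t ih =>
    simp only [Multiset.map_cons, Multiset.sum_cons]
    exact (integrable_inv a (hs a (Multiset.mem_cons_self a t))).add
      (ih fun r hr => hs r (Multiset.mem_cons_of_mem hr))

open scoped Classical in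
lemma integral_sumInv (s : Multiset ℂ) (hs : ∀ r ∈ s, ‖r‖ ≠ 1) :
    (∮ κ in C(0,1), (s.map fun r => (κ - r)⁻¹).sum)
      = 2 * Real.pi * Complex.I * (Multiset.card (s.filter fun r => ‖r‖ < 1) : ℂ) := by
  induction s using Multiset.induction_on with
  | empty => simp [circleIntegral]
  | cons a t ih =>
    have ha := hs a (Multiset.mem_cons_self a t)
    have ht : ∀ r ∈ t, ‖r‖ ≠ 1 := fun r hr => hs r (Multiset.mem_cons_of_mem hr)
    simp only [Multiset.map_cons, Multiset.sum_cons]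
    rw [circleIntegral_add' (integrable_inv a ha) (sumInv_integrable t ht), ih ht]
    rcases lt_or_gt_of_ne ha with h | h
    · rw [integral_inv_inside a h, show (a ::ₘ t).filter (fun r => ‖r‖ < 1)
          = a ::ₘ t.filter (fun r => ‖r‖ < 1) from Multiset.filter_cons_of_pos _ h]
      rw [Multiset.card_cons]
      push_cast
      ring
    · rw [integral_inv_outside a h, show (a ::ₘ t).filter (fun r => ‖r‖ < 1)
          = t.filter (fun r => ‖r‖ < 1) from Multiset.filter_cons_of_neg _ (by
        intro hc; exact absurd hc (not_lt.mpr (le_of_lt h)))]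
      ring

lemma logderiv_eval (s : Multiset ℂ) : ∀ (cc κ : ℂ), (∀ r ∈ s, κ ≠ r) →
    Polynomial.eval κ (Polynomial.derivative (C cc * (s.map fun r => X - C r).prod))
      = Polynomial.eval κ (C cc * (s.map fun r => X - C r).prod)
        * (s.map fun r => (κ - r)⁻¹).sum := by
  induction s using Multiset.induction_on with
  | empty => intro cc κ _; simp
  | cons a t ih =>
    intro cc κ h
    have hκa : κ - a ≠ 0 := sub_ne_zero.2 (h a (Multiset.mem_cons_self a t))
    simp only [Multiset.map_cons, Multiset.prod_cons, Multiset.sum_cons]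
    have hrw : C cc * ((X - C a) * (t.map fun r => X - C r).prod)
        = (X - C a) * (C cc * (t.map fun r => X - C r).prod) := by ring
    rw [hrw, Polynomial.derivative_mul]
    simp only [Polynomial.derivative_sub, Polynomial.derivative_X, Polynomial.derivative_C,
      sub_zero, one_mul, Polynomial.eval_add, Polynomial.eval_mul, Polynomial.eval_sub,
      Polynomial.eval_X, Polynomial.eval_C]
    rw [ih cc κ (fun r hr => h r (Multiset.mem_cons_of_mem hr))]
    field_simp
    simp only [Polynomial.eval_mul, Polynomial.eval_C]
    ring

lemma phidiff_scalar (p : ℕ) (hp : 1 ≤ p) (w1 w2 κ a a' : ℂ)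
    (h1 : w1 * κ^p - a ≠ 0) (h2 : w2 * κ^p - a ≠ 0) :
    (w1 * p * κ^(p-1) - a')/(w1 * κ^p - a) - (w2 * p * κ^(p-1) - a')/(w2 * κ^p - a)
      = ((w1 - w2) * κ^(p-1) * (κ * a' - p * a))/((w1 * κ^p - a) * (w2 * κ^p - a)) := by
  have hκp : κ^p = κ * κ^(p-1) := by
    conv_lhs => rw [show p = (p-1)+1 from by omega]
    rw [pow_succ']
  rw [hκp] at h1 h2 ⊢
  rw [div_sub_div _ _ h1 h2, div_eq_div_iff (mul_ne_zero h1 h2) (mul_ne_zero h1 h2)]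
  ring

lemma phibase_scalar (p : ℕ) (hp : 1 ≤ p) (w κ a a' : ℂ) (hκ : κ ≠ 0)
    (hP : w * κ^p - a ≠ 0) :
    (w * p * κ^(p-1) - a')/(w * κ^p - a) - p * κ⁻¹
      = -((κ * a' - p * a)/(κ * (w * κ^p - a))) := by
  have hκp : κ^p = κ * κ^(p-1) := by
    conv_lhs => rw [show p = (p-1)+1 from by omega]
    rw [pow_succ']
  rw [hκp] at hP ⊢
  have hpk : (p:ℂ) * κ⁻¹ = (p:ℂ)/κ := by rw [div_eq_mul_inv]
  rw [hpk, div_sub_div _ _ hP hκ, neg_div' ,div_eq_div_iff (mul_ne_zero hP hκ) (mul_ne_zero hκ hP)]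
  ring

lemma PP_deriv_eval (p q : ℕ) (lam : ℤ → ℂ) (w κ : ℂ) :
    Polynomial.eval κ (Polynomial.derivative (PP p q lam w))
      = w * (p:ℂ) * κ^(p-1) - Polynomial.eval κ (Polynomial.derivative (PA p lam q)) := by
  rw [PP, Polynomial.derivative_sub, Polynomial.derivative_C_mul_X_pow]
  simp
open scoped Classical

theorem stmt6 (p q : ℕ) (hp : 1 ≤ p) (hq : 1 ≤ q)
    (lam : ℤ → ℂ) (hlq : lam (q : ℤ) ≠ 0) (hlmp : lam (-(p : ℤ)) ≠ 0)
    (Λ : ℤ → ℂ → ℂ) (hΛ : ∀ (k : ℤ) (z : ℂ), Λ k z = (if k = 0 then z else 0) - lam k)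
    (M : ℂ → Matrix (Fin (p + q)) (Fin (p + q)) ℂ)
    (hM : ∀ (z : ℂ) (i j : Fin (p + q)), M z i j =
      if (i : ℕ) = 0 then -(Λ (q : ℤ) z)⁻¹ * Λ ((q : ℤ) - 1 - (j : ℕ)) z
      else if (i : ℕ) = (j : ℕ) + 1 then 1 else 0)
    (F : ℂ → ℂ) (hF : ∀ κ : ℂ, F κ = ∑ k ∈ Finset.Icc (-(p : ℤ)) (q : ℤ), lam k * κ ^ k)
    (z : ℂ) (hz1 : z ∉ F '' Metric.sphere (0 : ℂ) 1)
    (hz2 : ¬ Bornology.IsBounded (connectedComponentIn (F '' Metric.sphere (0 : ℂ) 1)ᶜ z)) :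
    (∀ κ ∈ (M z).charpoly.roots, ‖κ‖ ≠ 1) ∧
    Multiset.card ((M z).charpoly.roots.filter fun κ => ‖κ‖ < 1 ∧ κ ≠ 0) = p ∧
    Multiset.card ((M z).charpoly.roots.filter fun κ => 1 < ‖κ‖) = q := by
  classical
  set Sph : Set ℂ := F '' Metric.sphere (0:ℂ) 1 with hSphdef
  -- continuity of F on the sphere
  have hFcont : ContinuousOn F (Metric.sphere (0:ℂ) 1) := by
    have h1 : ContinuousOn (fun κ : ℂ => ∑ k ∈ Finset.Icc (-(p:ℤ)) (q:ℤ), lam k * κ ^ (k:ℤ))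
        (Metric.sphere (0:ℂ) 1) := by
      apply continuousOn_finset_sum
      intro k _
      apply ContinuousOn.mul continuousOn_const
      intro κ hκ
      have hκ0 : κ ≠ 0 := by
        rw [Metric.mem_sphere, Complex.dist_eq, sub_zero] at hκ
        intro h; rw [h] at hκ; simp at hκ
      exact (continuousAt_zpow₀ κ k (Or.inl hκ0)).continuousWithinAt
    exact h1.congr (fun κ _ => hF κ)
  have hSphCompact : IsCompact Sph := (isCompact_sphere 0 1).image_of_continuousOn hFcont
  have hSphClosed : IsClosed Sph := hSphCompact.isClosed
  have hSphNe : Sph.Nonempty := ⟨F 1, ⟨1, by simp, rfl⟩⟩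
  have hzS : z ∈ Sphᶜ := hz1
  have hdist : ∀ w ∈ Sphᶜ, 0 < Metric.infDist w Sph := fun w hw =>
    (hSphClosed.notMem_iff_infDist_pos hSphNe).mp hw
  -- eval identities
  have hevalP : ∀ (w κ : ℂ), ‖κ‖ = 1 →
      ‖Polynomial.eval κ (PP p q lam w)‖ = ‖w - F κ‖ := by
    intro w κ hκ1
    have hκ0 : κ ≠ 0 := by intro h; rw [h] at hκ1; simp at hκ1
    rw [PP_eval_factor p q lam w κ hκ0, norm_mul, norm_pow, hκ1, one_pow, one_mul, ← hF κ]
  have hlow : ∀ w ∈ Sphᶜ, ∀ κ : ℂ, ‖κ‖ = 1 →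
      Metric.infDist w Sph ≤ ‖Polynomial.eval κ (PP p q lam w)‖ := by
    intro w _ κ hκ1
    rw [hevalP w κ hκ1]
    have hmem : F κ ∈ Sph := ⟨κ, by simp [Metric.mem_sphere, Complex.dist_eq, hκ1], rfl⟩
    calc Metric.infDist w Sph ≤ dist w (F κ) := Metric.infDist_le_dist_of_mem hmem
    _ = ‖w - F κ‖ := Complex.dist_eq w (F κ)
  have hPne : ∀ w ∈ Sphᶜ, ∀ κ : ℂ, ‖κ‖ = 1 →
      Polynomial.eval κ (PP p q lam w) ≠ 0 := by
    intro w hw κ hκ1 h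
    have h2 := hlow w hw κ hκ1
    rw [h] at h2
    simp at h2
    exact absurd (lt_of_lt_of_le (hdist w hw) h2) (by simp)
  have hroots : ∀ w ∈ Sphᶜ, ∀ r ∈ (PP p q lam w).roots, ‖r‖ ≠ 1 := by
    intro w hw r hr habs
    have h0 : Polynomial.eval r (PP p q lam w) = 0 :=
      (Polynomial.mem_roots (PP_ne_zero p q hp lam hlmp w)).mp hr
    exact hPne w hw r habs h0
  -- root counting function
  set Nc : ℂ → ℕ := fun w =>
    Multiset.card ((PP p q lam w).roots.filter (fun r => ‖r‖ < 1)) with hNcdef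
  -- integrability
  have hint : ∀ w ∈ Sphᶜ, CircleIntegrable (fun κ =>
      Polynomial.eval κ (Polynomial.derivative (PP p q lam w)) /
        Polynomial.eval κ (PP p q lam w)) 0 1 := by
    intro w hw
    apply ContinuousOn.circleIntegrable zero_le_one
    apply ContinuousOn.div
    · exact (Polynomial.continuous _).continuousOn
    · exact (Polynomial.continuous _).continuousOn
    · intro κ hκ
      exact hPne w hw κ (by rwa [Metric.mem_sphere, Complex.dist_eq, sub_zero] at hκ)
  -- the argument-principle identity
  have hI : ∀ w ∈ Sphᶜ, (∮ κ in C(0,1),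
      Polynomial.eval κ (Polynomial.derivative (PP p q lam w)) /
        Polynomial.eval κ (PP p q lam w))
      = 2 * Real.pi * Complex.I * (Nc w : ℂ) := by
    intro w hw
    have heq : Set.EqOn (fun κ =>
        Polynomial.eval κ (Polynomial.derivative (PP p q lam w)) /
          Polynomial.eval κ (PP p q lam w))
        (fun κ => (((PP p q lam w).roots).map fun r => (κ - r)⁻¹).sum)
        (Metric.sphere (0:ℂ) 1) := by
      intro κ hκ
      have hκ1 : ‖κ‖ = 1 := by
        rwa [Metric.mem_sphere, Complex.dist_eq, sub_zero] at hκ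
      have hkr : ∀ r ∈ (PP p q lam w).roots, κ ≠ r := by
        intro r hr h
        exact hroots w hw r hr (h ▸ hκ1)
      have hld := logderiv_eval ((PP p q lam w).roots) ((PP p q lam w).leadingCoeff) κ hkr
      have hfact := Polynomial.Splits.eq_prod_roots
        (IsAlgClosed.splits (PP p q lam w))
      rw [← hfact] at hld
      simp only
      rw [hld, mul_comm, mul_div_assoc, div_self (hPne w hw κ hκ1), mul_one]
    rw [circleIntegral.integral_congr zero_le_one heq]
    exact integral_sumInv _ (hroots w hw)
  -- bounds on the fixed polynomial data
  obtain ⟨CB, hCB0, hCB⟩ : ∃ CB : ℝ, 0 ≤ CB ∧ ∀ κ ∈ Metric.sphere (0:ℂ) 1,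
      ‖κ * Polynomial.eval κ (Polynomial.derivative (PA p lam q))
        - (p:ℂ) * Polynomial.eval κ (PA p lam q)‖ ≤ CB := by
    obtain ⟨x, -, hx⟩ := (isCompact_sphere (0:ℂ) 1).exists_isMaxOn ⟨1, by simp⟩
      (continuous_norm.comp ((continuous_id.mul
        (Polynomial.continuous (Polynomial.derivative (PA p lam q)))).sub
        (continuous_const.mul (Polynomial.continuous (PA p lam q))))).continuousOn
    exact ⟨_ ⊔ 0, le_max_right _ _, fun κ hκ => le_trans (hx hκ) (le_max_left _ _)⟩
  obtain ⟨CA, hCA0, hCA⟩ : ∃ CA : ℝ, 0 ≤ CA ∧ ∀ κ ∈ Metric.sphere (0:ℂ) 1,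
      ‖Polynomial.eval κ (PA p lam q)‖ ≤ CA := by
    obtain ⟨x, -, hx⟩ := (isCompact_sphere (0:ℂ) 1).exists_isMaxOn ⟨1, by simp⟩
      (continuous_norm.comp (Polynomial.continuous (PA p lam q))).continuousOn
    exact ⟨_ ⊔ 0, le_max_right _ _, fun κ hκ => le_trans (hx hκ) (le_max_left _ _)⟩
  have hCB1 : (0:ℝ) < CB + 1 := by linarith
  -- the integer-gap principle
  have hgap : ∀ n1 n2 : ℕ, ‖(2 * Real.pi * Complex.I * (n1:ℂ))
      - 2 * Real.pi * Complex.I * (n2:ℂ)‖ ≤ 2 * Real.pi * 1 * (CB/(CB+1)) → n1 = n2 := by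
    intro n1 n2 h
    have habsI : ‖2 * (Real.pi:ℂ) * Complex.I‖ = 2 * Real.pi := by
      rw [norm_mul, norm_mul, Complex.norm_two, Complex.norm_I, mul_one, Complex.norm_real, Real.norm_eq_abs,
        abs_of_pos Real.pi_pos]
    have hrw : ‖(2 * Real.pi * Complex.I * (n1:ℂ)) - 2 * Real.pi * Complex.I * (n2:ℂ)‖
        = 2 * Real.pi * |(n1:ℝ) - (n2:ℝ)| := by
      rw [← mul_sub, norm_mul, habsI]
      congr 1
      rw [show ((n1:ℂ) - (n2:ℂ)) = (((n1:ℝ) - (n2:ℝ) : ℝ) : ℂ) by push_cast; ring,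
        Complex.norm_real, Real.norm_eq_abs]
    rw [hrw] at h
    have hlt : 2 * Real.pi * |(n1:ℝ) - (n2:ℝ)| < 2 * Real.pi * 1 := by
      have : CB/(CB+1) < 1 := by rw [div_lt_one hCB1]; linarith
      calc 2 * Real.pi * |(n1:ℝ) - (n2:ℝ)| ≤ 2 * Real.pi * 1 * (CB/(CB+1)) := h
      _ < 2 * Real.pi * 1 := by
        rw [mul_one]
        nlinarith [Real.pi_pos]
    have hfin : |(n1:ℝ) - (n2:ℝ)| < 1 := by
      have h2π : (0:ℝ) < 2 * Real.pi := by positivity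
      nlinarith
    have h3 : |(((n1:ℤ) - (n2:ℤ) : ℤ) : ℝ)| < 1 := by push_cast; exact hfin
    have h4 : |((n1:ℤ) - (n2:ℤ))| < 1 := by exact_mod_cast h3
    rw [abs_lt] at h4
    omega
  -- local constancy
  have hlocal : ∀ w1 ∈ Sphᶜ, ∀ w2 ∈ Sphᶜ,
      dist w2 w1 < min (Metric.infDist w1 Sph / 2)
        ((Metric.infDist w1 Sph)^2/(2*(CB+1))) → Nc w2 = Nc w1 := by
    intro w1 h1 w2 h2 hd12
    have hd1 : 0 < Metric.infDist w1 Sph := hdist w1 h1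
    have hd2 : Metric.infDist w1 Sph / 2 ≤ Metric.infDist w2 Sph := by
      have hle := Metric.infDist_le_infDist_add_dist (x := w1) (y := w2) (s := Sph)
      have hd' : dist w2 w1 < Metric.infDist w1 Sph / 2 :=
        lt_of_lt_of_le hd12 (min_le_left _ _)
      rw [dist_comm] at hd'
      linarith
    have hnum : ‖w1 - w2‖ ≤ (Metric.infDist w1 Sph)^2/(2*(CB+1)) := by
      have h' := lt_of_lt_of_le hd12 (min_le_right _ _)
      rw [dist_comm, Complex.dist_eq] at h'
      exact le_of_lt h'
    have hptw : ∀ κ ∈ Metric.sphere (0:ℂ) 1,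
        ‖Polynomial.eval κ (Polynomial.derivative (PP p q lam w1)) /
            Polynomial.eval κ (PP p q lam w1)
          - Polynomial.eval κ (Polynomial.derivative (PP p q lam w2)) /
            Polynomial.eval κ (PP p q lam w2)‖ ≤ CB/(CB+1) := by
      intro κ hκ
      have hκ1 : ‖κ‖ = 1 := by
        rwa [Metric.mem_sphere, Complex.dist_eq, sub_zero] at hκ
      have hne1 : w1 * κ^p - Polynomial.eval κ (PA p lam q) ≠ 0 := by
        rw [← PP_eval p q lam w1 κ]; exact hPne w1 h1 κ hκ1
      have hne2 : w2 * κ^p - Polynomial.eval κ (PA p lam q) ≠ 0 := by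
        rw [← PP_eval p q lam w2 κ]; exact hPne w2 h2 κ hκ1
      rw [PP_eval p q lam w1 κ, PP_eval p q lam w2 κ, PP_deriv_eval, PP_deriv_eval,
        phidiff_scalar p hp w1 w2 κ _ _ hne1 hne2]
      rw [norm_div, norm_mul, norm_mul, norm_mul, norm_pow, hκ1, one_pow,
        mul_one]
      have hb := hCB κ hκ
      have hP1 : Metric.infDist w1 Sph
          ≤ ‖w1 * κ^p - Polynomial.eval κ (PA p lam q)‖ := by
        rw [← PP_eval p q lam w1 κ]; exact hlow w1 h1 κ hκ1
      have hP2 : Metric.infDist w1 Sph / 2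
          ≤ ‖w2 * κ^p - Polynomial.eval κ (PA p lam q)‖ := by
        rw [← PP_eval p q lam w2 κ]; exact le_trans hd2 (hlow w2 h2 κ hκ1)
      set d1 := Metric.infDist w1 Sph
      have heq : (d1^2/(2*(CB+1)) * CB)/(d1 * (d1/2)) = CB/(CB+1) := by
        field_simp
      rw [← heq]
      apply div_le_div₀ (by positivity)
      · exact mul_le_mul hnum hb (by positivity) (by positivity)
      · positivity
      · exact mul_le_mul hP1 hP2 (by positivity) (norm_nonneg _)
    have hII := circleIntegral.norm_integral_le_of_norm_le_const zero_le_one hptw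
    rw [circleIntegral.integral_sub (hint w1 h1) (hint w2 h2), hI w1 h1, hI w2 h2] at hII
    exact (hgap (Nc w1) (Nc w2) hII).symm
  -- value for large |w|
  have hlarge : ∀ w ∈ Sphᶜ, CA + CB + 1 ≤ ‖w‖ → Nc w = p := by
    intro w hw hwbig
    have hintκ : CircleIntegrable (fun κ : ℂ => (p:ℂ) * κ⁻¹) 0 1 := by
      apply ContinuousOn.circleIntegrable zero_le_one
      apply ContinuousOn.mul continuousOn_const
      apply ContinuousOn.inv₀ continuousOn_id
      intro κ hκ h0
      have hk0 : κ = 0 := h0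
      rw [hk0] at hκ
      simp [Metric.mem_sphere] at hκ
    have hptw : ∀ κ ∈ Metric.sphere (0:ℂ) 1,
        ‖Polynomial.eval κ (Polynomial.derivative (PP p q lam w)) /
            Polynomial.eval κ (PP p q lam w) - (p:ℂ) * κ⁻¹‖ ≤ CB/(CB+1) := by
      intro κ hκ
      have hκ1 : ‖κ‖ = 1 := by
        rwa [Metric.mem_sphere, Complex.dist_eq, sub_zero] at hκ
      have hκ0 : κ ≠ 0 := by intro h; rw [h] at hκ1; simp at hκ1
      have hne : w * κ^p - Polynomial.eval κ (PA p lam q) ≠ 0 := by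
        rw [← PP_eval p q lam w κ]; exact hPne w hw κ hκ1
      rw [PP_eval p q lam w κ, PP_deriv_eval, phibase_scalar p hp w κ _ _ hκ0 hne]
      rw [norm_neg, norm_div, norm_mul, hκ1, one_mul]
      have hb := hCB κ hκ
      have hPbig : CB + 1 ≤ ‖w * κ^p - Polynomial.eval κ (PA p lam q)‖ := by
        have h1 : ‖w * κ^p‖ = ‖w‖ := by
          rw [norm_mul, norm_pow, hκ1, one_pow, mul_one]
        have h2 := hCA κ hκ
        calc CB + 1 ≤ ‖w‖ - CA := by linarith
        _ ≤ ‖w * κ^p‖ - ‖Polynomial.eval κ (PA p lam q)‖ := by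
          rw [h1]; linarith
        _ ≤ ‖w * κ^p - Polynomial.eval κ (PA p lam q)‖ := by
          have hnorm := norm_sub_norm_le (w * κ^p) (Polynomial.eval κ (PA p lam q))
          linarith
      apply div_le_div₀ hCB0 hb hCB1 hPbig
    have hII := circleIntegral.norm_integral_le_of_norm_le_const zero_le_one hptw
    rw [circleIntegral.integral_sub (hint w hw) hintκ, hI w hw] at hII
    have hκint : (∮ κ in C(0,1), (p:ℂ) * κ⁻¹) = 2 * Real.pi * Complex.I * (p:ℂ) := by
      rw [circleIntegral.integral_const_mul]
      have h0 : (∮ κ in C(0,1), κ⁻¹) = 2 * Real.pi * Complex.I := by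
        have := integral_inv_inside 0 (by simp)
        simpa using this
      rw [h0]; ring
    rw [hκint] at hII
    exact hgap (Nc w) p hII
  -- constancy on the connected component
  set U := connectedComponentIn Sphᶜ z with hUdef
  have hUsub : U ⊆ Sphᶜ := connectedComponentIn_subset _ _
  have hzU : z ∈ U := mem_connectedComponentIn hzS
  have hUconn : IsPreconnected U :=
    (isConnected_connectedComponentIn_iff.mpr hzS).isPreconnected
  have hconst : ∀ w ∈ U, Nc w = Nc z := by
    haveI : PreconnectedSpace U := Subtype.preconnectedSpace hUconn
    have hlc : IsLocallyConstant (fun u : U => Nc u) := by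
      rw [IsLocallyConstant.iff_exists_open]
      rintro ⟨w, hw⟩
      set ε := min (Metric.infDist w Sph / 2) ((Metric.infDist w Sph)^2/(2*(CB+1))) with hεdef
      have hε : 0 < ε := by
        have := hdist w (hUsub hw)
        apply lt_min (by positivity) (by positivity)
      refine ⟨Subtype.val ⁻¹' Metric.ball w ε,
        (Metric.isOpen_ball).preimage continuous_subtype_val, by simpa [Metric.mem_ball] using hε, ?_⟩
      rintro ⟨y, hy⟩ hmem
      simp only [Set.mem_preimage, Metric.mem_ball] at hmem
      exact hlocal w (hUsub hw) y (hUsub hy) hmem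
    intro w hw
    exact hlc.apply_eq_of_preconnectedSpace ⟨w, hw⟩ ⟨z, hzU⟩
  -- find a large point in U
  have hNzp : Nc z = p := by
    have hnb : ¬ ∃ r, U ⊆ Metric.closedBall 0 r := by
      rw [← Metric.isBounded_iff_subset_closedBall 0]
      exact hz2
    push_neg at hnb
    obtain ⟨w, hwU, hwnot⟩ := Set.not_subset.mp (hnb (CA + CB + 1))
    have hwbig : CA + CB + 1 ≤ ‖w‖ := by
      rw [Metric.mem_closedBall, Complex.dist_eq, sub_zero] at hwnot
      linarith [not_le.mp hwnot]
    rw [← hconst w hwU]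
    exact hlarge w (hUsub hwU) hwbig
  -- charpoly computation
  have hMeq : M z = Matrix.of (fun i j : Fin (p+q) => if (i:ℕ) = 0 then
      ((lam (q:ℤ))⁻¹ * ((if ((q:ℤ)-1-((j:ℕ):ℤ)) = 0 then z else 0)
        - lam ((q:ℤ)-1-((j:ℕ):ℤ)))) else if (i:ℕ) = (j:ℕ)+1 then 1 else 0) := by
    ext i j
    rw [hM z i j, Matrix.of_apply]
    by_cases h : (i:ℕ) = 0
    · rw [if_pos h, if_pos h, hΛ, hΛ]
      have hq0 : ¬((q:ℤ) = 0) := by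
        have hq' : q ≠ 0 := by omega
        exact_mod_cast hq'
      rw [if_neg hq0, zero_sub, inv_neg]
      ring
    · rw [if_neg h, if_neg h]
  have hcharp : (M z).charpoly = C ((-(lam (q:ℤ)))⁻¹) * PP p q lam z := by
    rw [hMeq, companion_charpoly' (p+q) (by omega) _]
    exact charpoly_sum_eq p q hp hq lam hlq z
  have hrootsEq : (M z).charpoly.roots = (PP p q lam z).roots := by
    rw [hcharp]
    exact Polynomial.roots_C_mul _ (inv_ne_zero (neg_ne_zero.mpr hlq))
  refine ⟨?_, ?_, ?_⟩
  · intro κ hκ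
    rw [hrootsEq] at hκ
    exact hroots z hzS κ hκ
  · rw [hrootsEq]
    have hfe : (PP p q lam z).roots.filter (fun κ => ‖κ‖ < 1 ∧ κ ≠ 0)
        = (PP p q lam z).roots.filter (fun r => ‖r‖ < 1) := by
      apply Multiset.filter_congr
      intro r hr
      constructor
      · exact fun h => h.1
      · intro h
        refine ⟨h, fun h0 => ?_⟩
        exact PP_zero_not_root p q hp lam hlmp z (h0 ▸ hr)
    rw [hfe]
    exact hNzp
  · rw [hrootsEq]
    have hcard := PP_roots_card p q hq lam hlq z
    have hsplit := Multiset.filter_add_not (fun r => ‖r‖ < 1) (PP p q lam z).roots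
    have hfe2 : (PP p q lam z).roots.filter (fun r => ¬ ‖r‖ < 1)
        = (PP p q lam z).roots.filter (fun κ => 1 < ‖κ‖) := by
      apply Multiset.filter_congr
      intro r hr
      constructor
      · intro h
        exact lt_of_le_of_ne (not_lt.mp h) (Ne.symm (hroots z hzS r hr))
      · intro h
        exact not_lt.mpr (le_of_lt h)
    have hc := congrArg Multiset.card hsplit
    rw [Multiset.card_add, hfe2, hcard] at hc
    have hNzp' : Multiset.card ((PP p q lam z).roots.filter (fun r => ‖r‖ < 1)) = p :=
      hNzp
    omega
end

section
/- With the notation of the context, fix z ∈ ℂ. (i) If l ∈ {1,…,d} and ζ ∈ ℂ\{0} satisfies 𝓕_l(ζ) = z, then the vector R ∈ ℂ^{d(p+q)} whose blocks of size d are (ζ^{q−1} r_l, ζ^{q−2} r_l, …, ζ^{−p} r_l) satisfies M(z) R = ζ R. (ii) If for each l ∈ {1,…,d} the numbers ζ_{l,1},…,ζ_{l,p+q} are pairwise distinct nonzero solutions of 𝓕_l(κ) = z, then the d(p+q) vectors R_{l,k} with blocks (ζ_{l,k}^{q−1} r_l, …, ζ_{l,k}^{−p} r_l), for l ∈ {1,…,d}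 and k ∈ {1,…,p+q}, form a basis of ℂ^{d(p+q)}. -/
private theorem sum_reindexAux (p q : ℕ) (f : ℤ → ℂ) :
    ∑ j : Fin (p+q), f ((q:ℤ) - 1 - (j:ℕ)) = ∑ k ∈ Finset.Icc (-(p:ℤ)) ((q:ℤ)-1), f k := by
  rw [Fin.sum_univ_eq_sum_range (fun j => f ((q:ℤ)-1-(j:ℕ)))]
  refine Finset.sum_nbij' (fun i => ((q:ℤ) - 1 - (i:ℕ))) (fun k => ((q:ℤ)-1-k).toNat) ?_ ?_ ?_ ?_ ?_
  · intro a ha; simp only [Finset.mem_range] at ha; simp only [Finset.mem_Icc]; omega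
  · intro b hb; simp only [Finset.mem_Icc] at hb; simp only [Finset.mem_range]; omega
  · intro a ha; simp only [Finset.mem_range] at ha
    show ((q:ℤ)-1-((q:ℤ)-1-(a:ℕ))).toNat = a; omega
  · intro b hb; simp only [Finset.mem_Icc] at hb
    show (q:ℤ)-1-(((q:ℤ)-1-b).toNat : ℕ) = b; omega
  · intro a ha; rfl


theorem stmt8 (d p q : ℕ) (hd : 1 ≤ d) (hp : 1 ≤ p) (hq : 1 ≤ q)
    (P : Matrix (Fin d) (Fin d) ℂ) (hP : IsUnit P)
    (A : ℤ → Matrix (Fin d) (Fin d) ℂ) (lam : Fin d → ℤ → ℂ)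
    (hdiag : ∀ k : ℤ, -(p : ℤ) ≤ k → k ≤ (q : ℤ) →
      P⁻¹ * A k * P = Matrix.diagonal (fun l => lam l k))
    (hAq : IsUnit (A (q : ℤ))) (hAmp : IsUnit (A (-(p : ℤ))))
    (𝔸 : ℤ → ℂ → Matrix (Fin d) (Fin d) ℂ)
    (h𝔸 : ∀ (k : ℤ) (z : ℂ),
      𝔸 k z = (if k = 0 then z else 0) • (1 : Matrix (Fin d) (Fin d) ℂ) - A k)
    (M : ℂ → Matrix (Fin (p + q) × Fin d) (Fin (p + q) × Fin d) ℂ)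
    (hM : ∀ (z : ℂ) (i : Fin (p + q)) (a : Fin d) (j : Fin (p + q)) (b : Fin d),
      M z (i, a) (j, b) =
        if (i : ℕ) = 0 then (-((𝔸 (q : ℤ) z)⁻¹ * 𝔸 ((q : ℤ) - 1 - (j : ℕ)) z)) a b
        else if (i : ℕ) = (j : ℕ) + 1 then (if a = b then 1 else 0) else 0)
    (F : Fin d → ℂ → ℂ)
    (hF : ∀ (l : Fin d) (κ : ℂ), F l κ = ∑ k ∈ Finset.Icc (-(p : ℤ)) (q : ℤ), lam l k * κ ^ k)
    (z : ℂ) :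
    (∀ (l : Fin d) (ζ : ℂ), ζ ≠ 0 → F l ζ = z →
      (M z).mulVec (fun ia : Fin (p + q) × Fin d => ζ ^ ((q : ℤ) - 1 - (ia.1 : ℕ)) * P ia.2 l) =
        ζ • (fun ia : Fin (p + q) × Fin d => ζ ^ ((q : ℤ) - 1 - (ia.1 : ℕ)) * P ia.2 l)) ∧
    (∀ ζ : Fin d → Fin (p + q) → ℂ,
      (∀ l k, ζ l k ≠ 0) → (∀ l k, F l (ζ l k) = z) → (∀ l, Function.Injective (ζ l)) →
      LinearIndependent ℂ (fun lk : Fin d × Fin (p + q) =>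
        (fun ia : Fin (p + q) × Fin d =>
          (ζ lk.1 lk.2) ^ ((q : ℤ) - 1 - (ia.1 : ℕ)) * P ia.2 lk.1)) ∧
      Submodule.span ℂ (Set.range (fun lk : Fin d × Fin (p + q) =>
        (fun ia : Fin (p + q) × Fin d =>
          (ζ lk.1 lk.2) ^ ((q : ℤ) - 1 - (ia.1 : ℕ)) * P ia.2 lk.1))) = ⊤) := by

  classical
  have hPdet : IsUnit P.det := (Matrix.isUnit_iff_isUnit_det P).mp hP
  have hPPinv : P * P⁻¹ = 1 := Matrix.mul_nonsing_inv P hPdet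
  have hPinvP : P⁻¹ * P = 1 := Matrix.nonsing_inv_mul P hPdet
  have hAP : ∀ k : ℤ, -(p:ℤ) ≤ k → k ≤ (q:ℤ) → ∀ l,
      (A k).mulVec (fun a => P a l) = fun a => lam l k * P a l := by
    intro k h1 h2 l
    have h := hdiag k h1 h2
    have h2' : A k * P = P * Matrix.diagonal (fun l => lam l k) := by
      calc A k * P = P * (P⁻¹ * A k * P) := by
            rw [← Matrix.mul_assoc, ← Matrix.mul_assoc, hPPinv, Matrix.one_mul]
        _ = _ := by rw [h]
    funext a
    have h3 := congrFun (congrFun h2' a) l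
    rw [Matrix.mul_apply, Matrix.mul_diagonal] at h3
    simpa [Matrix.mulVec, dotProduct, mul_comm] using h3
  have hlamq : ∀ l, lam l (q:ℤ) ≠ 0 := by
    have hdq := hdiag (q:ℤ) (by omega) le_rfl
    have hdet := congrArg Matrix.det hdq
    rw [Matrix.det_mul, Matrix.det_mul, Matrix.det_diagonal] at hdet
    have h1 : (∏ l, lam l (q:ℤ)) ≠ 0 := by
      rw [← hdet]
      exact mul_ne_zero (mul_ne_zero
        (isUnit_iff_ne_zero.mp (Matrix.isUnit_nonsing_inv_det P hPdet))
        (isUnit_iff_ne_zero.mp ((Matrix.isUnit_iff_isUnit_det _).mp hAq)))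
        (isUnit_iff_ne_zero.mp hPdet)
    intro l h
    exact h1 (Finset.prod_eq_zero (Finset.mem_univ l) h)
  -- action of 𝔸 k z on columns of P
  have h𝔸mul : ∀ k : ℤ, -(p:ℤ) ≤ k → k ≤ (q:ℤ) → ∀ l,
      (𝔸 k z).mulVec (fun a => P a l)
        = fun a => ((if k = 0 then z else 0) - lam l k) * P a l := by
    intro k h1 h2 l
    rw [h𝔸, Matrix.sub_mulVec, Matrix.smul_mulVec, Matrix.one_mulVec, hAP k h1 h2 l]
    funext a
    by_cases hk : k = 0 <;> simp [hk, sub_mul, smul_eq_mul]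
  have hqne : (q:ℤ) ≠ 0 := by omega
  have h𝔸qz : 𝔸 (q:ℤ) z = -(A (q:ℤ)) := by
    rw [h𝔸, if_neg hqne]; simp
  have hAqz_unit : IsUnit (𝔸 (q:ℤ) z) := h𝔸qz ▸ hAq.neg
  have hAqzdet : IsUnit (𝔸 (q:ℤ) z).det := (Matrix.isUnit_iff_isUnit_det _).mp hAqz_unit
  have hinvmul : (𝔸 (q:ℤ) z)⁻¹ * (𝔸 (q:ℤ) z) = 1 := Matrix.nonsing_inv_mul _ hAqzdet
  have hinvr : ∀ l, (𝔸 (q:ℤ) z)⁻¹.mulVec (fun a => P a l)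
      = fun a => -(lam l (q:ℤ))⁻¹ * P a l := by
    intro l
    have h1 : (𝔸 (q:ℤ) z).mulVec (fun a => -(lam l (q:ℤ))⁻¹ * P a l) = fun a => P a l := by
      have h2 : (fun a => -(lam l (q:ℤ))⁻¹ * P a l)
          = (-(lam l (q:ℤ))⁻¹) • (fun a => P a l) := by
        funext a; simp [smul_eq_mul]
      rw [h2, Matrix.mulVec_smul, h𝔸mul (q:ℤ) (by omega) le_rfl l]
      funext a
      simp only [Pi.smul_apply, smul_eq_mul, if_neg hqne]
      field_simp
      rw [zero_sub, neg_mul, neg_div, neg_neg]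
      exact mul_div_cancel_left₀ _ (hlamq l)
    calc (𝔸 (q:ℤ) z)⁻¹.mulVec (fun a => P a l)
        = (𝔸 (q:ℤ) z)⁻¹.mulVec ((𝔸 (q:ℤ) z).mulVec (fun a => -(lam l (q:ℤ))⁻¹ * P a l)) := by
          rw [h1]
      _ = ((𝔸 (q:ℤ) z)⁻¹ * (𝔸 (q:ℤ) z)).mulVec (fun a => -(lam l (q:ℤ))⁻¹ * P a l) :=
          Matrix.mulVec_mulVec _ _ _
      _ = _ := by rw [hinvmul, Matrix.one_mulVec]
  -- first-row block action
  have hNr : ∀ l, ∀ k : ℤ, -(p:ℤ) ≤ k → k ≤ (q:ℤ) →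
      (-((𝔸 (q:ℤ) z)⁻¹ * 𝔸 k z)).mulVec (fun a => P a l)
        = fun a => ((if k = 0 then z else 0) - lam l k) * (lam l (q:ℤ))⁻¹ * P a l := by
    intro l k h1 h2
    rw [Matrix.neg_mulVec, ← Matrix.mulVec_mulVec, h𝔸mul k h1 h2 l]
    have h3 : (fun a => ((if k = 0 then z else 0) - lam l k) * P a l)
        = ((if k = 0 then z else 0) - lam l k) • (fun a => P a l) := by
      funext a; simp [smul_eq_mul]
    rw [h3, Matrix.mulVec_smul, hinvr l]
    funext a
    simp only [Pi.neg_apply, Pi.smul_apply, smul_eq_mul]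
    ring
  -- the key Icc computation
  have hIcc : ∀ (l : Fin d) (ζ : ℂ), ζ ≠ 0 → F l ζ = z →
      ∑ k ∈ Finset.Icc (-(p:ℤ)) ((q:ℤ)-1), ζ ^ k * ((if k = 0 then z else 0) - lam l k)
        = lam l (q:ℤ) * ζ ^ (q:ℤ) := by
    intro l ζ hζ hFz
    have hsplit : Finset.Icc (-(p:ℤ)) (q:ℤ)
        = insert (q:ℤ) (Finset.Icc (-(p:ℤ)) ((q:ℤ)-1)) := by
      ext k; simp only [Finset.mem_Icc, Finset.mem_insert]; omega
    have hnm : (q:ℤ) ∉ Finset.Icc (-(p:ℤ)) ((q:ℤ)-1) := by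
      simp only [Finset.mem_Icc]; omega
    have hFs : z = (∑ k ∈ Finset.Icc (-(p:ℤ)) ((q:ℤ)-1), lam l k * ζ ^ k)
        + lam l (q:ℤ) * ζ ^ (q:ℤ) := by
      rw [← hFz, hF, hsplit, Finset.sum_insert hnm]; ring
    have hsum1 : ∑ k ∈ Finset.Icc (-(p:ℤ)) ((q:ℤ)-1), ζ ^ k * (if k = 0 then z else 0) = z := by
      rw [Finset.sum_eq_single (0:ℤ)]
      · simp
      · intro k _ hk; simp [hk]
      · intro h; exact absurd (by simp only [Finset.mem_Icc]; omega) h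
    have : ∑ k ∈ Finset.Icc (-(p:ℤ)) ((q:ℤ)-1), ζ ^ k * ((if k = 0 then z else 0) - lam l k)
        = (∑ k ∈ Finset.Icc (-(p:ℤ)) ((q:ℤ)-1), ζ ^ k * (if k = 0 then z else 0))
          - ∑ k ∈ Finset.Icc (-(p:ℤ)) ((q:ℤ)-1), lam l k * ζ ^ k := by
      rw [← Finset.sum_sub_distrib]
      exact Finset.sum_congr rfl fun k _ => by ring
    rw [this, hsum1]
    linear_combination hFs
  constructor
  · intro l ζ hζ hFz
    funext ia
    obtain ⟨i, a⟩ := ia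
    have lhs : (M z).mulVec (fun ia : Fin (p + q) × Fin d =>
        ζ ^ ((q : ℤ) - 1 - (ia.1 : ℕ)) * P ia.2 l) (i, a)
        = ∑ jb : Fin (p+q) × Fin d, M z (i,a) jb * (ζ ^ ((q:ℤ)-1-(jb.1:ℕ)) * P jb.2 l) := rfl
    rw [lhs, Fintype.sum_prod_type]
    simp only [Pi.smul_apply, smul_eq_mul]
    by_cases hi : (i : ℕ) = 0
    · have step : ∀ j : Fin (p+q),
          ∑ b : Fin d, M z (i,a) (j,b) * (ζ ^ ((q:ℤ)-1-(j:ℕ)) * P b l)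
          = (ζ ^ ((q:ℤ)-1-(j:ℕ))
              * ((if ((q:ℤ)-1-(j:ℕ)) = 0 then z else 0) - lam l ((q:ℤ)-1-(j:ℕ))))
              * ((lam l (q:ℤ))⁻¹ * P a l) := by
        intro j
        have hk1 : -(p:ℤ) ≤ (q:ℤ)-1-(j:ℕ) := by have := j.isLt; omega
        have hk2 : (q:ℤ)-1-(j:ℕ) ≤ (q:ℤ) := by omega
        have hvr := congrFun (hNr l ((q:ℤ)-1-(j:ℕ)) hk1 hk2) a
        have hvr' : ∑ b : Fin d, (-((𝔸 (q:ℤ) z)⁻¹ * 𝔸 ((q:ℤ)-1-(j:ℕ)) z)) a b * P b l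
            = ((if ((q:ℤ)-1-(j:ℕ)) = 0 then z else 0) - lam l ((q:ℤ)-1-(j:ℕ)))
              * (lam l (q:ℤ))⁻¹ * P a l := hvr
        calc ∑ b : Fin d, M z (i,a) (j,b) * (ζ ^ ((q:ℤ)-1-(j:ℕ)) * P b l)
            = ζ ^ ((q:ℤ)-1-(j:ℕ))
              * ∑ b : Fin d, (-((𝔸 (q:ℤ) z)⁻¹ * 𝔸 ((q:ℤ)-1-(j:ℕ)) z)) a b * P b l := by
              rw [Finset.mul_sum]
              refine Finset.sum_congr rfl fun b _ => ?_
              rw [hM z i a j b, if_pos hi]; ring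
          _ = _ := by rw [hvr']; ring
      rw [Finset.sum_congr rfl fun j _ => step j, ← Finset.sum_mul,
        sum_reindexAux p q (fun k => ζ ^ k * ((if k = 0 then z else 0) - lam l k)),
        hIcc l ζ hζ hFz]
      have hz1 : ζ ^ (q:ℤ) = ζ * ζ ^ ((q:ℤ)-1) := by
        rw [show (q:ℤ) = ((q:ℤ)-1)+1 by ring, zpow_add_one₀ hζ]
        ring_nf
      rw [hi]
      push_cast
      rw [hz1]
      field_simp [hlamq l]
      ring
    · have hi1 : 1 ≤ (i:ℕ) := by omega
      set j0 : Fin (p+q) := ⟨(i:ℕ)-1, by omega⟩ with hj0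
      rw [Finset.sum_eq_single j0]
      · have hcond : (i:ℕ) = (j0:ℕ) + 1 := by simp [hj0]; omega
        have hstep : ∀ b : Fin d, M z (i,a) (j0,b) = if a = b then 1 else 0 := by
          intro b; rw [hM z i a j0 b, if_neg hi, if_pos hcond]
        simp only [hstep]
        rw [Finset.sum_eq_single a]
        · have hexp : (q:ℤ)-1-((j0:ℕ):ℤ) = 1 + ((q:ℤ)-1-(i:ℕ)) := by
            have : ((j0:ℕ):ℤ) = (i:ℕ) - 1 := by simp [hj0]; omega
            rw [this]; ring
          rw [if_pos rfl, hexp, zpow_add₀ hζ, zpow_one]; ring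
        · intro b _ hb; rw [if_neg (Ne.symm hb), zero_mul]
        · intro h; exact absurd (Finset.mem_univ a) h
      · intro j _ hj
        have hcond : (i:ℕ) ≠ (j:ℕ) + 1 := by
          intro h; apply hj; apply Fin.ext; simp [hj0]; omega
        have hstep : ∀ b : Fin d, M z (i,a) (j,b) = 0 := by
          intro b; rw [hM z i a j b, if_neg hi, if_neg hcond]
        simp [hstep]
      · intro h; exact absurd (Finset.mem_univ j0) h
  · intro ζv hne hFv hinj
    have hNE : Nonempty (Fin d × Fin (p + q)) := ⟨⟨⟨0, hd⟩, ⟨0, by omega⟩⟩⟩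
    have hli : LinearIndependent ℂ (fun lk : Fin d × Fin (p + q) =>
        (fun ia : Fin (p + q) × Fin d =>
          (ζv lk.1 lk.2) ^ ((q : ℤ) - 1 - (ia.1 : ℕ)) * P ia.2 lk.1)) := by
      rw [Fintype.linearIndependent_iff]
      intro g hg
      have hg' : ∀ (i : Fin (p+q)) (a : Fin d),
          ∑ lk : Fin d × Fin (p + q),
            g lk * ((ζv lk.1 lk.2) ^ ((q:ℤ)-1-(i:ℕ)) * P a lk.1) = 0 := by
        intro i a
        have := congrFun hg (i, a)
        simpa [Finset.sum_apply, Pi.smul_apply, smul_eq_mul] using this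
      have key : ∀ (l : Fin d) (i : Fin (p+q)),
          ∑ k : Fin (p+q), g (l, k) * (ζv l k) ^ ((q:ℤ)-1-(i:ℕ)) = 0 := by
        intro l i
        set u : Fin d → ℂ := fun l' => ∑ k : Fin (p+q),
          g (l', k) * (ζv l' k) ^ ((q:ℤ)-1-(i:ℕ)) with hu
        have hPu : P.mulVec u = 0 := by
          funext a
          have h1 := hg' i a
          rw [Fintype.sum_prod_type] at h1
          show ∑ l', P a l' * u l' = 0
          rw [← h1]
          refine Finset.sum_congr rfl fun l' _ => ?_
          rw [hu, Finset.mul_sum]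
          refine Finset.sum_congr rfl fun k _ => ?_
          ring
        have hu0 : u = 0 := by
          have h2 := congrArg (P⁻¹.mulVec) hPu
          rwa [Matrix.mulVec_mulVec, hPinvP, Matrix.one_mulVec, Matrix.mulVec_zero] at h2
        exact congrFun hu0 l
      intro lk
      obtain ⟨l, k⟩ := lk
      have hvz : (fun k : Fin (p+q) => g (l, k) * (ζv l k) ^ ((q:ℤ)-1)) = 0 := by
        apply Matrix.eq_zero_of_forall_pow_sum_mul_pow_eq_zero
          (f := fun k : Fin (p+q) => (ζv l k)⁻¹)
        · intro k1 k2 h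
          exact hinj l (inv_injective h)
        · intro i
          have h3 := key l i
          calc ∑ k : Fin (p+q), (g (l, k) * (ζv l k) ^ ((q:ℤ)-1)) * ((ζv l k)⁻¹) ^ (i:ℕ)
              = ∑ k : Fin (p+q), g (l, k) * (ζv l k) ^ ((q:ℤ)-1-(i:ℕ)) := by
                refine Finset.sum_congr rfl fun k _ => ?_
                have hx : (ζv l k) ^ ((q:ℤ)-1-(i:ℕ))
                    = (ζv l k) ^ ((q:ℤ)-1) * ((ζv l k)⁻¹) ^ (i:ℕ) := by
                  rw [zpow_sub₀ (hne l k), div_eq_mul_inv, ← inv_zpow, zpow_natCast]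
                rw [hx]; ring
            _ = 0 := h3
      have h4 := congrFun hvz k
      have h5 : (ζv l k) ^ ((q:ℤ)-1) ≠ 0 := zpow_ne_zero _ (hne l k)
      have h6 : g (l, k) * (ζv l k) ^ ((q:ℤ)-1) = 0 := h4
      rcases mul_eq_zero.mp h6 with h | h
      · exact h
      · exact absurd h h5
    refine ⟨hli, hli.span_eq_top_of_card_eq_finrank ?_⟩
    rw [Module.finrank_pi]
    simp [Fintype.card_prod, mul_comm]
end

section
/- With the notation of the context, fix z ∈ ℂ and assume that for each l ∈ {1,…,d} the equation 𝓕_l(κ) = z has p+q pairwise distinct nonzero solutions ζ_{l,1},…,ζ_{l,p+q}, so that the vectors R_{l,k} ∈ ℂ^{d(p+q)} with blocks (ζ_{l,k}^{q−1} r_l, …, ζ_{l,k}^{−p} r_l) form a basis of ℂ^{d(p+q)}. Let (L_{l,k}) be the dual basis, i.e. L_{l,k}^T R_{l′,k′} = δ_{(l,k),(l′,k′)}. Then for each pair (l,k): 𝓕_l′(ζ_{l,k}) ≠ 0; writing L_{l,k} as p+q consecutive blocks of size d, each block is a scalar multiple of the vector l_l (the l-th member of the dual basis to (r_1,…,r_d),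 i.e. the l-th column of (P^{−1})^T); and the first block of L_{l,k} equals (λ_{l,q}/𝓕_l′(ζ_{l,k})) · l_l. -/
open Polynomial

lemma zpow_help (x : ℂ) (hx : x ≠ 0) (p q i : ℕ) (hi : i < p + q) :
    x ^ ((q:ℤ) - 1 - (i:ℕ)) * x ^ (p : ℕ) = x ^ (p + q - 1 - i) := by
  rw [← zpow_natCast x p, ← zpow_add₀ hx, ← zpow_natCast x (p+q-1-i)]
  congr 1; omega

lemma natDegree_lt_helper {n : ℕ} (hn : 0 < n) (c : Fin n → ℂ) :
    (∑ i : Fin n, Polynomial.C (c i) * Polynomial.X ^ (n - 1 - (i:ℕ))).natDegree < n := by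
  apply lt_of_le_of_lt (Polynomial.natDegree_sum_le_of_forall_le _ _ (n := n - 1) ?_) (by omega)
  intro i _
  apply le_trans (natDegree_C_mul_le _ _)
  simp only [Polynomial.natDegree_X_pow]; omega

lemma coeff_helper {n : ℕ} (c : Fin n → ℂ) (j : Fin n) :
    (∑ i : Fin n, Polynomial.C (c i) * Polynomial.X ^ (n - 1 - (i:ℕ))).coeff (n - 1 - (j:ℕ)) = c j := by
  rw [Polynomial.finset_sum_coeff]
  rw [Finset.sum_eq_single j]
  · simp
  · intro i _ hij
    simp only [Polynomial.coeff_C_mul, Polynomial.coeff_X_pow]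
    have hi := i.isLt; have hj := j.isLt
    rw [if_neg (fun h => hij (Fin.ext (by omega : (i:ℕ) = (j:ℕ))))]
    ring
  · simp

lemma eval_helper {n : ℕ} (c : Fin n → ℂ) (x : ℂ) :
    (∑ i : Fin n, Polynomial.C (c i) * Polynomial.X ^ (n - 1 - (i:ℕ))).eval x
      = ∑ i : Fin n, c i * x ^ (n - 1 - (i:ℕ)) := by
  simp [Polynomial.eval_finset_sum]

lemma aux_coeffs_zero {n : ℕ} (hn : 0 < n) (c : Fin n → ℂ) (pts : Fin n → ℂ)
    (hinj : Function.Injective pts)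
    (hev : ∀ j, ∑ i : Fin n, c i * pts j ^ (n-1-(i:ℕ)) = 0) : ∀ i, c i = 0 := by
  have hz : (∑ i : Fin n, C (c i) * X^(n-1-(i:ℕ))) = 0 :=
    eq_zero_of_natDegree_lt_card_of_eval_eq_zero _ hinj
      (fun j => by rw [eval_helper]; exact hev j)
      (by simpa using natDegree_lt_helper hn c)
  intro i
  have h2 := coeff_helper c i
  rw [hz] at h2; simpa using h2.symm

theorem stmt9 (d p q : ℕ) (hd : 1 ≤ d) (hp : 1 ≤ p) (hq : 1 ≤ q)
    (P : Matrix (Fin d) (Fin d) ℂ) (hP : IsUnit P)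
    (lam : Fin d → ℤ → ℂ)
    (hlq : ∀ l, lam l (q : ℤ) ≠ 0) (hlmp : ∀ l, lam l (-(p : ℤ)) ≠ 0)
    (F : Fin d → ℂ → ℂ)
    (hF : ∀ (l : Fin d) (κ : ℂ), F l κ = ∑ k ∈ Finset.Icc (-(p : ℤ)) (q : ℤ), lam l k * κ ^ k)
    (z : ℂ) (ζ : Fin d → Fin (p + q) → ℂ)
    (hζ0 : ∀ l k, ζ l k ≠ 0) (hζF : ∀ l k, F l (ζ l k) = z)
    (hinj : ∀ l, Function.Injective (ζ l))
    (R : Fin d × Fin (p + q) → Fin (p + q) × Fin d → ℂ)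
    (hR : ∀ (lk : Fin d × Fin (p + q)) (ia : Fin (p + q) × Fin d),
      R lk ia = (ζ lk.1 lk.2) ^ ((q : ℤ) - 1 - (ia.1 : ℕ)) * P ia.2 lk.1)
    (L : Fin d × Fin (p + q) → Fin (p + q) × Fin d → ℂ)
    (hdual : ∀ lk lk' : Fin d × Fin (p + q),
      (∑ x : Fin (p + q) × Fin d, L lk x * R lk' x) = if lk = lk' then 1 else 0) :
    ∀ (l : Fin d) (k : Fin (p + q)),
      deriv (F l) (ζ l k) ≠ 0 ∧
      (∀ i : Fin (p + q), ∃ c : ℂ, ∀ a : Fin d, L (l, k) (i, a) = c * P⁻¹ l a) ∧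
      (∀ i : Fin (p + q), (i : ℕ) = 0 →
        ∀ a : Fin d, L (l, k) (i, a) = (lam l (q : ℤ) / deriv (F l) (ζ l k)) * P⁻¹ l a) := by
  intro l k
  have hn0 : 0 < p + q := by omega
  -- the blocks of L, paired against columns of P
  set v : Fin d → Fin (p + q) → ℂ := fun l' i => ∑ a, L (l,k) (i,a) * P a l' with hv
  -- Step A: key evaluation identity
  have key : ∀ (l' : Fin d) (k' : Fin (p + q)),
      (∑ i : Fin (p + q), v l' i * (ζ l' k') ^ (p + q - 1 - (i:ℕ)))
        = (ζ l' k') ^ p * (if ((l,k) : Fin d × Fin (p + q)) = (l',k') then 1 else 0) := by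
    intro l' k'
    have h0 := hdual (l,k) (l',k')
    calc (∑ i : Fin (p + q), v l' i * (ζ l' k') ^ (p + q - 1 - (i:ℕ)))
        = ∑ i : Fin (p + q), ∑ a : Fin d,
            L (l,k) (i,a) * R (l',k') (i,a) * (ζ l' k') ^ (p:ℕ) := by
          apply Finset.sum_congr rfl
          intro i _
          rw [hv]
          rw [Finset.sum_mul]
          apply Finset.sum_congr rfl
          intro a _
          rw [hR]
          dsimp only
          rw [← zpow_help _ (hζ0 l' k') p q i i.isLt]
          ring
      _ = (∑ x : Fin (p + q) × Fin d, L (l,k) x * R (l',k') x) * (ζ l' k') ^ (p:ℕ) := by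
          rw [Fintype.sum_prod_type, Finset.sum_mul]
          exact Finset.sum_congr rfl fun i _ => (Finset.sum_mul _ _ _).symm
      _ = (ζ l' k') ^ p * (if ((l,k) : Fin d × Fin (p + q)) = (l',k') then 1 else 0) := by
          rw [h0]; ring
  -- Step B: blocks vanish against other columns
  have hvanish : ∀ l', l' ≠ l → ∀ i, v l' i = 0 := by
    intro l' hne
    apply aux_coeffs_zero hn0 (v l') (ζ l') (hinj l')
    intro k'
    rw [key l' k']
    rw [if_neg (by simp [Prod.ext_iff]; intro h; exact absurd h.symm hne)]
    ring
  -- derivative of F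
  have hdF : deriv (F l) (ζ l k)
      = ∑ j ∈ Finset.Icc (-(p:ℤ)) (q:ℤ), lam l j * ((j:ℂ) * (ζ l k) ^ (j-1)) := by
    have hfun : F l = fun κ => ∑ j ∈ Finset.Icc (-(p:ℤ)) (q:ℤ), lam l j * κ ^ j :=
      funext (hF l)
    have hda : HasDerivAt (F l)
        (∑ j ∈ Finset.Icc (-(p:ℤ)) (q:ℤ), lam l j * ((j:ℂ) * (ζ l k) ^ (j-1))) (ζ l k) := by
      rw [hfun]
      apply HasDerivAt.fun_sum
      intro j hj
      exact (hasDerivAt_zpow j (ζ l k) (Or.inl (hζ0 l k))).const_mul (lam l j)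
    exact hda.deriv
  -- the Lagrange denominator polynomial
  set Q : Polynomial ℂ := ∏ k' ∈ Finset.univ.erase k, (X - C (ζ l k')) with hQ
  have hQmonic : Q.Monic := monic_prod_of_monic _ _ fun _ _ => monic_X_sub_C _
  have hQdeg : Q.natDegree = p + q - 1 := by
    rw [hQ, natDegree_prod _ _ fun k' _ => X_sub_C_ne_zero (ζ l k')]
    simp [natDegree_X_sub_C, Finset.card_erase_of_mem]
  have hQek : ∀ k', k' ≠ k → Q.eval (ζ l k') = 0 := by
    intro k' hk'
    rw [hQ, eval_prod]
    exact Finset.prod_eq_zero (Finset.mem_erase.mpr ⟨hk', Finset.mem_univ _⟩) (by simp)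
  have hQk : Q.eval (ζ l k) ≠ 0 := by
    rw [hQ, eval_prod]
    apply Finset.prod_ne_zero_iff.mpr
    intro k' hk'
    simp only [eval_sub, eval_X, eval_C]
    exact sub_ne_zero.mpr fun h => (Finset.mem_erase.mp hk').1 (hinj l h).symm
  -- identify the k-th block polynomial with the Lagrange polynomial
  have hpolL : (∑ i : Fin (p+q), C (v l i) * X ^ (p + q - 1 - (i:ℕ)))
      = C ((ζ l k)^p / Q.eval (ζ l k)) * Q := by
    rw [← sub_eq_zero]
    apply eq_zero_of_natDegree_lt_card_of_eval_eq_zero _ (hinj l)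
    · intro k'
      rw [eval_sub, eval_helper, eval_mul, eval_C, key l k']
      by_cases hk' : k' = k
      · subst hk'
        rw [if_pos rfl, div_mul_cancel₀ _ hQk]
        ring
      · rw [if_neg (by simp [Prod.ext_iff]; intro h; exact absurd h.symm hk'), hQek k' hk']
        ring
    · apply lt_of_le_of_lt (natDegree_sub_le _ _)
      simp only [Fintype.card_fin]
      apply max_lt (natDegree_lt_helper hn0 (v l))
      apply lt_of_le_of_lt (natDegree_C_mul_le _ _)
      omega
  have hc0 : v l ⟨0, hn0⟩ = (ζ l k)^p / Q.eval (ζ l k) := by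
    have h2 := coeff_helper (v l) ⟨0, hn0⟩
    rw [hpolL] at h2
    rw [← h2, coeff_C_mul]
    have : Q.coeff (p + q - 1 - ((⟨0,hn0⟩ : Fin (p+q)) : ℕ)) = 1 := by
      simp only [Fin.val_mk, Nat.sub_zero]
      rw [← hQdeg]
      exact hQmonic.coeff_natDegree
    rw [this, mul_one]
  -- the polynomial S(X) = X^p (F(X) - z)
  set S : Polynomial ℂ :=
    (∑ j ∈ Finset.Icc (-(p:ℤ)) (q:ℤ), C (lam l j) * X ^ (j + (p:ℤ)).toNat) - C z * X ^ (p:ℕ)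
    with hS
  have hFz : ∀ k' : Fin (p+q),
      (∑ j ∈ Finset.Icc (-(p:ℤ)) (q:ℤ), lam l j * (ζ l k') ^ j) = z := by
    intro k'; rw [← hF l (ζ l k')]; exact hζF l k'
  have hSeval : ∀ k', S.eval (ζ l k') = 0 := by
    intro k'
    rw [hS, eval_sub, eval_finset_sum]
    have h1 : ∀ j ∈ Finset.Icc (-(p:ℤ)) (q:ℤ),
        eval (ζ l k') (C (lam l j) * X ^ (j + (p:ℤ)).toNat)
          = lam l j * (ζ l k') ^ j * (ζ l k') ^ (p:ℕ) := by
      intro j hj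
      simp only [Finset.mem_Icc] at hj
      rw [eval_mul, eval_C, eval_pow, eval_X]
      rw [← zpow_natCast (ζ l k') (j+(p:ℤ)).toNat,
        Int.toNat_of_nonneg (by omega), zpow_add₀ (hζ0 l k'), zpow_natCast]
      ring
    rw [Finset.sum_congr rfl h1, ← Finset.sum_mul, hFz k']
    simp
  set T : Polynomial ℂ := ∏ k' : Fin (p+q), (X - C (ζ l k')) with hT
  have hTQ : T = (X - C (ζ l k)) * Q := by
    rw [hT, hQ, ← Finset.mul_prod_erase Finset.univ _ (Finset.mem_univ k)]
  have hTmonic : T.Monic := monic_prod_of_monic _ _ fun _ _ => monic_X_sub_C _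
  have hTdeg : T.natDegree = p + q := by
    rw [hT, natDegree_prod _ _ fun k' _ => X_sub_C_ne_zero (ζ l k')]
    simp [natDegree_X_sub_C]
  have hScoeff : S.coeff (p+q) = lam l q := by
    rw [hS, coeff_sub, finset_sum_coeff]
    rw [Finset.sum_eq_single (q:ℤ)]
    · rw [coeff_C_mul, coeff_X_pow, if_pos (by omega), coeff_C_mul, coeff_X_pow,
        if_neg (by omega)]
      ring
    · intro j hj hjq
      simp only [Finset.mem_Icc] at hj
      rw [coeff_C_mul, coeff_X_pow, if_neg (by omega), mul_zero]
    · intro h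
      exact absurd (Finset.mem_Icc.mpr (by omega)) h
  have hSdeg : S.natDegree ≤ p + q := by
    rw [hS]
    apply le_trans (natDegree_sub_le _ _)
    apply max_le
    · apply natDegree_sum_le_of_forall_le
      intro j hj
      simp only [Finset.mem_Icc] at hj
      apply le_trans (natDegree_C_mul_le _ _)
      simp only [natDegree_X_pow]
      omega
    · apply le_trans (natDegree_C_mul_le _ _)
      simp only [natDegree_X_pow]
      omega
  have hST : S = C (lam l q) * T := by
    rw [← sub_eq_zero]
    set D := S - C (lam l q) * T with hD
    have hDdeg1 : D.natDegree ≤ p + q := by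
      apply le_trans (natDegree_sub_le _ _)
      apply max_le hSdeg
      apply le_trans (natDegree_C_mul_le _ _)
      omega
    have hDcoeff : D.coeff (p+q) = 0 := by
      rw [hD, coeff_sub, hScoeff, coeff_C_mul]
      conv_lhs => rw [show p + q = T.natDegree from hTdeg.symm]
      rw [hTmonic.coeff_natDegree, mul_one, sub_self]
    have hDdeg : D.natDegree < p + q := by
      rcases eq_or_ne D 0 with h|h
      · rw [h]; simpa using hn0
      · rcases lt_or_eq_of_le hDdeg1 with h'|h'
        · exact h'
        · exfalso
          apply leadingCoeff_ne_zero.mpr h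
          rw [leadingCoeff, h', hDcoeff]
    apply eq_zero_of_natDegree_lt_card_of_eval_eq_zero _ (hinj l)
    · intro k'
      rw [hD, eval_sub, hSeval k', eval_mul, eval_C, hT, eval_prod,
        Finset.prod_eq_zero (Finset.mem_univ k') (by simp)]
      ring
    · simpa using hDdeg
  -- evaluate the derivative of S two ways
  have hdT : eval (ζ l k) (derivative T) = Q.eval (ζ l k) := by
    rw [hTQ, derivative_mul, derivative_sub, derivative_X, derivative_C, sub_zero, one_mul,
      eval_add, eval_mul, eval_sub, eval_X, eval_C, sub_self, zero_mul, add_zero]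
  have hdS1 : eval (ζ l k) (derivative S) = lam l q * Q.eval (ζ l k) := by
    rw [hST, derivative_C_mul, eval_mul, eval_C, hdT]
  have hdS2 : eval (ζ l k) (derivative S)
      = (ζ l k)^(p:ℕ) * deriv (F l) (ζ l k) := by
    rw [hS, derivative_sub, derivative_sum, eval_sub, eval_finset_sum]
    have h3 : ∀ j ∈ Finset.Icc (-(p:ℤ)) (q:ℤ),
        eval (ζ l k) (derivative (C (lam l j) * X ^ (j + (p:ℤ)).toNat))
          = (ζ l k)^(p:ℕ) * (lam l j * ((j:ℂ) * (ζ l k) ^ ((j:ℤ)-1)))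
            + lam l j * (ζ l k) ^ (j:ℤ) * ((p:ℂ) * (ζ l k) ^ ((p:ℤ)-1)) := by
      intro j hj
      simp only [Finset.mem_Icc] at hj
      rw [derivative_C_mul, derivative_X_pow, eval_mul, eval_C, eval_mul, eval_C, eval_pow,
        eval_X]
      rcases eq_or_lt_of_le (by omega : (0:ℤ) ≤ j + (p:ℤ)) with h0|h0
      · have hm : (j + (p:ℤ)).toNat = 0 := by omega
        have hjc : (j:ℂ) = -((p:ℤ):ℂ) := by
          have hj' : j = -(p:ℤ) := by omega
          rw [hj']; push_cast; ring
        rw [hm, hjc]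
        simp only [Nat.cast_zero, zero_mul, mul_zero]
        rw [show ((-((p:ℤ):ℂ)) * (ζ l k) ^ ((j:ℤ)-1)) = -(((p:ℤ):ℂ) * (ζ l k) ^ ((j:ℤ)-1))
          from by ring]
        simp only [zpow_sub₀ (hζ0 l k), zpow_one, zpow_natCast]
        push_cast
        field_simp
        ring
      · have hcast : (((j + (p:ℤ)).toNat : ℂ)) = (j:ℂ) + ((p:ℕ):ℂ) := by
          rw [show ((j + (p:ℤ)).toNat : ℂ) = (((j + (p:ℤ)).toNat : ℤ) : ℂ) from by push_cast; rfl,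
            Int.toNat_of_nonneg (by omega)]
          push_cast; ring
        rw [hcast]
        have hexp : (ζ l k) ^ ((j + (p:ℤ)).toNat - 1) = (ζ l k) ^ (j + (p:ℤ) - 1) := by
          rw [← zpow_natCast]
          congr 1
          omega
        rw [hexp]
        simp only [zpow_sub₀ (hζ0 l k), zpow_add₀ (hζ0 l k), zpow_one, zpow_natCast]
        field_simp
    rw [Finset.sum_congr rfl h3, Finset.sum_add_distrib, ← Finset.mul_sum, ← Finset.sum_mul,
      hdF]
    have h4 : (∑ j ∈ Finset.Icc (-(p:ℤ)) (q:ℤ), lam l j * (ζ l k) ^ (j:ℤ)) = z := hFz k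
    rw [h4, derivative_C_mul, derivative_X_pow, eval_mul, eval_C, eval_mul, eval_C, eval_pow,
      eval_X]
    have h5 : (ζ l k) ^ (p - 1 : ℕ) = (ζ l k) ^ ((p:ℤ) - 1) := by
      rw [← zpow_natCast]; congr 1; omega
    rw [h5]
    ring
  -- conclusions
  have hQval : lam l q * Q.eval (ζ l k) = (ζ l k)^(p:ℕ) * deriv (F l) (ζ l k) := by
    rw [← hdS1, hdS2]
  have hζp : (ζ l k)^(p:ℕ) ≠ 0 := pow_ne_zero _ (hζ0 l k)
  have hdne : deriv (F l) (ζ l k) ≠ 0 := by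
    intro h
    rw [h, mul_zero] at hQval
    exact (mul_ne_zero (hlq l) hQk) hQval
  have hc0' : v l ⟨0, hn0⟩ = lam l q / deriv (F l) (ζ l k) := by
    rw [hc0, div_eq_div_iff hQk hdne]
    rw [hQval]
  -- each block of L is a multiple of the corresponding row of P⁻¹
  have hPdet : IsUnit P.det := (Matrix.isUnit_iff_isUnit_det P).mp hP
  have hPP : P * P⁻¹ = 1 := Matrix.mul_nonsing_inv P hPdet
  have hblock : ∀ i a, L (l,k) (i,a) = v l i * P⁻¹ l a := by
    intro i a
    have hvm : Matrix.vecMul (fun b => L (l,k) (i,b)) P = fun l' => v l' i := by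
      funext l'
      simp [Matrix.vecMul, dotProduct, hv]
    have hw : L (l,k) (i,a) = Matrix.vecMul (fun l' => v l' i) P⁻¹ a := by
      calc L (l,k) (i,a)
          = Matrix.vecMul (Matrix.vecMul (fun b => L (l,k) (i,b)) P) P⁻¹ a := by
            rw [Matrix.vecMul_vecMul, hPP, Matrix.vecMul_one]
        _ = _ := by rw [hvm]
    rw [hw]
    simp only [Matrix.vecMul, dotProduct]
    rw [Finset.sum_eq_single l]
    · intro l' _ hl'
      rw [hvanish l' hl' i, zero_mul]
    · intro h
      exact absurd (Finset.mem_univ l) h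
  refine ⟨hdne, fun i => ⟨v l i, fun a => hblock i a⟩, ?_⟩
  intro i hi a
  have hi0 : i = ⟨0, hn0⟩ := Fin.ext hi
  rw [hblock i a, hi0, hc0']
end

section
/- Let N ≥ 1, let (M_j)_{j∈ℤ} be a sequence of invertible matrices in M_N(ℂ), let (R_m)_{m=1}^N be a basis of ℂ^N, let ζ_1,…,ζ_N ∈ ℂ\{0}, and for each m let (W_m(j))_{j∈ℤ} satisfy W_m(j+1) = M_j W_m(j) for all j ∈ ℤ. Assume there exist C, c > 0 such that |ζ_m^{−j} W_m(j) − R_m| ≤ C e^{−c j} for all m ∈ {1,…,N} and all j ∈ ℕ. Then for every j ∈ ℤ, the family (W_1(j),…,W_N(j)) is a basis of ℂ^N. -/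
open Filter Topology

theorem stmt12 (N : ℕ) (hN : 1 ≤ N)
    (Mseq : ℤ → Matrix (Fin N) (Fin N) ℂ) (hMseq : ∀ j : ℤ, IsUnit (Mseq j))
    (R : Fin N → Fin N → ℂ)
    (hRli : LinearIndependent ℂ R) (hRsp : Submodule.span ℂ (Set.range R) = ⊤)
    (ζ : Fin N → ℂ) (hζ : ∀ m, ζ m ≠ 0)
    (W : Fin N → ℤ → Fin N → ℂ)
    (hW : ∀ (m : Fin N) (j : ℤ), W m (j + 1) = (Mseq j).mulVec (W m j))
    (C c : ℝ) (hC : 0 < C) (hc : 0 < c)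
    (hdecay : ∀ (m : Fin N) (j : ℕ),
      ‖(ζ m) ^ (-(j : ℤ)) • W m (j : ℤ) - R m‖ ≤ C * Real.exp (-c * j)) :
    ∀ j : ℤ, LinearIndependent ℂ (fun m : Fin N => W m j) ∧
      Submodule.span ℂ (Set.range fun m : Fin N => W m j) = ⊤ := by
  set A : ℤ → Matrix (Fin N) (Fin N) ℂ := fun j => Matrix.of fun m i => W m j i with hA
  have hstep : ∀ j : ℤ, (A (j + 1)).det = (A j).det * (Mseq j).det := by
    intro j
    have h1 : A (j + 1) = A j * (Mseq j).transpose := by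
      ext m i
      simp [hA, hW m j, Matrix.mul_apply, Matrix.mulVec, dotProduct, mul_comm]
    rw [h1, Matrix.det_mul, Matrix.det_transpose]
  have hMdet : ∀ j, (Mseq j).det ≠ 0 := fun j => by
    have := (Matrix.isUnit_iff_isUnit_det _).1 (hMseq j)
    simpa [isUnit_iff_ne_zero] using this
  have hiff : ∀ j : ℤ, (A (j + 1)).det ≠ 0 ↔ (A j).det ≠ 0 := by
    intro j; rw [hstep]; simp [hMdet j]
  -- the rescaled matrices converge to the matrix with rows R
  set Rmat : Matrix (Fin N) (Fin N) ℂ := Matrix.of R with hRmat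
  have hRunit : Rmat.det ≠ 0 := by
    have : IsUnit Rmat := Matrix.linearIndependent_rows_iff_isUnit.1 hRli
    have := (Matrix.isUnit_iff_isUnit_det _).1 this
    simpa [isUnit_iff_ne_zero] using this
  set f : ℕ → Matrix (Fin N) (Fin N) ℂ :=
    fun j => Matrix.of fun m i => (ζ m) ^ (-(j : ℤ)) * W m (j : ℤ) i with hf
  have hbound : Tendsto (fun j : ℕ => C * Real.exp (-c * j)) atTop (𝓝 0) := by
    have h1 : Tendsto (fun j : ℕ => Real.exp (-c * j)) atTop (𝓝 0) := by
      have : ∀ j : ℕ, Real.exp (-c * j) = (Real.exp (-c)) ^ j := by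
        intro j; rw [← Real.exp_nat_mul]; ring_nf
      simp_rw [this]
      exact tendsto_pow_atTop_nhds_zero_of_lt_one (Real.exp_pos _).le
        (Real.exp_lt_one_iff.2 (neg_lt_zero.2 hc))
    simpa using h1.const_mul C
  have htend : Tendsto f atTop (𝓝 Rmat) := by
    refine tendsto_pi_nhds.2 ?_
    intro m
    rw [tendsto_pi_nhds]
    intro i
    rw [tendsto_iff_norm_sub_tendsto_zero]
    apply squeeze_zero (fun j => norm_nonneg _) _ hbound
    intro j
    have h1 : f j m i - Rmat m i = ((ζ m) ^ (-(j : ℤ)) • W m (j : ℤ) - R m) i := by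
      simp [hf, hRmat]
    rw [h1]
    exact (norm_le_pi_norm _ i).trans (hdecay m j)
  have hdet : Tendsto (fun j => (f j).det) atTop (𝓝 Rmat.det) :=
    (Continuous.matrix_det continuous_id).continuousAt.tendsto.comp htend
  obtain ⟨j0, hj0⟩ : ∃ j : ℕ, (f j).det ≠ 0 :=
    (hdet.eventually_ne hRunit).exists
  have hj0' : (A (j0 : ℤ)).det ≠ 0 := by
    have h2 : (f j0).det = (∏ m, (ζ m) ^ (-(j0 : ℤ))) * (A (j0 : ℤ)).det :=
      Matrix.det_mul_column (fun m => (ζ m) ^ (-(j0 : ℤ))) (A (j0 : ℤ))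
    rw [h2] at hj0
    exact fun h => hj0 (by rw [h, mul_zero])
  -- propagate to all integers
  have hall : ∀ j : ℤ, (A j).det ≠ 0 := by
    intro j
    rcases le_total (j0 : ℤ) j with h | h
    · refine Int.le_induction (motive := fun j _ => (A j).det ≠ 0) hj0' ?_ j h
      intro n _ hn
      exact (hiff n).2 hn
    · refine Int.le_induction_down (motive := fun j _ => (A j).det ≠ 0) hj0' ?_ j h
      intro n _ hn
      exact (hiff (n - 1)).1 (by simpa using hn)
  intro j
  have hunit : IsUnit (A j) := (Matrix.isUnit_iff_isUnit_det _).2 (isUnit_iff_ne_zero.2 (hall j))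
  have hli : LinearIndependent ℂ (fun m : Fin N => W m j) := by
    have := Matrix.linearIndependent_rows_iff_isUnit.2 hunit
    exact this
  have : Nonempty (Fin N) := ⟨⟨0, hN⟩⟩
  refine ⟨hli, hli.span_eq_top_of_card_eq_finrank ?_⟩
  simp
end

section
/- Let μ ≥ 1 be an integer, ε₁ > 0, and let α_1,…,α_m ∈ ℝ\{0}, β_1,…,β_m ∈ ℂ with Re β_i > 0, and ξ_1,…,ξ_m : B(0,ε₁) → ℂ be holomorphic and bounded. For each i set φ_i(τ) := −τ/α_i + (−1)^{μ+1} (β_i / α_i^{2μ+1}) τ^{2μ} and ϖ_i(τ) := φ_i(τ) + τ^{2μ+1} ξ_i(τ). Then there exist ε₂ ∈ (0, ε₁) and constants A_R, A_I > 0 such that for every i: α_i Re(φ_i(τ)) ≤ −Re(τ) + A_R Re(τ)^{2μ} − A_I Im(τ)^{2μ} for all τ ∈ ℂ, and α_i Re(ϖ_i(τ)) + |α_i ξ_i(τ) τ^{2μ+1}| ≤ −Re(τ) + A_R Re(τ)^{2μ} − A_I Im(τ)^{2μ} for all τ ∈ B(0,ε₂). -/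
section helpers

lemma norm_pow_sub_pow_le' (a b : ℂ) (M : ℝ) (hM : 0 ≤ M) (ha : ‖a‖ ≤ M) (hb : ‖b‖ ≤ M)
    (n : ℕ) : ‖a ^ n - b ^ n‖ ≤ n * ‖a - b‖ * M ^ (n - 1) := by
  rw [← geom_sum₂_mul a b n]
  calc ‖(∑ i ∈ Finset.range n, a ^ i * b ^ (n - 1 - i)) * (a - b)‖
      = ‖∑ i ∈ Finset.range n, a ^ i * b ^ (n - 1 - i)‖ * ‖a - b‖ := norm_mul _ _
    _ ≤ (n * M ^ (n - 1)) * ‖a - b‖ := by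
        apply mul_le_mul_of_nonneg_right _ (norm_nonneg _)
        calc ‖∑ i ∈ Finset.range n, a ^ i * b ^ (n - 1 - i)‖
            ≤ ∑ i ∈ Finset.range n, ‖a ^ i * b ^ (n - 1 - i)‖ := norm_sum_le _ _
          _ ≤ ∑ _i ∈ Finset.range n, M ^ (n - 1) := by
              apply Finset.sum_le_sum
              intro i hi
              rw [norm_mul, norm_pow, norm_pow]
              calc ‖a‖ ^ i * ‖b‖ ^ (n - 1 - i) ≤ M ^ i * M ^ (n - 1 - i) := by
                    exact mul_le_mul (pow_le_pow_left₀ (norm_nonneg _) ha i)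
                      (pow_le_pow_left₀ (norm_nonneg _) hb _) (by positivity) (by positivity)
                _ = M ^ (i + (n - 1 - i)) := (pow_add M i _).symm
                _ = M ^ (n - 1) := by
                    congr 1
                    have := Finset.mem_range.mp hi
                    omega
          _ = n * M ^ (n - 1) := by rw [Finset.sum_const, Finset.card_range, nsmul_eq_mul]
    _ = n * ‖a - b‖ * M ^ (n - 1) := by ring

lemma key (μ : ℕ) (hμ : 1 ≤ μ) (b : ℂ) (hb : 0 < b.re) :
    ∃ A_R A_I : ℝ, 0 < A_R ∧ 0 < A_I ∧ ∀ τ : ℂ,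
      ((-1 : ℂ) ^ (μ + 1) * b * τ ^ (2 * μ)).re ≤
        A_R * τ.re ^ (2 * μ) - A_I * τ.im ^ (2 * μ) := by
  set n := 2 * μ with hn
  have hbpos : 0 < ‖b‖ := by
    rw [norm_pos_iff]
    intro h; rw [h] at hb; simp at hb
  set δ : ℝ := min 1 (b.re / (2 * ‖b‖ * n * 2 ^ (n - 1))) with hδdef
  have hδpos : 0 < δ := by
    apply lt_min one_pos
    have : (0:ℝ) < 2 * ‖b‖ * n * 2 ^ (n - 1) := by positivity
    positivity
  have hδ1 : δ ≤ 1 := min_le_left _ _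
  have hδ2 : δ ≤ b.re / (2 * ‖b‖ * n * 2 ^ (n - 1)) := min_le_right _ _
  refine ⟨‖b‖ * (1 + 1/δ) ^ n + (b.re / 2) / δ ^ n, b.re / 2, by positivity, by positivity, ?_⟩
  intro τ
  set x := τ.re with hx
  set y := τ.im with hy
  have hxn : (0:ℝ) ≤ x ^ n := by rw [hn, pow_mul]; positivity
  have hyn : (0:ℝ) ≤ y ^ n := by rw [hn, pow_mul]; positivity
  have haxn : |x| ^ n = x ^ n := (Even.pow_abs ⟨μ, by omega⟩ x)
  have hayn : |y| ^ n = y ^ n := (Even.pow_abs ⟨μ, by omega⟩ y)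
  -- split
  have hsplit : (-1 : ℂ) ^ (μ + 1) * b * τ ^ n
      = -(b * (y:ℂ) ^ n) + (-1 : ℂ) ^ (μ + 1) * b * (τ ^ n - (Complex.I * y) ^ n) := by
    have hI : (Complex.I * (y:ℂ)) ^ n = (-1 : ℂ) ^ μ * (y:ℂ) ^ n := by
      rw [mul_pow, hn, pow_mul, Complex.I_sq]
    have h1 : (-1 : ℂ) ^ (μ + 1) * (-1 : ℂ) ^ μ = -1 := by
      rw [← pow_add]
      have : μ + 1 + μ = 2 * μ + 1 := by ring
      rw [this, pow_succ, pow_mul]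
      norm_num
    rw [hI]
    calc (-1 : ℂ) ^ (μ + 1) * b * τ ^ n
        = ((-1 : ℂ) ^ (μ + 1) * (-1 : ℂ) ^ μ) * (b * (y:ℂ)^n)
          + (-1 : ℂ) ^ (μ + 1) * b * (τ ^ n - (-1:ℂ)^μ * (y:ℂ)^n) := by ring
      _ = -(b * (y:ℂ) ^ n) + (-1 : ℂ) ^ (μ + 1) * b * (τ ^ n - (-1:ℂ)^μ * (y:ℂ)^n) := by
          rw [h1]; ring
  have hmain : ((-1 : ℂ) ^ (μ + 1) * b * τ ^ n).re
      ≤ -(b.re * y ^ n) + ‖b‖ * ‖τ ^ n - (Complex.I * y) ^ n‖ := by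
    rw [hsplit]
    rw [Complex.add_re]
    gcongr
    · apply le_of_eq
      simp [Complex.mul_re, ← Complex.ofReal_pow]
    · calc ((-1 : ℂ) ^ (μ + 1) * b * (τ ^ n - (Complex.I * y) ^ n)).re
          ≤ ‖(-1 : ℂ) ^ (μ + 1) * b * (τ ^ n - (Complex.I * y) ^ n)‖ := Complex.re_le_norm _
        _ = ‖b‖ * ‖τ ^ n - (Complex.I * y) ^ n‖ := by
            rw [norm_mul, norm_mul, norm_pow, norm_neg, norm_one, one_pow, one_mul]
  have hτIy : τ - Complex.I * y = (x : ℂ) := by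
    apply Complex.ext <;> simp [hx, hy]
  have habs : ‖τ‖ ≤ |x| + |y| := Complex.norm_le_abs_re_add_abs_im τ
  have hyτ : ‖Complex.I * (y:ℂ)‖ ≤ ‖τ‖ := by
    rw [norm_mul, Complex.norm_I, one_mul, Complex.norm_real, Real.norm_eq_abs]
    exact Complex.abs_im_le_norm τ
  rcases le_or_gt |x| (δ * |y|) with hcase | hcase
  · -- |x| ≤ δ |y|
    have hτy : ‖τ‖ ≤ (1 + δ) * |y| := by
      calc ‖τ‖ ≤ |x| + |y| := habs
        _ ≤ δ * |y| + |y| := by linarith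
        _ = (1 + δ) * |y| := by ring
    have herr : ‖τ ^ n - (Complex.I * y) ^ n‖ ≤ n * |x| * ((1+δ) * |y|) ^ (n-1) := by
      have := norm_pow_sub_pow_le' τ (Complex.I * y) ((1+δ)*|y|) (by positivity) hτy
        (le_trans hyτ hτy) n
      rwa [hτIy, Complex.norm_real, Real.norm_eq_abs] at this
    have hkey : ‖b‖ * (n * |x| * ((1+δ) * |y|) ^ (n-1)) ≤ b.re / 2 * y ^ n := by
      calc ‖b‖ * (n * |x| * ((1+δ) * |y|) ^ (n-1))
          ≤ ‖b‖ * (n * (δ * |y|) * (2 * |y|) ^ (n-1)) := by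
            gcongr; linarith
        _ = (‖b‖ * n * δ * 2 ^ (n-1)) * (|y| * |y| ^ (n-1)) := by ring
        _ = (‖b‖ * n * δ * 2 ^ (n-1)) * |y| ^ n := by
            rw [← pow_succ']
            congr 2
            omega
        _ ≤ (b.re / 2) * |y| ^ n := by
            apply mul_le_mul_of_nonneg_right _ (pow_nonneg (abs_nonneg _) _)
            rw [le_div_iff₀ (by positivity)] at hδ2
            calc ‖b‖ * n * δ * 2 ^ (n-1) = δ * (2 * ‖b‖ * n * 2 ^ (n-1)) / 2 := by ring
              _ ≤ b.re / 2 := by linarith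
        _ = b.re / 2 * y ^ n := by rw [hayn]
    calc ((-1 : ℂ) ^ (μ + 1) * b * τ ^ n).re
        ≤ -(b.re * y ^ n) + ‖b‖ * (n * |x| * ((1+δ) * |y|) ^ (n-1)) := by
          refine le_trans hmain ?_
          exact add_le_add_right (mul_le_mul_of_nonneg_left herr (norm_nonneg _)) _
      _ ≤ -(b.re * y ^ n) + b.re / 2 * y ^ n := by linarith
      _ ≤ (‖b‖ * (1 + 1/δ) ^ n + (b.re / 2) / δ ^ n) * x ^ n - b.re / 2 * y ^ n := by
          nlinarith [mul_nonneg (le_of_lt hb) hyn,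
            mul_nonneg (by positivity : (0:ℝ) ≤ ‖b‖ * (1 + 1/δ) ^ n + (b.re / 2) / δ ^ n) hxn]
  · -- δ |y| < |x|
    have hyx : |y| ≤ |x| / δ := by
      rw [le_div_iff₀ hδpos]
      nlinarith
    have h1 : ((-1 : ℂ) ^ (μ + 1) * b * τ ^ n).re ≤ ‖b‖ * ((1 + 1/δ) * |x|) ^ n := by
      calc ((-1 : ℂ) ^ (μ + 1) * b * τ ^ n).re ≤ ‖(-1 : ℂ) ^ (μ + 1) * b * τ ^ n‖ :=
            Complex.re_le_norm _
        _ = ‖b‖ * ‖τ‖ ^ n := by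
            rw [norm_mul, norm_mul, norm_pow, norm_pow, norm_neg, norm_one, one_pow, one_mul]
        _ ≤ ‖b‖ * ((1 + 1/δ) * |x|) ^ n := by
            apply mul_le_mul_of_nonneg_left _ (norm_nonneg _)
            apply pow_le_pow_left₀ (norm_nonneg _)
            calc ‖τ‖ ≤ |x| + |y| := habs
              _ ≤ |x| + |x| / δ := by linarith
              _ = (1 + 1/δ) * |x| := by ring
    have h2 : y ^ n ≤ x ^ n / δ ^ n := by
      rw [← hayn, ← haxn, ← div_pow]
      exact pow_le_pow_left₀ (abs_nonneg _) hyx n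
    have h3 : ‖b‖ * ((1 + 1/δ) * |x|) ^ n = ‖b‖ * (1 + 1/δ) ^ n * x ^ n := by
      rw [mul_pow, haxn]; ring
    rw [h3] at h1
    calc ((-1 : ℂ) ^ (μ + 1) * b * τ ^ n).re ≤ ‖b‖ * (1 + 1/δ) ^ n * x ^ n := h1
      _ ≤ (‖b‖ * (1 + 1/δ) ^ n + (b.re / 2) / δ ^ n) * x ^ n - b.re / 2 * y ^ n := by
          have h4 : b.re / 2 * y ^ n ≤ (b.re / 2) / δ ^ n * x ^ n := by
            calc b.re / 2 * y ^ n ≤ b.re / 2 * (x ^ n / δ ^ n) := by gcongr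
              _ = (b.re / 2) / δ ^ n * x ^ n := by ring
          linarith

end helpers

theorem stmt14 (μ : ℕ) (hμ : 1 ≤ μ) (ε₁ : ℝ) (hε₁ : 0 < ε₁) (m : ℕ)
    (α : Fin m → ℝ) (hα : ∀ i, α i ≠ 0)
    (β : Fin m → ℂ) (hβ : ∀ i, 0 < (β i).re)
    (ξ : Fin m → ℂ → ℂ)
    (hξhol : ∀ i, DifferentiableOn ℂ (ξ i) (Metric.ball (0 : ℂ) ε₁))
    (hξbdd : ∀ i, ∃ K : ℝ, ∀ τ ∈ Metric.ball (0 : ℂ) ε₁, ‖ξ i τ‖ ≤ K)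
    (φ ϖ : Fin m → ℂ → ℂ)
    (hφ : ∀ (i : Fin m) (τ : ℂ),
      φ i τ = -τ / (α i : ℂ) + (-1 : ℂ) ^ (μ + 1) * (β i / (α i : ℂ) ^ (2 * μ + 1)) * τ ^ (2 * μ))
    (hϖ : ∀ (i : Fin m) (τ : ℂ), ϖ i τ = φ i τ + τ ^ (2 * μ + 1) * ξ i τ) :
    ∃ ε₂ : ℝ, 0 < ε₂ ∧ ε₂ < ε₁ ∧ ∃ A_R A_I : ℝ, 0 < A_R ∧ 0 < A_I ∧
      ∀ i : Fin m,
        (∀ τ : ℂ, α i * (φ i τ).re ≤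
          -τ.re + A_R * τ.re ^ (2 * μ) - A_I * τ.im ^ (2 * μ)) ∧
        (∀ τ ∈ Metric.ball (0 : ℂ) ε₂,
          α i * (ϖ i τ).re + ‖(α i : ℂ) * ξ i τ * τ ^ (2 * μ + 1)‖ ≤
            -τ.re + A_R * τ.re ^ (2 * μ) - A_I * τ.im ^ (2 * μ)) := by
  -- positivity of α^(2μ)
  have hαpow : ∀ i, 0 < (α i) ^ (2 * μ) := by
    intro i
    rw [pow_mul]
    have h2 : 0 < (α i) ^ 2 := by
      have := hα i
      positivity
    exact pow_pos h2 μ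
  -- the per-i complex coefficient
  set b : Fin m → ℂ := fun i => β i / ((α i : ℂ)) ^ (2 * μ) with hbdef
  have hbre : ∀ i, 0 < (b i).re := by
    intro i
    have : ((α i : ℂ)) ^ (2 * μ) = (((α i) ^ (2 * μ) : ℝ) : ℂ) := by push_cast; ring
    rw [hbdef]
    simp only [this, Complex.div_ofReal_re]
    exact div_pos (hβ i) (hαpow i)
  choose ARf AIf hARpos hAIpos hkeyf using fun i => key μ hμ (b i) (hbre i)
  -- uniform constants
  obtain ⟨AR0, hAR0pos, hARle⟩ : ∃ c : ℝ, 0 < c ∧ ∀ i, ARf i ≤ c := by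
    refine ⟨(∑ i, ARf i) + 1, ?_, ?_⟩
    · have : (0:ℝ) ≤ ∑ i, ARf i := Finset.sum_nonneg fun i _ => (hARpos i).le
      linarith
    · intro i
      have := Finset.single_le_sum (f := ARf) (fun j _ => (hARpos j).le) (Finset.mem_univ i)
      linarith
  obtain ⟨AI0, hAI0pos, hAIle⟩ : ∃ c : ℝ, 0 < c ∧ ∀ i, c ≤ AIf i := by
    classical
    have hsne : (insert (1:ℝ) (Finset.image AIf Finset.univ)).Nonempty :=
      ⟨1, Finset.mem_insert_self _ _⟩
    refine ⟨(insert (1:ℝ) (Finset.image AIf Finset.univ)).min' hsne, ?_, ?_⟩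
    · have hmem := Finset.min'_mem _ hsne
      rcases Finset.mem_insert.mp hmem with h | h
      · rw [h]; norm_num
      · obtain ⟨i, _, hi⟩ := Finset.mem_image.mp h
        rw [← hi]; exact hAIpos i
    · intro i
      exact Finset.min'_le _ _ (Finset.mem_insert_of_mem
        (Finset.mem_image_of_mem _ (Finset.mem_univ i)))
  choose Kf hKf using hξbdd
  obtain ⟨K0, hK0pos, hKle⟩ : ∃ c : ℝ, 0 < c ∧ ∀ i, Kf i ≤ c := by
    refine ⟨(∑ i, max (Kf i) 0) + 1, ?_, ?_⟩
    · have : (0:ℝ) ≤ ∑ i, max (Kf i) 0 := Finset.sum_nonneg fun i _ => le_max_right _ _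
      linarith
    · intro i
      have h1 : Kf i ≤ max (Kf i) 0 := le_max_left _ _
      have h2 := Finset.single_le_sum (f := fun j => max (Kf j) 0)
        (fun j _ => le_max_right _ _) (Finset.mem_univ i)
      linarith
  obtain ⟨A0, hA0pos, hAle⟩ : ∃ c : ℝ, 0 < c ∧ ∀ i, |α i| ≤ c := by
    refine ⟨(∑ i, |α i|) + 1, ?_, ?_⟩
    · have : (0:ℝ) ≤ ∑ i, |α i| := Finset.sum_nonneg fun i _ => abs_nonneg _
      linarith
    · intro i
      have := Finset.single_le_sum (f := fun j => |α j|) (fun j _ => abs_nonneg _)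
        (Finset.mem_univ i)
      linarith
  set C : ℝ := 2 * A0 * K0 * 2 ^ μ with hCdef
  have hCpos : 0 < C := by rw [hCdef]; positivity
  set ε₂ : ℝ := min (ε₁ / 2) (AI0 / (2 * C)) with hε₂def
  have hε₂pos : 0 < ε₂ := lt_min (by linarith) (by positivity)
  have hε₂lt : ε₂ < ε₁ := lt_of_le_of_lt (min_le_left _ _) (by linarith)
  have hCε : C * ε₂ ≤ AI0 / 2 := by
    have h1 : ε₂ ≤ AI0 / (2 * C) := min_le_right _ _
    calc C * ε₂ ≤ C * (AI0 / (2 * C)) := by gcongr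
      _ = AI0 / 2 := by field_simp
  -- the φ identity
  have hφre : ∀ i τ, α i * (φ i τ).re
      = -τ.re + ((-1 : ℂ) ^ (μ + 1) * b i * τ ^ (2 * μ)).re := by
    intro i τ
    have hαC : (α i : ℂ) ≠ 0 := Complex.ofReal_ne_zero.mpr (hα i)
    have h : (α i : ℂ) * φ i τ = -τ + (-1 : ℂ) ^ (μ + 1) * b i * τ ^ (2 * μ) := by
      rw [hφ, hbdef]
      field_simp
      ring
    calc α i * (φ i τ).re = ((α i : ℂ) * φ i τ).re := by simp [Complex.mul_re]
      _ = -τ.re + ((-1 : ℂ) ^ (μ + 1) * b i * τ ^ (2 * μ)).re := by rw [h]; simp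
  refine ⟨ε₂, hε₂pos, hε₂lt, AR0 + AI0 / 2, AI0 / 2, by linarith, by linarith, ?_⟩
  intro i
  have hφbound : ∀ τ : ℂ, α i * (φ i τ).re
      ≤ -τ.re + ARf i * τ.re ^ (2 * μ) - AIf i * τ.im ^ (2 * μ) := by
    intro τ
    rw [hφre i τ]
    have := hkeyf i τ
    linarith
  have hxn : ∀ t : ℝ, (0:ℝ) ≤ t ^ (2 * μ) := by
    intro t
    rw [pow_mul]
    exact pow_nonneg (sq_nonneg t) μ
  constructor
  · intro τ
    have h1 := hφbound τ
    have e1 : ARf i * τ.re ^ (2 * μ) ≤ (AR0 + AI0 / 2) * τ.re ^ (2 * μ) :=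
      mul_le_mul_of_nonneg_right (by linarith [hARle i]) (hxn τ.re)
    have e2 : (AI0 / 2) * τ.im ^ (2 * μ) ≤ AIf i * τ.im ^ (2 * μ) :=
      mul_le_mul_of_nonneg_right (by linarith [hAIle i]) (hxn τ.im)
    linarith
  · intro τ hτ
    have hτnorm : ‖τ‖ < ε₂ := by rwa [Metric.mem_ball, dist_zero_right] at hτ
    have hτ1 : τ ∈ Metric.ball (0:ℂ) ε₁ := by
      rw [Metric.mem_ball, dist_zero_right]; linarith
    have hξb : ‖ξ i τ‖ ≤ K0 := le_trans (hKf i τ hτ1) (hKle i)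
    set x := τ.re
    set y := τ.im
    -- decompose ϖ
    have hϖre : α i * (ϖ i τ).re
        = α i * (φ i τ).re + α i * (τ ^ (2 * μ + 1) * ξ i τ).re := by
      rw [hϖ]; rw [Complex.add_re]; ring
    -- norm power bound
    have hnormpow : ‖τ‖ ^ (2 * μ + 1) ≤ ε₂ * (2 ^ μ * (x ^ (2 * μ) + y ^ (2 * μ))) := by
      have h1 : ‖τ‖ ^ (2 * μ + 1) = ‖τ‖ * (‖τ‖ ^ 2) ^ μ := by
        rw [← pow_mul, ← pow_succ']
      have h2 : ‖τ‖ ^ 2 = x ^ 2 + y ^ 2 := by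
        rw [Complex.sq_norm, Complex.normSq_apply]; ring
      have h3 : (x ^ 2 + y ^ 2) ^ μ ≤ 2 ^ μ * (x ^ (2 * μ) + y ^ (2 * μ)) := by
        have hmax : x ^ 2 + y ^ 2 ≤ 2 * max (x ^ 2) (y ^ 2) := by
          rcases le_total (x ^ 2) (y ^ 2) with h | h
          · rw [max_eq_right h]; linarith
          · rw [max_eq_left h]; linarith
        calc (x ^ 2 + y ^ 2) ^ μ ≤ (2 * max (x ^ 2) (y ^ 2)) ^ μ :=
              pow_le_pow_left₀ (by positivity) hmax μ
          _ = 2 ^ μ * (max (x ^ 2) (y ^ 2)) ^ μ := mul_pow _ _ _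
          _ ≤ 2 ^ μ * (x ^ (2 * μ) + y ^ (2 * μ)) := by
              apply mul_le_mul_of_nonneg_left _ (by positivity)
              rcases le_total (x ^ 2) (y ^ 2) with h | h
              · rw [max_eq_right h, ← pow_mul]
                linarith [hxn x]
              · rw [max_eq_left h, ← pow_mul]
                linarith [hxn y]
      calc ‖τ‖ ^ (2 * μ + 1) = ‖τ‖ * (‖τ‖ ^ 2) ^ μ := h1
        _ = ‖τ‖ * (x ^ 2 + y ^ 2) ^ μ := by rw [h2]
        _ ≤ ε₂ * (2 ^ μ * (x ^ (2 * μ) + y ^ (2 * μ))) := by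
            apply mul_le_mul hτnorm.le h3 (by positivity) hε₂pos.le
    -- the extra terms
    have hre1 : α i * (τ ^ (2 * μ + 1) * ξ i τ).re ≤ A0 * K0 * ‖τ‖ ^ (2 * μ + 1) := by
      calc α i * (τ ^ (2 * μ + 1) * ξ i τ).re ≤ |α i * (τ ^ (2 * μ + 1) * ξ i τ).re| := le_abs_self _
        _ = |α i| * |(τ ^ (2 * μ + 1) * ξ i τ).re| := abs_mul _ _
        _ ≤ |α i| * ‖τ ^ (2 * μ + 1) * ξ i τ‖ :=
            mul_le_mul_of_nonneg_left (Complex.abs_re_le_norm _) (abs_nonneg _)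
        _ = |α i| * (‖τ‖ ^ (2 * μ + 1) * ‖ξ i τ‖) := by rw [norm_mul, norm_pow]
        _ ≤ A0 * (‖τ‖ ^ (2 * μ + 1) * K0) := by
            apply mul_le_mul (hAle i) _ (by positivity) hA0pos.le
            exact mul_le_mul_of_nonneg_left hξb (by positivity)
        _ = A0 * K0 * ‖τ‖ ^ (2 * μ + 1) := by ring
    have hre2 : ‖(α i : ℂ) * ξ i τ * τ ^ (2 * μ + 1)‖ ≤ A0 * K0 * ‖τ‖ ^ (2 * μ + 1) := by
      rw [norm_mul, norm_mul, norm_pow, Complex.norm_real, Real.norm_eq_abs]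
      apply mul_le_mul_of_nonneg_right _ (by positivity)
      exact mul_le_mul (hAle i) hξb (norm_nonneg _) hA0pos.le
    have hextra : α i * (τ ^ (2 * μ + 1) * ξ i τ).re + ‖(α i : ℂ) * ξ i τ * τ ^ (2 * μ + 1)‖
        ≤ (AI0 / 2) * (x ^ (2 * μ) + y ^ (2 * μ)) := by
      have h1 : 2 * (A0 * K0) * ‖τ‖ ^ (2 * μ + 1)
          ≤ 2 * (A0 * K0) * (ε₂ * (2 ^ μ * (x ^ (2 * μ) + y ^ (2 * μ)))) := by
        apply mul_le_mul_of_nonneg_left hnormpow (by positivity)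
      have h2 : 2 * (A0 * K0) * (ε₂ * (2 ^ μ * (x ^ (2 * μ) + y ^ (2 * μ))))
          = (C * ε₂) * (x ^ (2 * μ) + y ^ (2 * μ)) := by rw [hCdef]; ring
      have h3 : (C * ε₂) * (x ^ (2 * μ) + y ^ (2 * μ))
          ≤ (AI0 / 2) * (x ^ (2 * μ) + y ^ (2 * μ)) := by
        apply mul_le_mul_of_nonneg_right hCε
        have := hxn x; have := hxn y; linarith
      linarith
    have hφb := hφbound τ
    have e1 : ARf i * x ^ (2 * μ) ≤ AR0 * x ^ (2 * μ) :=
      mul_le_mul_of_nonneg_right (hARle i) (hxn x)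
    have e2 : AI0 * y ^ (2 * μ) ≤ AIf i * y ^ (2 * μ) :=
      mul_le_mul_of_nonneg_right (hAIle i) (hxn y)
    rw [hϖre]
    linarith
end

section
/- Let μ ≥ 1 be an integer, α ∈ ℝ\{0}, ε > 0, A_R, A_I > 0, K > 0, and let φ, ϖ : B(0,ε) → ℂ be functions such that for all τ ∈ B(0,ε): |ϖ(τ) − φ(τ)| ≤ K |τ|^{2μ+1} and α Re(ϖ(τ)) + |α| |ϖ(τ) − φ(τ)| ≤ −Re(τ) + A_R Re(τ)^{2μ} − A_I Im(τ)^{2μ}. Then there exists a constant C > 0 such that for every integer n ≥ 1, every real x ∈ [0, 2n] and every τ ∈ B(0,ε): |e^{x α ϖ(τ)} − e^{x α φ(τ)}| ≤ C n |τ|^{2μ+1} exp( x (−Re(τ) + A_R Re(τ)^{2μ} − A_I Im(τ)^{2μ}) ). -/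
lemma exp_sub_exp_norm_le (a b : ℂ) (M : ℝ) (ha : a.re ≤ M) (hb : b.re ≤ M) :
    ‖Complex.exp a - Complex.exp b‖ ≤ Real.exp M * ‖a - b‖ := by
  have hconv : Convex ℝ (segment ℝ b a) := convex_segment _ _
  refine hconv.norm_image_sub_le_of_norm_hasDerivWithin_le
    (f := Complex.exp) (f' := Complex.exp)
    (fun z _ => (Complex.hasDerivAt_exp z).hasDerivWithinAt) ?_
    (left_mem_segment ℝ b a) (right_mem_segment ℝ b a)
  intro z hz
  rcases hz with ⟨t, s, ht, hs, hts, rfl⟩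
  rw [Complex.norm_exp, Real.exp_le_exp]
  have : (t • b + s • a).re = t * b.re + s * a.re := by
    simp [Complex.add_re, Complex.smul_re]
  rw [this]
  calc t * b.re + s * a.re ≤ t * M + s * M := by
        gcongr
      _ = M := by rw [← add_mul, hts, one_mul]

theorem stmt15 (μ : ℕ) (hμ : 1 ≤ μ) (α : ℝ) (hα : α ≠ 0) (ε A_R A_I K : ℝ)
    (hε : 0 < ε) (hAR : 0 < A_R) (hAI : 0 < A_I) (hK : 0 < K)
    (φ ϖ : ℂ → ℂ)
    (h1 : ∀ τ ∈ Metric.ball (0 : ℂ) ε, ‖ϖ τ - φ τ‖ ≤ K * ‖τ‖ ^ (2 * μ + 1))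
    (h2 : ∀ τ ∈ Metric.ball (0 : ℂ) ε,
      α * (ϖ τ).re + |α| * ‖ϖ τ - φ τ‖ ≤
        -τ.re + A_R * τ.re ^ (2 * μ) - A_I * τ.im ^ (2 * μ)) :
    ∃ C : ℝ, 0 < C ∧ ∀ n : ℕ, 1 ≤ n → ∀ x : ℝ, 0 ≤ x → x ≤ 2 * n →
      ∀ τ ∈ Metric.ball (0 : ℂ) ε,
        ‖Complex.exp ((x : ℂ) * (α : ℂ) * ϖ τ) - Complex.exp ((x : ℂ) * (α : ℂ) * φ τ)‖ ≤
          C * n * ‖τ‖ ^ (2 * μ + 1) *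
            Real.exp (x * (-τ.re + A_R * τ.re ^ (2 * μ) - A_I * τ.im ^ (2 * μ))) := by
  refine ⟨2 * |α| * K, by positivity, ?_⟩
  intro n hn x hx0 hx2n τ hτ
  set R : ℝ := -τ.re + A_R * τ.re ^ (2 * μ) - A_I * τ.im ^ (2 * μ) with hR
  have h1τ := h1 τ hτ
  have h2τ := h2 τ hτ
  have hd : ‖ϖ τ - φ τ‖ ≥ 0 := norm_nonneg _
  -- Re bounds
  have hreϖ : ((x : ℂ) * (α : ℂ) * ϖ τ).re ≤ x * R := by
    have : ((x : ℂ) * (α : ℂ) * ϖ τ).re = x * (α * (ϖ τ).re) := by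
      simp [Complex.mul_re, Complex.ofReal_re, Complex.ofReal_im]; ring
    rw [this]
    have : α * (ϖ τ).re ≤ R := by
      nlinarith [abs_nonneg α]
    nlinarith
  have hreφ : ((x : ℂ) * (α : ℂ) * φ τ).re ≤ x * R := by
    have he : ((x : ℂ) * (α : ℂ) * φ τ).re = x * (α * (φ τ).re) := by
      simp [Complex.mul_re, Complex.ofReal_re, Complex.ofReal_im]; ring
    rw [he]
    have hb : α * (φ τ).re ≤ R := by
      have h3 : α * (φ τ).re = α * (ϖ τ).re - α * ((ϖ τ - φ τ).re) := by
        simp [Complex.sub_re]; ring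
      have h4 : α * ((ϖ τ - φ τ).re) ≥ -(|α| * ‖ϖ τ - φ τ‖) := by
        have := Complex.abs_re_le_norm (ϖ τ - φ τ)
        have h5 : |α * ((ϖ τ - φ τ).re)| ≤ |α| * ‖ϖ τ - φ τ‖ := by
          rw [abs_mul]
          gcongr
        linarith [neg_abs_le (α * ((ϖ τ - φ τ).re))]
      linarith
    nlinarith
  have key := exp_sub_exp_norm_le ((x : ℂ) * (α : ℂ) * ϖ τ) ((x : ℂ) * (α : ℂ) * φ τ)
    (x * R) hreϖ hreφ
  have hdiff : ‖(x : ℂ) * (α : ℂ) * ϖ τ - (x : ℂ) * (α : ℂ) * φ τ‖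
      ≤ 2 * n * |α| * (K * ‖τ‖ ^ (2 * μ + 1)) := by
    have : (x : ℂ) * (α : ℂ) * ϖ τ - (x : ℂ) * (α : ℂ) * φ τ
        = (x : ℂ) * (α : ℂ) * (ϖ τ - φ τ) := by ring
    rw [this, norm_mul, norm_mul, Complex.norm_real, Complex.norm_real,
      Real.norm_eq_abs, Real.norm_eq_abs, abs_of_nonneg hx0]
    calc x * |α| * ‖ϖ τ - φ τ‖ ≤ (2 * n) * |α| * (K * ‖τ‖ ^ (2 * μ + 1)) := by
          have hα' : 0 < |α| := abs_pos.mpr hα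
          gcongr
        _ = 2 * n * |α| * (K * ‖τ‖ ^ (2 * μ + 1)) := by ring
  calc ‖Complex.exp ((x : ℂ) * (α : ℂ) * ϖ τ) - Complex.exp ((x : ℂ) * (α : ℂ) * φ τ)‖
      ≤ Real.exp (x * R) * ‖(x : ℂ) * (α : ℂ) * ϖ τ - (x : ℂ) * (α : ℂ) * φ τ‖ := key
    _ ≤ Real.exp (x * R) * (2 * n * |α| * (K * ‖τ‖ ^ (2 * μ + 1))) := by
        gcongr
    _ = 2 * |α| * K * n * ‖τ‖ ^ (2 * μ + 1) * Real.exp (x * R) := by ring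
end
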